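/- arXiv:2007.13426 — 9 statements merged into one kernel-verified Lean document; each statement's English description precedes it below -/
import Mathlib

section
/- Let G be an abelian group, F a field, and R a G-graded unital associative F-algebra that is graded-simple. If X is an invertible element of R such that the inner automorphism Int X (given by Y ↦ X Y X⁻¹) maps each homogeneous component R_h into itself, then every nonzero homogeneous component X_g of X is invertible. -/
/-- A `G`-graded algebra is graded-simple if `R · R ≠ 0` and its only graded
two-sided ideals are `0` and `R`. -/
def IsGradedSimple {G : Type*} [AddCommGroup G] [DecidableEq G]
    {F : Type*} [Field F] {R : Type*} [Ring R] [Algebra F R]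
    (ℬ : G → Submodule F R) [GradedAlgebra ℬ] : Prop :=
  (∃ x y : R, x * y ≠ 0) ∧
    ∀ I : TwoSidedIdeal R,
      (∀ x ∈ I, ∀ g : G, (DirectSum.decompose ℬ x g : R) ∈ I) → I = ⊥ ∨ I = ⊤

/-- If `R` is a graded-simple `G`-graded unital associative algebra (`G` abelian) and
`X` is an invertible element whose inner automorphism stabilizes the grading, then
every nonzero homogeneous component of `X` is invertible. -/
theorem inner_automorphism_component_isUnit
    {G : Type*} [AddCommGroup G] [DecidableEq G]
    {F : Type*} [Field F] {R : Type*} [Ring R] [Algebra F R]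
    (ℬ : G → Submodule F R) [GradedAlgebra ℬ]
    (hsimple : IsGradedSimple ℬ)
    (X : Rˣ)
    (hstab : ∀ h : G, ∀ Y ∈ ℬ h, (X : R) * Y * (↑X⁻¹ : R) ∈ ℬ h)
    (g : G) (hg : (DirectSum.decompose ℬ (X : R) g : R) ≠ 0) :
    IsUnit (DirectSum.decompose ℬ (X : R) g : R) := by
  set a : R := (DirectSum.decompose ℬ (X : R) g : R) with ha
  have ha_mem : a ∈ ℬ g := (DirectSum.decompose ℬ (X : R) g).2
  -- Key commutation relation: a * Y = (X Y X⁻¹) * a for all Y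
  have key : ∀ Y : R, a * Y = ((X : R) * Y * (↑X⁻¹ : R)) * a := by
    intro Y
    induction Y using DirectSum.Decomposition.inductionOn ℬ with
    | zero => simp
    | homogeneous m =>
      rename_i h
      obtain ⟨Y, hY⟩ := m
      dsimp only
      have hZ : (X : R) * Y * (↑X⁻¹ : R) ∈ ℬ h := hstab h Y hY
      have hXY : (X : R) * Y = ((X : R) * Y * (↑X⁻¹ : R)) * (X : R) := by
        rw [mul_assoc, Units.inv_mul, mul_one]
      have h1 : (DirectSum.decompose ℬ ((X : R) * Y) (g + h) : R) = a * Y :=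
        DirectSum.coe_decompose_mul_add_of_right_mem ℬ hY
      have h2 : (DirectSum.decompose ℬ (((X : R) * Y * (↑X⁻¹ : R)) * (X : R)) (h + g) : R)
          = ((X : R) * Y * (↑X⁻¹ : R)) * a :=
        DirectSum.coe_decompose_mul_add_of_left_mem ℬ hZ
      rw [← h2, ← hXY, add_comm h g, h1]
    | add m m' hm hm' =>
      rw [mul_add, hm, hm', mul_add, add_mul, add_mul]
  -- The set of left multiples of `a` is a graded two-sided ideal.
  set I : TwoSidedIdeal R := TwoSidedIdeal.mk' {y : R | ∃ u : R, y = u * a}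
    ⟨0, by simp⟩
    (by rintro x y ⟨u, rfl⟩ ⟨v, rfl⟩; exact ⟨u + v, (add_mul u v a).symm⟩)
    (by rintro x ⟨u, rfl⟩; exact ⟨-u, (neg_mul u a).symm⟩)
    (by rintro x y ⟨u, rfl⟩; exact ⟨x * u, (mul_assoc x u a).symm⟩)
    (by rintro x y ⟨u, rfl⟩
        refine ⟨u * ((X : R) * y * (↑X⁻¹ : R)), ?_⟩
        rw [mul_assoc, key y, ← mul_assoc]) with hI
  have memI : ∀ y : R, y ∈ I ↔ ∃ u : R, y = u * a := fun y => TwoSidedIdeal.mem_mk' _ _ _ _ _ _ y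
  have hgraded : ∀ x ∈ I, ∀ k : G, (DirectSum.decompose ℬ x k : R) ∈ I := by
    intro x hx k
    obtain ⟨u, rfl⟩ := (memI x).1 hx
    rw [memI]
    refine ⟨(DirectSum.decompose ℬ u (k - g) : R), ?_⟩
    have := DirectSum.coe_decompose_mul_add_of_right_mem (i := k - g) ℬ ha_mem (a := u)
    rw [sub_add_cancel] at this
    exact this
  have haI : a ∈ I := (memI a).2 ⟨1, (one_mul a).symm⟩
  rcases hsimple.2 I hgraded with hbot | htop
  · exact absurd ((TwoSidedIdeal.mem_bot R).1 (hbot ▸ haI)) hg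
  · -- 1 ∈ I gives a left inverse u for a
    obtain ⟨u, hu⟩ := (memI 1).1 (htop ▸ TwoSidedIdeal.mem_top R)
    -- right inverse: a * (X⁻¹ u X) = u * a = 1
    have hright : a * ((↑X⁻¹ : R) * u * (X : R)) = 1 := by
      rw [key ((↑X⁻¹ : R) * u * (X : R))]
      have : (X : R) * ((↑X⁻¹ : R) * u * (X : R)) * (↑X⁻¹ : R) = u := by
        rw [← mul_assoc, ← mul_assoc, Units.mul_inv, one_mul, mul_assoc, Units.mul_inv, mul_one]
      rw [this, ← hu]
    set v := (↑X⁻¹ : R) * u * (X : R)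
    have hv : v = u := by
      calc v = (u * a) * v := by rw [← hu, one_mul]
        _ = u * (a * v) := mul_assoc _ _ _
        _ = u := by rw [hright, mul_one]
    exact ⟨⟨a, v, hright, by rw [hv, ← hu]⟩, rfl⟩
end

section
/- Let G be an abelian group, F a field, and R a G-graded unital associative F-algebra that is graded-simple. If X ∈ R is invertible, Int X stabilizes the grading, and X_g ≠ 0 is a homogeneous component of X, then Int X_g = Int X, i.e. X_g Y X_g⁻¹ = X Y X⁻¹ for all Y ∈ R. -/
/-- If `R` is a graded-simple `G`-graded unital associative algebra (`G` abelian),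
`X` invertible with `Int X` stabilizing the grading, and `X_g ≠ 0` is a homogeneous
component of `X`, then `X_g` is invertible and `Int X_g = Int X`, i.e.
`X_g Y X_g⁻¹ = X Y X⁻¹` for all `Y ∈ R`. -/
theorem inner_automorphism_eq_component_inner_automorphism
    {G : Type*} [AddCommGroup G] [DecidableEq G]
    {F : Type*} [Field F] {R : Type*} [Ring R] [Algebra F R]
    (ℬ : G → Submodule F R) [GradedAlgebra ℬ]
    (hsimple : IsGradedSimple ℬ)
    (X : Rˣ)
    (hstab : ∀ h : G, ∀ Y ∈ ℬ h, (X : R) * Y * (↑X⁻¹ : R) ∈ ℬ h)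
    (g : G) (hg : (DirectSum.decompose ℬ (X : R) g : R) ≠ 0) :
    ∃ u : Rˣ, (u : R) = (DirectSum.decompose ℬ (X : R) g : R) ∧
      ∀ Y : R, (u : R) * Y * (↑u⁻¹ : R) = (X : R) * Y * (↑X⁻¹ : R) := by
  set xg : R := (DirectSum.decompose ℬ (X : R) g : R) with hxg
  have hxg_mem : xg ∈ ℬ g := SetLike.coe_mem _
  -- Key identity: `xg * Y = (X * Y * X⁻¹) * xg` for all `Y`.
  have key : ∀ Y : R, xg * Y = (X : R) * Y * (↑X⁻¹ : R) * xg := by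
    intro Y
    induction Y using DirectSum.Decomposition.inductionOn ℬ with
    | zero => simp
    | homogeneous m =>
      rename_i h
      have hZ : (X : R) * (m : R) * (↑X⁻¹ : R) ∈ ℬ h := hstab h m m.2
      have hXY : (X : R) * (m : R) = ((X : R) * (m : R) * (↑X⁻¹ : R)) * (X : R) := by
        rw [mul_assoc, Units.inv_mul, mul_one]
      have h1 : (DirectSum.decompose ℬ ((X : R) * (m : R)) (g + h) : R) = xg * m :=
        DirectSum.coe_decompose_mul_add_of_right_mem ℬ m.2
      have h2 : (DirectSum.decompose ℬ (((X : R) * (m : R) * (↑X⁻¹ : R)) * (X : R)) (h + g) : R)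
          = ((X : R) * (m : R) * (↑X⁻¹ : R)) * xg :=
        DirectSum.coe_decompose_mul_add_of_left_mem ℬ hZ
      rw [← h1, hXY, add_comm g h, h2,
        mul_assoc ((X : R) * (m : R) * (↑X⁻¹ : R)), Units.mul_inv, mul_one]
    | add a b ha hb =>
      rw [mul_add, ha, hb, mul_add, add_mul, add_mul]
  have key' : ∀ Z : R, Z * xg = xg * ((↑X⁻¹ : R) * Z * (X : R)) := by
    intro Z
    rw [key ((↑X⁻¹ : R) * Z * (X : R))]
    have : (X : R) * ((↑X⁻¹ : R) * Z * (X : R)) * (↑X⁻¹ : R) = Z := by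
      rw [← mul_assoc, ← mul_assoc, Units.mul_inv, one_mul, mul_assoc, Units.mul_inv, mul_one]
    rw [this]
  -- The two-sided ideal `xg * R`.
  let J : TwoSidedIdeal R := TwoSidedIdeal.mk' {x | ∃ r : R, x = xg * r}
    ⟨0, by simp⟩
    (fun {x y} ⟨r, hr⟩ ⟨s, hs⟩ => ⟨r + s, by rw [hr, hs, mul_add]⟩)
    (fun {x} ⟨r, hr⟩ => ⟨-r, by rw [hr, mul_neg]⟩)
    (fun {x y} ⟨r, hr⟩ => ⟨(↑X⁻¹ : R) * x * (X : R) * r, by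
      rw [hr, ← mul_assoc, key' x, mul_assoc, mul_assoc, mul_assoc]⟩)
    (fun {x y} ⟨r, hr⟩ => ⟨r * y, by rw [hr, mul_assoc]⟩)
  have hJmem : ∀ x : R, x ∈ J ↔ ∃ r : R, x = xg * r := fun x =>
    TwoSidedIdeal.mem_mk' _ _ _ _ _ _ x
  have hJgraded : ∀ x ∈ J, ∀ k : G, (DirectSum.decompose ℬ x k : R) ∈ J := by
    intro x hx k
    obtain ⟨r, hr⟩ := (hJmem x).1 hx
    rw [hJmem]
    refine ⟨(DirectSum.decompose ℬ r (k - g) : R), ?_⟩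
    have := DirectSum.coe_decompose_mul_add_of_left_mem (j := k - g) ℬ hxg_mem (b := r)
    rw [add_sub_cancel] at this
    rw [hr, this]
  have hJtop : J = ⊤ := by
    rcases hsimple.2 J hJgraded with h | h
    · exfalso
      have : xg ∈ J := (hJmem xg).2 ⟨1, (mul_one xg).symm⟩
      rw [h, TwoSidedIdeal.mem_bot] at this
      exact hg this
    · exact h
  obtain ⟨r, hr⟩ : ∃ r : R, (1 : R) = xg * r := by
    have : (1 : R) ∈ J := hJtop ▸ TwoSidedIdeal.mem_top _
    exact (hJmem 1).1 this
  -- The right annihilator of `xg`.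
  let Ann : TwoSidedIdeal R := TwoSidedIdeal.mk' {s | xg * s = 0}
    (by simp)
    (fun {x y} hx hy => by simp only [Set.mem_setOf_eq] at *; rw [mul_add, hx, hy, add_zero])
    (fun {x} hx => by simp only [Set.mem_setOf_eq] at *; rw [mul_neg, hx, neg_zero])
    (fun {x y} hy => by
      simp only [Set.mem_setOf_eq] at *
      rw [← mul_assoc, key x, mul_assoc, hy, mul_zero])
    (fun {x y} hx => by simp only [Set.mem_setOf_eq] at *; rw [← mul_assoc, hx, zero_mul])
  have hAnnmem : ∀ s : R, s ∈ Ann ↔ xg * s = 0 := fun s => TwoSidedIdeal.mem_mk' _ _ _ _ _ _ s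
  have hAnngraded : ∀ s ∈ Ann, ∀ k : G, (DirectSum.decompose ℬ s k : R) ∈ Ann := by
    intro s hs k
    rw [hAnnmem] at hs ⊢
    have := DirectSum.coe_decompose_mul_add_of_left_mem (j := k) ℬ hxg_mem (b := s)
    rw [← this, hs]
    simp
  have hAnnbot : Ann = ⊥ := by
    rcases hsimple.2 Ann hAnngraded with h | h
    · exact h
    · exfalso
      have : (1 : R) ∈ Ann := h ▸ TwoSidedIdeal.mem_top _
      rw [hAnnmem, mul_one] at this
      exact hg this
  have hrxg : r * xg = 1 := by
    have hmem : r * xg - 1 ∈ Ann := by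
      rw [hAnnmem, mul_sub, ← mul_assoc, ← hr, one_mul, mul_one, sub_self]
    rw [hAnnbot, TwoSidedIdeal.mem_bot, sub_eq_zero] at hmem
    exact hmem
  refine ⟨⟨xg, r, hr.symm, hrxg⟩, rfl, fun Y => ?_⟩
  show xg * Y * r = (X : R) * Y * (↑X⁻¹ : R)
  rw [key Y, mul_assoc, ← hr, mul_one]
end

section
/- Let G be an abelian group, F a field, and R a G-graded unital associative F-algebra. If Int X stabilizes the grading for an invertible X ∈ R, and X_g is a nonzero homogeneous component of X, then X_g Y = (X Y X⁻¹) X_g for every Y ∈ R. -/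
/-- In a `G`-graded unital associative algebra (`G` abelian), if the inner
automorphism `Int X` of an invertible element `X` stabilizes the grading and `X_g`
is a nonzero homogeneous component of `X`, then `X_g Y = (X Y X⁻¹) X_g` for all `Y`.
No graded-simplicity is required. -/
theorem component_semi_commutes
    {G : Type*} [AddCommGroup G] [DecidableEq G]
    {F : Type*} [Field F] {R : Type*} [Ring R] [Algebra F R]
    (ℬ : G → Submodule F R) [GradedAlgebra ℬ]
    (X : Rˣ)
    (hstab : ∀ h : G, ∀ Y ∈ ℬ h, (X : R) * Y * (↑X⁻¹ : R) ∈ ℬ h)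
    (g : G) (hg : (DirectSum.decompose ℬ (X : R) g : R) ≠ 0) :
    ∀ Y : R, (DirectSum.decompose ℬ (X : R) g : R) * Y =
      ((X : R) * Y * (↑X⁻¹ : R)) * (DirectSum.decompose ℬ (X : R) g : R) := by
  intro Y
  induction Y using DirectSum.Decomposition.inductionOn ℬ with
  | zero => simp
  | @homogeneous h y =>
    obtain ⟨y, hy⟩ := y
    simp only
    have hW : (X : R) * y * (↑X⁻¹ : R) ∈ ℬ h := hstab h y hy
    have key : (X : R) * y = ((X : R) * y * (↑X⁻¹ : R)) * (X : R) := by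
      rw [mul_assoc, Units.inv_mul, mul_one]
    have h1 : (DirectSum.decompose ℬ ((X : R) * y) (g + h) : R) =
        (DirectSum.decompose ℬ (X : R) g : R) * y :=
      DirectSum.coe_decompose_mul_add_of_right_mem ℬ hy
    have h2 : (DirectSum.decompose ℬ (((X : R) * y * (↑X⁻¹ : R)) * (X : R)) (h + g) : R) =
        ((X : R) * y * (↑X⁻¹ : R)) * (DirectSum.decompose ℬ (X : R) g : R) :=
      DirectSum.coe_decompose_mul_add_of_left_mem ℬ hW
    conv_lhs => rw [← h1, key, add_comm g h, h2]
  | add a b ha hb =>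
    have : (X : R) * (a + b) * (↑X⁻¹ : R) =
        (X : R) * a * (↑X⁻¹ : R) + (X : R) * b * (↑X⁻¹ : R) := by noncomm_ring
    rw [mul_add, ha, hb, this, add_mul]
end

section
/- Let G be an abelian group and R a graded-simple G-graded unital associative algebra. The group of inner automorphisms of R that stabilize the grading is isomorphic to R_hom^× / (Z(R) ∩ R_hom^×), where R_hom^× is the multiplicative group of homogeneous invertible elements of R. -/
/-- The subgroup of `Rˣ` consisting of homogeneous invertible elements
(`R_hom^×`).  (For a unit `u` with `u ∈ R_g`, the inverse is automatically
homogeneous of degree `-g`.) -/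
def homogeneousUnits {G : Type*} [AddCommGroup G] [DecidableEq G]
    {F : Type*} [Field F] {R : Type*} [Ring R] [Algebra F R]
    (ℬ : G → Submodule F R) [GradedAlgebra ℬ] : Subgroup Rˣ where
  carrier := {u : Rˣ | ∃ g : G, (u : R) ∈ ℬ g ∧ (↑u⁻¹ : R) ∈ ℬ (-g)}
  one_mem' := ⟨0, by simpa using (SetLike.one_mem_graded ℬ),
    by simpa using (SetLike.one_mem_graded ℬ)⟩
  mul_mem' := by
    rintro u v ⟨g, hg, hg'⟩ ⟨h, hh, hh'⟩
    refine ⟨g + h, ?_, ?_⟩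
    · simpa using SetLike.mul_mem_graded hg hh
    · have : ((↑(u * v)⁻¹ : R)) = (↑v⁻¹ : R) * (↑u⁻¹ : R) := by
        simp [mul_inv_rev]
      rw [this]
      have := SetLike.mul_mem_graded hh' hg'
      simpa [neg_add_rev] using this
  inv_mem' := by
    rintro u ⟨g, hg, hg'⟩
    exact ⟨-g, hg', by simpa using hg⟩

section Aux

variable {F : Type*} [Field F] {R : Type*} [Ring R] [Algebra F R]

/-- Conjugation by a unit as an algebra automorphism. -/
def conjAE (u : Rˣ) : R ≃ₐ[F] R where
  toFun r := (u : R) * r * (↑u⁻¹ : R)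
  invFun r := (↑u⁻¹ : R) * r * (u : R)
  left_inv r := by
    simp only [mul_assoc, Units.mul_inv_cancel_left]
    simp [← mul_assoc]
  right_inv r := by
    simp only [mul_assoc, Units.inv_mul_cancel_left]
    simp [← mul_assoc]
  map_mul' a b := by
    simp only [mul_assoc]
    rw [Units.inv_mul_cancel_left]
  map_add' a b := by simp [mul_add, add_mul]
  commutes' c := by
    simp [Algebra.algebraMap_eq_smul_one, smul_mul_assoc, mul_smul_comm]

@[simp] lemma conjAE_apply (u : Rˣ) (r : R) :
    (conjAE (F := F) u) r = (u : R) * r * (↑u⁻¹ : R) := rfl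

/-- Conjugation as a group homomorphism `Rˣ →* (R ≃ₐ[F] R)`. -/
def conjHom : Rˣ →* (R ≃ₐ[F] R) where
  toFun := conjAE
  map_one' := by ext r; simp
  map_mul' u v := by
    ext r
    show ((u * v : Rˣ) : R) * r * _ = (u : R) * ((v : R) * r * _) * _
    simp [mul_inv_rev, mul_assoc]

end Aux

/-- For a graded-simple `G`-graded unital associative algebra (`G` abelian), the
group of inner automorphisms stabilizing the grading is isomorphic to
`R_hom^× / (Z(R) ∩ R_hom^×)`: there is a group homomorphism from the homogeneous
units onto the inner automorphisms stabilizing the grading, whose kernel consists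
exactly of the central homogeneous units (first isomorphism theorem). -/
theorem inner_stabilizer_iso_homogeneousUnits_mod_center
    {G : Type*} [AddCommGroup G] [DecidableEq G]
    {F : Type*} [Field F] {R : Type*} [Ring R] [Algebra F R]
    (ℬ : G → Submodule F R) [GradedAlgebra ℬ]
    (hsimple : IsGradedSimple ℬ) :
    ∃ φ : homogeneousUnits ℬ →* (R ≃ₐ[F] R),
      (∀ u : homogeneousUnits ℬ, ∀ r : R,
          (φ u) r = ((u : Rˣ) : R) * r * ((↑(u : Rˣ)⁻¹ : R))) ∧
      (∀ ψ : R ≃ₐ[F] R,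
          ((∃ v : Rˣ, ∀ r : R, ψ r = (v : R) * r * (↑v⁻¹ : R)) ∧
            (∀ g : G, ∀ x ∈ ℬ g, ψ x ∈ ℬ g)) ↔ ∃ u, φ u = ψ) ∧
      (∀ u : homogeneousUnits ℬ,
          φ u = 1 ↔ ∀ r : R, ((u : Rˣ) : R) * r = r * ((u : Rˣ) : R)) := by
  classical
  obtain ⟨x₀, y₀, hxy₀⟩ := hsimple.1
  haveI : Nontrivial R := ⟨⟨x₀, 0, fun h => hxy₀ (by simp [h])⟩⟩
  refine ⟨(conjHom (F := F)).comp (homogeneousUnits ℬ).subtype,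
    fun u r => rfl, ?_, ?_⟩
  · intro ψ
    constructor
    · rintro ⟨⟨v, hv⟩, hgr⟩
      -- `v * r = ψ r * v` for all `r`
      have key : ∀ r : R, (v : R) * r = ψ r * v := by
        intro r
        rw [hv r, mul_assoc, Units.inv_mul, mul_one]
      -- find a nonzero homogeneous component of `v`
      have hvne : (v : R) ≠ 0 := Units.ne_zero v
      have : ∃ g : G, (DirectSum.decompose ℬ (v : R) g : R) ≠ 0 := by
        by_contra hall
        push_neg at hall
        apply hvne
        conv_lhs => rw [← DirectSum.sum_support_decompose ℬ (v : R)]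
        exact Finset.sum_eq_zero fun g _ => hall g
      obtain ⟨g, hwne⟩ := this
      set w : R := (DirectSum.decompose ℬ (v : R) g : R) with hw_def
      have hw : w ∈ ℬ g := (DirectSum.decompose ℬ (v : R) g).2
      -- the homogeneous component still intertwines ψ
      have hcomm : ∀ r : R, w * r = ψ r * w := by
        intro r
        induction r using DirectSum.Decomposition.inductionOn ℬ with
        | zero => simp
        | @homogeneous h x =>
          have hx : (x : R) ∈ ℬ h := x.2
          have h1 : (DirectSum.decompose ℬ ((v : R) * x) (g + h) : R)
              = w * x := DirectSum.coe_decompose_mul_add_of_right_mem ℬ hx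
          have h2 : (DirectSum.decompose ℬ (ψ x * (v : R)) (h + g) : R)
              = ψ x * w :=
            DirectSum.coe_decompose_mul_add_of_left_mem ℬ (hgr h x hx)
          have h3 : (DirectSum.decompose ℬ ((v : R) * x) (g + h) : R)
              = (DirectSum.decompose ℬ (ψ x * (v : R)) (g + h) : R) := by
            rw [key (x : R)]
          rw [h1, add_comm g h, h2] at h3
          exact h3
        | add a b ha hb => simp [mul_add, map_add, add_mul, ha, hb]
      have hcomm' : ∀ r : R, r * w = w * ψ.symm r := by
        intro r
        have := hcomm (ψ.symm r)
        simpa using this.symm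
      -- the right ideal generated by w is two-sided and graded
      let I : TwoSidedIdeal R := TwoSidedIdeal.mk' {x | ∃ r, x = w * r}
        ⟨0, by simp⟩
        (by rintro x y ⟨r, rfl⟩ ⟨s, rfl⟩; exact ⟨r + s, by rw [mul_add]⟩)
        (by rintro x ⟨r, rfl⟩; exact ⟨-r, by rw [mul_neg]⟩)
        (by rintro x y ⟨r, rfl⟩
            exact ⟨ψ.symm x * r, by rw [← mul_assoc, hcomm' x, mul_assoc]⟩)
        (by rintro x y ⟨r, rfl⟩; exact ⟨r * y, by rw [mul_assoc]⟩)
      have hImem : ∀ x, x ∈ I ↔ ∃ r, x = w * r := fun x =>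
        TwoSidedIdeal.mem_mk' _ _ _ _ _ _ x
      have hItop : I = ⊤ := by
        rcases hsimple.2 I (by
          intro x hx k
          obtain ⟨r, rfl⟩ := (hImem x).1 hx
          rw [hImem]
          refine ⟨(DirectSum.decompose ℬ r (-g + k) : R), ?_⟩
          have := DirectSum.coe_decompose_mul_add_of_left_mem
            (i := g) (j := -g + k) ℬ (b := r) hw
          rw [add_neg_cancel_left] at this
          exact this) with h | h
        · exfalso
          apply hwne
          have : w ∈ I := (hImem w).2 ⟨1, by rw [mul_one]⟩
          rw [h] at this
          exact (TwoSidedIdeal.mem_bot R).1 this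
        · exact h
      obtain ⟨a, ha⟩ : ∃ r, (1 : R) = w * r :=
        (hImem 1).1 (hItop ▸ TwoSidedIdeal.mem_top R)
      -- the left ideal generated by w is two-sided and graded
      let J : TwoSidedIdeal R := TwoSidedIdeal.mk' {x | ∃ r, x = r * w}
        ⟨0, by simp⟩
        (by rintro x y ⟨r, rfl⟩ ⟨s, rfl⟩; exact ⟨r + s, by rw [add_mul]⟩)
        (by rintro x ⟨r, rfl⟩; exact ⟨-r, by rw [neg_mul]⟩)
        (by rintro x y ⟨r, rfl⟩; exact ⟨x * r, by rw [mul_assoc]⟩)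
        (by rintro x y ⟨r, rfl⟩
            exact ⟨r * ψ y, by rw [mul_assoc, mul_assoc, hcomm]⟩)
      have hJmem : ∀ x, x ∈ J ↔ ∃ r, x = r * w := fun x =>
        TwoSidedIdeal.mem_mk' _ _ _ _ _ _ x
      have hJtop : J = ⊤ := by
        rcases hsimple.2 J (by
          intro x hx k
          obtain ⟨r, rfl⟩ := (hJmem x).1 hx
          rw [hJmem]
          refine ⟨(DirectSum.decompose ℬ r (k + -g) : R), ?_⟩
          have := DirectSum.coe_decompose_mul_add_of_right_mem
            (i := k + -g) (j := g) ℬ (a := r) hw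
          rw [neg_add_cancel_right] at this
          exact this) with h | h
        · exfalso
          apply hwne
          have : w ∈ J := (hJmem w).2 ⟨1, by rw [one_mul]⟩
          rw [h] at this
          exact (TwoSidedIdeal.mem_bot R).1 this
        · exact h
      obtain ⟨b, hb⟩ : ∃ r, (1 : R) = r * w :=
        (hJmem 1).1 (hJtop ▸ TwoSidedIdeal.mem_top R)
      have hab : a = b := by
        calc a = 1 * a := (one_mul a).symm
        _ = b * w * a := by rw [← hb]
        _ = b * (w * a) := by rw [mul_assoc]
        _ = b := by rw [← ha, mul_one]
      have haw : a * w = 1 := by rw [hab, ← hb]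
      have hwa : w * a = 1 := ha.symm
      -- the inverse is homogeneous of degree `-g`
      have ha_hom : a ∈ ℬ (-g) := by
        set a' : R := (DirectSum.decompose ℬ a (-g) : R) with ha'_def
        have hwa' : w * a' = 1 := by
          have h1 := DirectSum.coe_decompose_mul_add_of_left_mem
            (i := g) (j := -g) ℬ (b := a) hw
          rw [add_neg_cancel] at h1
          rw [← h1, hwa, DirectSum.decompose_of_mem_same ℬ
            (SetLike.one_mem_graded ℬ)]
        have : a = a' := by
          calc a = a * 1 := (mul_one a).symm
          _ = a * (w * a') := by rw [hwa']
          _ = a * w * a' := by rw [mul_assoc]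
          _ = a' := by rw [haw, one_mul]
        rw [this]
        exact (DirectSum.decompose ℬ a (-g)).2
      refine ⟨⟨⟨w, a, hwa, haw⟩, g, hw, ha_hom⟩, ?_⟩
      ext r
      show w * r * a = ψ r
      rw [hcomm r, mul_assoc, hwa, mul_one]
    · rintro ⟨u, rfl⟩
      obtain ⟨g, hg, hg'⟩ := u.2
      refine ⟨⟨u.1, fun r => rfl⟩, ?_⟩
      intro h x hx
      have := SetLike.mul_mem_graded (SetLike.mul_mem_graded hg hx) hg'
      have e : g + h + -g = h := by abel
      rw [e] at this
      exact this
  · intro u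
    constructor
    · intro h r
      have := DFunLike.congr_fun h r
      simp only [AlgEquiv.one_apply] at this
      have h2 : ((u : Rˣ) : R) * r * (↑(u : Rˣ)⁻¹ : R) * ((u : Rˣ) : R)
          = r * ((u : Rˣ) : R) := congrArg (· * ((u : Rˣ) : R)) this
      rw [mul_assoc, mul_assoc] at h2
      simpa [Units.inv_mul] using h2
    · intro h
      ext r
      show ((u : Rˣ) : R) * r * (↑(u : Rˣ)⁻¹ : R) = r
      rw [h r, mul_assoc, Units.mul_inv, mul_one]
end

section
/- Consider the real algebra H × H (product of two quaternion algebras) graded by Z_2² × Z_2² via the decomposition H × H = [R(1,0) ⊕ R(0,1)] ⊕ R(i,0) ⊕ R(j,0) ⊕ R(k,0) ⊕ R(0,i) ⊕ R(0,j) ⊕ R(0,k). Then the element X = (i,i) is invertible, the inner automorphism Int X stabilizes this grading, but no nonzero homogeneous component of X is invertible. -/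
open scoped Quaternion

noncomputable section

abbrev HxH : Type := ℍ[ℝ] × ℍ[ℝ]

def qi : ℍ[ℝ] := ⟨0, 1, 0, 0⟩
def qj : ℍ[ℝ] := ⟨0, 0, 1, 0⟩
def qk : ℍ[ℝ] := ⟨0, 0, 0, 1⟩

/-- The `(ℤ₂² × ℤ₂²)`-grading on `ℍ × ℍ` of equation (1) of the paper. -/
def gradHxH : (ZMod 2 × ZMod 2) × (ZMod 2 × ZMod 2) → Submodule ℝ HxH := fun g =>
  if g = ((0, 0), (0, 0)) then Submodule.span ℝ {((1, 0) : HxH), ((0, 1) : HxH)}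
  else if g = ((1, 0), (0, 0)) then Submodule.span ℝ {((qi, 0) : HxH)}
  else if g = ((0, 1), (0, 0)) then Submodule.span ℝ {((qj, 0) : HxH)}
  else if g = ((1, 1), (0, 0)) then Submodule.span ℝ {((qk, 0) : HxH)}
  else if g = ((0, 0), (1, 0)) then Submodule.span ℝ {((0, qi) : HxH)}
  else if g = ((0, 0), (0, 1)) then Submodule.span ℝ {((0, qj) : HxH)}
  else if g = ((0, 0), (1, 1)) then Submodule.span ℝ {((0, qk) : HxH)}
  else ⊥

namespace CexAux

open Submodule

/-- Generator of the degree-`a` component of the Pauli grading on `ℍ`. -/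
def qgen : ZMod 2 × ZMod 2 → ℍ[ℝ] := fun a =>
  if a = (0, 0) then 1 else if a = (1, 0) then qi else if a = (0, 1) then qj else qk

def creL : ℍ[ℝ] →ₗ[ℝ] ℝ := { toFun := QuaternionAlgebra.re, map_add' := fun _ _ => rfl, map_smul' := fun _ _ => rfl }
def ciL : ℍ[ℝ] →ₗ[ℝ] ℝ := { toFun := QuaternionAlgebra.imI, map_add' := fun _ _ => rfl, map_smul' := fun _ _ => rfl }
def cjL : ℍ[ℝ] →ₗ[ℝ] ℝ := { toFun := QuaternionAlgebra.imJ, map_add' := fun _ _ => rfl, map_smul' := fun _ _ => rfl }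
def ckL : ℍ[ℝ] →ₗ[ℝ] ℝ := { toFun := QuaternionAlgebra.imK, map_add' := fun _ _ => rfl, map_smul' := fun _ _ => rfl }

@[simp] lemma creL_apply (x : ℍ[ℝ]) : creL x = x.re := rfl
@[simp] lemma ciL_apply (x : ℍ[ℝ]) : ciL x = x.imI := rfl
@[simp] lemma cjL_apply (x : ℍ[ℝ]) : cjL x = x.imJ := rfl
@[simp] lemma ckL_apply (x : ℍ[ℝ]) : ckL x = x.imK := rfl

/-- Coordinate functional corresponding to degree `a`. -/
def qcoord : ZMod 2 × ZMod 2 → (ℍ[ℝ] →ₗ[ℝ] ℝ) := fun a =>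
  if a = (0, 0) then creL
  else if a = (1, 0) then ciL
  else if a = (0, 1) then cjL
  else ckL

lemma four : ∀ a : ZMod 2 × ZMod 2, a = (0, 0) ∨ a = (1, 0) ∨ a = (0, 1) ∨ a = (1, 1) := by
  decide

lemma qgen_mul : ∀ a b : ZMod 2 × ZMod 2,
    qgen a * qgen b = qgen (a + b) ∨ qgen a * qgen b = -qgen (a + b) := by
  intro a b
  rcases four a with rfl | rfl | rfl | rfl <;> rcases four b with rfl | rfl | rfl | rfl <;>
    simp (config := { decide := true }) only [qgen, Prod.mk_add_mk] <;>
    first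
      | (left; (ext <;>
          simp [Quaternion.re_mul, Quaternion.imI_mul, Quaternion.imJ_mul,
            Quaternion.imK_mul, Quaternion.re_neg, Quaternion.imI_neg, Quaternion.imJ_neg, Quaternion.imK_neg] <;> simp [qi, qj, qk]); done)
      | (right; (ext <;>
          simp [Quaternion.re_mul, Quaternion.imI_mul, Quaternion.imJ_mul,
            Quaternion.imK_mul, Quaternion.re_neg, Quaternion.imI_neg, Quaternion.imJ_neg, Quaternion.imK_neg] <;> simp [qi, qj, qk]); done)

lemma qcoord_qgen : ∀ a b : ZMod 2 × ZMod 2, qcoord a (qgen b) = if a = b then 1 else 0 := by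
  intro a b
  rcases four a with rfl | rfl | rfl | rfl <;> rcases four b with rfl | rfl | rfl | rfl <;>
    simp (config := { decide := true }) [qcoord, qgen, qi, qj, qk] <;> rfl

lemma span_left_eq (u : ℍ[ℝ]) :
    span ℝ {((u, 0) : HxH)} = (span ℝ {u}).prod (⊥ : Submodule ℝ ℍ[ℝ]) := by
  apply le_antisymm
  · rw [span_le, Set.singleton_subset_iff]
    exact ⟨mem_span_singleton_self u, by simp⟩
  · rintro ⟨x1, x2⟩ ⟨h1, h2⟩
    simp only [SetLike.mem_coe, mem_bot] at h1 h2
    subst h2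
    rw [mem_span_singleton] at h1 ⊢
    obtain ⟨c, rfl⟩ := h1
    exact ⟨c, by simp⟩

lemma span_right_eq (u : ℍ[ℝ]) :
    span ℝ {((0, u) : HxH)} = (⊥ : Submodule ℝ ℍ[ℝ]).prod (span ℝ {u}) := by
  apply le_antisymm
  · rw [span_le, Set.singleton_subset_iff]
    exact ⟨by simp, mem_span_singleton_self u⟩
  · rintro ⟨x1, x2⟩ ⟨h1, h2⟩
    simp only [SetLike.mem_coe, mem_bot] at h1 h2
    subst h1
    rw [mem_span_singleton] at h2 ⊢
    obtain ⟨c, rfl⟩ := h2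
    exact ⟨c, by simp⟩

lemma span_pair_eq :
    span ℝ {((1, 0) : HxH), ((0, 1) : HxH)} =
      (span ℝ {(1 : ℍ[ℝ])}).prod (span ℝ {(1 : ℍ[ℝ])}) := by
  ext ⟨x1, x2⟩
  simp only [mem_span_pair, Submodule.mem_prod, mem_span_singleton, Prod.ext_iff, Prod.smul_mk,
    Prod.mk_add_mk, smul_zero, add_zero, zero_add]
  constructor
  · rintro ⟨c, d, h1, h2⟩
    exact ⟨⟨c, h1⟩, ⟨d, h2⟩⟩
  · rintro ⟨⟨c, h1⟩, ⟨d, h2⟩⟩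
    exact ⟨c, d, h1, h2⟩

set_option maxHeartbeats 1600000 in
lemma grad_eq (a b : ZMod 2 × ZMod 2) :
    gradHxH (a, b) =
      (if b = 0 then span ℝ {qgen a} else ⊥).prod (if a = 0 then span ℝ {qgen b} else ⊥) := by
  rcases four a with rfl | rfl | rfl | rfl <;> rcases four b with rfl | rfl | rfl | rfl <;>
    simp (config := { decide := true }) only [gradHxH, qgen] <;>
    first
      | exact span_pair_eq
      | exact span_left_eq _
      | exact span_right_eq _
      | exact (Submodule.prod_bot).symm

lemma comp_mul {a b a' b' : ZMod 2 × ZMod 2} {x y : ℍ[ℝ]}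
    (hx : x ∈ (if b = 0 then span ℝ {qgen a} else (⊥ : Submodule ℝ ℍ[ℝ])))
    (hy : y ∈ (if b' = 0 then span ℝ {qgen a'} else (⊥ : Submodule ℝ ℍ[ℝ]))) :
    x * y ∈ (if b + b' = 0 then span ℝ {qgen (a + a')} else (⊥ : Submodule ℝ ℍ[ℝ])) := by
  by_cases hb : b = 0
  · by_cases hb' : b' = 0
    · subst hb; subst hb'
      rw [if_pos rfl] at hx hy
      rw [show (0 : ZMod 2 × ZMod 2) + 0 = 0 by decide, if_pos rfl]
      rw [mem_span_singleton] at hx hy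
      obtain ⟨c, rfl⟩ := hx
      obtain ⟨d, rfl⟩ := hy
      rw [smul_mul_smul_comm]
      rcases qgen_mul a a' with h | h <;> rw [h]
      · exact smul_mem _ _ (mem_span_singleton_self _)
      · exact smul_mem _ _ (neg_mem (mem_span_singleton_self _))
    · rw [if_neg hb', mem_bot] at hy
      subst hy
      rw [mul_zero]
      exact zero_mem _
  · rw [if_neg hb, mem_bot] at hx
    subst hx
    rw [zero_mul]
    exact zero_mem _

lemma comp_conj {a b : ZMod 2 × ZMod 2} {x : ℍ[ℝ]}
    (hx : x ∈ (if b = 0 then span ℝ {qgen a} else (⊥ : Submodule ℝ ℍ[ℝ]))) :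
    qi * x * (-qi) ∈ (if b = 0 then span ℝ {qgen a} else (⊥ : Submodule ℝ ℍ[ℝ])) := by
  have qconj : ∀ a : ZMod 2 × ZMod 2,
      qi * qgen a * (-qi) = qgen a ∨ qi * qgen a * (-qi) = -qgen a := by
    intro a
    rcases four a with rfl | rfl | rfl | rfl <;>
      simp (config := { decide := true }) only [qgen] <;>
      first
        | (left; (ext <;>
            simp [Quaternion.re_mul, Quaternion.imI_mul, Quaternion.imJ_mul,
              Quaternion.imK_mul, Quaternion.re_neg, Quaternion.imI_neg, Quaternion.imJ_neg, Quaternion.imK_neg] <;> simp [qi, qj, qk]); done)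
        | (right; (ext <;>
            simp [Quaternion.re_mul, Quaternion.imI_mul, Quaternion.imJ_mul,
              Quaternion.imK_mul, Quaternion.re_neg, Quaternion.imI_neg, Quaternion.imJ_neg, Quaternion.imK_neg] <;> simp [qi, qj, qk]); done)
  by_cases hb : b = 0
  · rw [if_pos hb] at hx ⊢
    rw [mem_span_singleton] at hx
    obtain ⟨c, rfl⟩ := hx
    rw [mul_smul_comm, smul_mul_assoc]
    rcases qconj a with h | h <;> rw [h]
    · exact smul_mem _ _ (mem_span_singleton_self _)
    · exact smul_mem _ _ (neg_mem (mem_span_singleton_self _))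
  · rw [if_neg hb, mem_bot] at hx ⊢
    subst hx
    simp

/-- Coordinate projection associated to a degree. -/
def Fmap (g : (ZMod 2 × ZMod 2) × (ZMod 2 × ZMod 2)) : HxH →ₗ[ℝ] ℝ × ℝ :=
  LinearMap.prod
    ((if g.2 = 0 then qcoord g.1 else 0).comp (LinearMap.fst ℝ ℍ[ℝ] ℍ[ℝ]))
    ((if g.1 = 0 then qcoord g.2 else 0).comp (LinearMap.snd ℝ ℍ[ℝ] ℍ[ℝ]))

lemma comp_ker {a b a' b' : ZMod 2 × ZMod 2} (hne : (a, b) ≠ (a', b')) {x : ℍ[ℝ]}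
    (hx : x ∈ (if b = 0 then span ℝ {qgen a} else (⊥ : Submodule ℝ ℍ[ℝ]))) :
    (if b' = 0 then qcoord a' else 0) x = 0 := by
  by_cases hb' : b' = 0
  · rw [if_pos hb']
    by_cases hb : b = 0
    · rw [if_pos hb] at hx
      rw [mem_span_singleton] at hx
      obtain ⟨c, rfl⟩ := hx
      have hne' : a' ≠ a := by
        rintro rfl
        exact hne (by rw [hb, hb'])
      rw [map_smul, qcoord_qgen, if_neg hne', smul_zero]
    · rw [if_neg hb, mem_bot] at hx
      subst hx
      exact map_zero _
  · rw [if_neg hb']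
    rfl

lemma comp_inj {a b : ZMod 2 × ZMod 2} {x : ℍ[ℝ]}
    (hx : x ∈ (if b = 0 then span ℝ {qgen a} else (⊥ : Submodule ℝ ℍ[ℝ])))
    (h0 : (if b = 0 then qcoord a else 0) x = 0) : x = 0 := by
  by_cases hb : b = 0
  · rw [if_pos hb] at hx h0
    rw [mem_span_singleton] at hx
    obtain ⟨c, rfl⟩ := hx
    rw [map_smul, qcoord_qgen, if_pos rfl, smul_eq_mul, mul_one] at h0
    rw [h0, zero_smul]
  · rw [if_neg hb, mem_bot] at hx
    exact hx

lemma ker_le (g j : (ZMod 2 × ZMod 2) × (ZMod 2 × ZMod 2)) (h : j ≠ g) :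
    gradHxH j ≤ LinearMap.ker (Fmap g) := by
  obtain ⟨j1, j2⟩ := j
  obtain ⟨g1, g2⟩ := g
  rw [grad_eq]
  intro x hx
  rw [Submodule.mem_prod] at hx
  rw [LinearMap.mem_ker]
  have h1 : (if g2 = 0 then qcoord g1 else 0) x.1 = 0 := comp_ker h hx.1
  have h2 : (if g1 = 0 then qcoord g2 else 0) x.2 = 0 := by
    refine comp_ker (a := j2) (b := j1) (a' := g2) (b' := g1) ?_ hx.2
    intro hh
    rw [Prod.ext_iff] at hh
    exact h (by rw [Prod.ext_iff]; exact ⟨hh.2, hh.1⟩)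
  simp only [Fmap, LinearMap.prod_apply, LinearMap.coe_comp, Function.comp_apply,
    LinearMap.fst_apply, LinearMap.snd_apply, Function.prod]
  rw [h1, h2]
  rfl

lemma indep : iSupIndep gradHxH := by
  rw [iSupIndep_def]
  intro i
  rw [Submodule.disjoint_def]
  intro x hxi hxsup
  have hker : (⨆ (j) (_ : j ≠ i), gradHxH j) ≤ LinearMap.ker (Fmap i) :=
    iSup_le fun j => iSup_le fun hj => ker_le i j hj
  have h0 : Fmap i x = 0 := LinearMap.mem_ker.mp (hker hxsup)
  obtain ⟨i1, i2⟩ := i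
  rw [grad_eq, Submodule.mem_prod] at hxi
  have e1 : (if i2 = 0 then qcoord i1 else 0) x.1 = 0 := congrArg Prod.fst h0
  have e2 : (if i1 = 0 then qcoord i2 else 0) x.2 = 0 := congrArg Prod.snd h0
  have : x.1 = 0 := comp_inj hxi.1 e1
  have : x.2 = 0 := comp_inj hxi.2 e2
  ext <;> simp_all

lemma qi_mul_qi : qi * qi = -1 := by
  ext <;> simp [Quaternion.re_mul, Quaternion.imI_mul, Quaternion.imJ_mul, Quaternion.imK_mul, Quaternion.re_neg, Quaternion.imI_neg, Quaternion.imJ_neg, Quaternion.imK_neg] <;> simp [qi]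

end CexAux

open CexAux Submodule in
/-- On `ℍ × ℍ` with the grading above (which is a grading: components multiply into
the component of the sum of degrees and they decompose the algebra), the element
`X = (i, i)` is invertible (with inverse `(-i, -i)`), its inner automorphism
stabilizes the grading, but its nonzero homogeneous components `(i,0)` and `(0,i)`
are not invertible.  Hence the graded-simple hypothesis cannot be dropped. -/
theorem counterexample_HxH :
    (∀ a b : (ZMod 2 × ZMod 2) × (ZMod 2 × ZMod 2),
        ∀ x ∈ gradHxH a, ∀ y ∈ gradHxH b, x * y ∈ gradHxH (a + b)) ∧
    (⨆ a, gradHxH a) = ⊤ ∧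
    iSupIndep gradHxH ∧
    (((qi, qi) : HxH) * ((-qi, -qi) : HxH) = 1 ∧
      ((-qi, -qi) : HxH) * ((qi, qi) : HxH) = 1) ∧
    (∀ a : (ZMod 2 × ZMod 2) × (ZMod 2 × ZMod 2), ∀ Z ∈ gradHxH a,
        ((qi, qi) : HxH) * Z * ((-qi, -qi) : HxH) ∈ gradHxH a) ∧
    ((qi, (0 : ℍ[ℝ])) : HxH) ∈ gradHxH ((1, 0), (0, 0)) ∧
    (((0 : ℍ[ℝ]), qi) : HxH) ∈ gradHxH ((0, 0), (1, 0)) ∧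
    ((qi, qi) : HxH) = ((qi, 0) : HxH) + ((0, qi) : HxH) ∧
    ¬ IsUnit ((qi, 0) : HxH) ∧ ¬ IsUnit (((0 : ℍ[ℝ]), qi) : HxH) := by
  refine ⟨?_, ?_, indep, ⟨?_, ?_⟩, ?_, ?_, ?_, ?_, ?_, ?_⟩
  · -- multiplicativity
    rintro ⟨a1, a2⟩ ⟨b1, b2⟩ x hx y hy
    rw [grad_eq, Submodule.mem_prod] at hx hy
    rw [Prod.mk_add_mk, grad_eq, Submodule.mem_prod]
    exact ⟨comp_mul hx.1 hy.1, comp_mul hx.2 hy.2⟩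
  · -- iSup = ⊤
    rw [eq_top_iff]
    rintro ⟨x, y⟩ -
    have hdec : ((x, y) : HxH) =
        x.re • ((1 : ℍ[ℝ]), (0 : ℍ[ℝ])) + y.re • ((0 : ℍ[ℝ]), (1 : ℍ[ℝ])) +
        x.imI • ((qi, 0) : HxH) + x.imJ • ((qj, 0) : HxH) + x.imK • ((qk, 0) : HxH) +
        y.imI • ((0, qi) : HxH) + y.imJ • ((0, qj) : HxH) + y.imK • ((0, qk) : HxH) := by
      simp only [Prod.ext_iff]
      refine ⟨?_, ?_⟩ <;> (ext <;> simp [Quaternion.re_smul] <;> simp [qi, qj, qk])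
    rw [hdec]
    have m1 : ((1 : ℍ[ℝ]), (0 : ℍ[ℝ])) ∈ gradHxH ((0, 0), (0, 0)) := by
      rw [grad_eq, Submodule.mem_prod]
      refine ⟨?_, by simp⟩
      simpa [qgen] using mem_span_singleton_self (1 : ℍ[ℝ])
    have m2 : ((0 : ℍ[ℝ]), (1 : ℍ[ℝ])) ∈ gradHxH ((0, 0), (0, 0)) := by
      rw [grad_eq, Submodule.mem_prod]
      refine ⟨by simp, ?_⟩
      simpa [qgen] using mem_span_singleton_self (1 : ℍ[ℝ])
    have m3 : ((qi, 0) : HxH) ∈ gradHxH ((1, 0), (0, 0)) := by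
      rw [grad_eq, Submodule.mem_prod]
      refine ⟨?_, ?_⟩
      · simpa (config := { decide := true }) [qgen] using mem_span_singleton_self qi
      · simp (config := { decide := true })
    have m4 : ((qj, 0) : HxH) ∈ gradHxH ((0, 1), (0, 0)) := by
      rw [grad_eq, Submodule.mem_prod]
      refine ⟨?_, ?_⟩
      · simpa (config := { decide := true }) [qgen] using mem_span_singleton_self qj
      · simp (config := { decide := true })
    have m5 : ((qk, 0) : HxH) ∈ gradHxH ((1, 1), (0, 0)) := by
      rw [grad_eq, Submodule.mem_prod]
      refine ⟨?_, ?_⟩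
      · simpa (config := { decide := true }) [qgen] using mem_span_singleton_self qk
      · simp (config := { decide := true })
    have m6 : ((0, qi) : HxH) ∈ gradHxH ((0, 0), (1, 0)) := by
      rw [grad_eq, Submodule.mem_prod]
      refine ⟨?_, ?_⟩
      · simp (config := { decide := true })
      · simpa (config := { decide := true }) [qgen] using mem_span_singleton_self qi
    have m7 : ((0, qj) : HxH) ∈ gradHxH ((0, 0), (0, 1)) := by
      rw [grad_eq, Submodule.mem_prod]
      refine ⟨?_, ?_⟩
      · simp (config := { decide := true })
      · simpa (config := { decide := true }) [qgen] using mem_span_singleton_self qj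
    have m8 : ((0, qk) : HxH) ∈ gradHxH ((0, 0), (1, 1)) := by
      rw [grad_eq, Submodule.mem_prod]
      refine ⟨?_, ?_⟩
      · simp (config := { decide := true })
      · simpa (config := { decide := true }) [qgen] using mem_span_singleton_self qk
    refine add_mem (add_mem (add_mem (add_mem (add_mem (add_mem (add_mem
      (smul_mem _ _ (mem_iSup_of_mem _ m1)) (smul_mem _ _ (mem_iSup_of_mem _ m2)))
      (smul_mem _ _ (mem_iSup_of_mem _ m3))) (smul_mem _ _ (mem_iSup_of_mem _ m4)))
      (smul_mem _ _ (mem_iSup_of_mem _ m5))) (smul_mem _ _ (mem_iSup_of_mem _ m6)))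
      (smul_mem _ _ (mem_iSup_of_mem _ m7))) (smul_mem _ _ (mem_iSup_of_mem _ m8))
  · -- X * X⁻¹ = 1
    have h : qi * -qi = 1 := by rw [mul_neg, qi_mul_qi, neg_neg]
    exact Prod.ext_iff.mpr ⟨h, h⟩
  · have h : -qi * qi = 1 := by rw [neg_mul, qi_mul_qi, neg_neg]
    exact Prod.ext_iff.mpr ⟨h, h⟩
  · -- conjugation stabilizes
    rintro ⟨a1, a2⟩ Z hZ
    rw [grad_eq, Submodule.mem_prod] at hZ ⊢
    exact ⟨comp_conj hZ.1, comp_conj hZ.2⟩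
  · rw [grad_eq, Submodule.mem_prod]
    refine ⟨?_, ?_⟩
    · simpa (config := { decide := true }) [qgen] using mem_span_singleton_self qi
    · simp (config := { decide := true })
  · rw [grad_eq, Submodule.mem_prod]
    refine ⟨?_, ?_⟩
    · simp (config := { decide := true })
    · simpa (config := { decide := true }) [qgen] using mem_span_singleton_self qi
  · simp [Prod.ext_iff]
  · intro h
    obtain ⟨b, hb⟩ := h.exists_right_inv
    have := congrArg Prod.snd hb
    simp at this
  · intro h
    obtain ⟨b, hb⟩ := h.exists_right_inv
    have := congrArg Prod.fst hb
    simp at this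
end
end

section
/- Let G be an abelian group and D a G-graded-division algebra with support T. Consider the grading on M_k(D) determined by elements g_1,…,g_k ∈ G satisfying the fine condition. Then the universal abelian group of this grading is Z^{k-1} × T. -/
/-- The grading on `M_k(D)`: `deg (E i j ⊗ d) = g i - g j + deg d`. -/
def MatGrading {G : Type*} [AddCommGroup G] {F : Type*} [Field F]
    {D : Type*} [Ring D] [Algebra F D]
    (k : ℕ) (g : Fin k → G) (𝒟 : G → Submodule F D) :
    G → Submodule F (Matrix (Fin k) (Fin k) D) := fun a =>
  { carrier := {M | ∀ i j : Fin k, M i j ∈ 𝒟 (-(g i) + a + g j)}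
    add_mem' := fun hM hN i j => (𝒟 _).add_mem (hM i j) (hN i j)
    zero_mem' := fun i j => (𝒟 _).zero_mem
    smul_mem' := fun c M hM i j => (𝒟 _).smul_mem c (hM i j) }

/-- Let `D` be a `G`-graded-division algebra (`G` abelian) with support the subgroup
`T`, and grade `R = M_k(D)` by degrees `g 1, …, g k` satisfying the fine condition.
Then the universal abelian group of this grading is `ℤ^(k-1) × T`: there is a degree
map `δ` from `G` to `ℤ^(k-1) × T`, additive on pairs of degrees whose components
multiply nontrivially, such that every such "realization" of the grading over an
abelian group `H` factors uniquely through a homomorphism `ℤ^(k-1) × T →+ H`. -/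
theorem universal_group_of_matrix_grading
    {G : Type*} [AddCommGroup G] {F : Type*} [Field F]
    {D : Type*} [Ring D] [Algebra F D]
    (k : ℕ) (hk : 0 < k) (g : Fin k → G) (𝒟 : G → Submodule F D)
    (hone : (1 : D) ∈ 𝒟 0)
    (hmul : ∀ a b : G, ∀ x ∈ 𝒟 a, ∀ y ∈ 𝒟 b, x * y ∈ 𝒟 (a + b))
    (hdiv : ∀ a : G, ∀ d ∈ 𝒟 a, d ≠ 0 → IsUnit d)
    (T : AddSubgroup G) (hT : ∀ a : G, a ∈ T ↔ 𝒟 a ≠ ⊥)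
    (hfine : ∀ i j h l : Fin k, i ≠ j → (i, j) ≠ (h, l) →
      𝒟 (g i - g j - (g h - g l)) = ⊥) :
    ∃ δ : G → (Fin (k - 1) → ℤ) × T,
      (∀ a b : G, MatGrading k g 𝒟 a * MatGrading k g 𝒟 b ≠ ⊥ →
        δ (a + b) = δ a + δ b) ∧
      ∀ (H : Type) [inst : AddCommGroup H] (f : G → H),
        (∀ a b : G, MatGrading k g 𝒟 a * MatGrading k g 𝒟 b ≠ ⊥ →
          f (a + b) = f a + f b) →
        ∃! φ : ((Fin (k - 1) → ℤ) × T) →+ H,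
          ∀ a : G, MatGrading k g 𝒟 a ≠ ⊥ → f a = φ (δ a) := by
  classical
  have hT0 : (0 : G) ∈ T := T.zero_mem
  set ε : Fin k → (Fin (k - 1) → ℤ) := fun i m => if m.1 < i.1 then 1 else 0 with hεdef
  set i0 : Fin k := ⟨0, hk⟩ with hi0def
  have hcan : ∀ (i : Fin k) (a : G), -(g i) + a + g i = a := by intro i a; abel
  have hcan0 : ∀ (i j : Fin k), -(g i) + (g i - g j) + g j = 0 := by intro i j; abel
  -- membership of "single entry" matrices
  have hsingle : ∀ (i j : Fin k) (a : G) (d : D), d ∈ 𝒟 (-(g i) + a + g j) →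
      Matrix.single i j d ∈ MatGrading k g 𝒟 a := by
    intro i j a d hd p q
    simp only [Matrix.single, Matrix.of_apply]
    split_ifs with h
    · obtain ⟨rfl, rfl⟩ := h; exact hd
    · exact (𝒟 _).zero_mem
  -- nonemptiness of components
  have hne : ∀ (i j : Fin k) (a : G), -(g i) + a + g j ∈ T →
      MatGrading k g 𝒟 a ≠ ⊥ := by
    intro i j a ha
    obtain ⟨d, hd, hd0⟩ := (Submodule.ne_bot_iff _).mp ((hT _).mp ha)
    refine (Submodule.ne_bot_iff _).mpr ⟨_, hsingle i j a d hd, fun h => hd0 ?_⟩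
    have := congrFun (congrFun h i) j
    simpa using this
  -- nonzero products
  have hprodne : ∀ (i j l : Fin k) (a b : G), -(g i) + a + g j ∈ T →
      -(g j) + b + g l ∈ T → MatGrading k g 𝒟 a * MatGrading k g 𝒟 b ≠ ⊥ := by
    intro i j l a b ha hb
    obtain ⟨d, hd, hd0⟩ := (Submodule.ne_bot_iff _).mp ((hT _).mp ha)
    obtain ⟨e, he, he0⟩ := (Submodule.ne_bot_iff _).mp ((hT _).mp hb)
    have hde : d * e ≠ 0 := fun h =>
      he0 (((hdiv _ d hd hd0).mul_right_eq_zero).mp h)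
    refine (Submodule.ne_bot_iff _).mpr
      ⟨Matrix.single i j d * Matrix.single j l e,
        Submodule.mul_mem_mul (hsingle i j a d hd) (hsingle j l b e he), fun h => hde ?_⟩
    rw [Matrix.single_mul_single_same] at h
    have := congrFun (congrFun h i) l
    simpa using this
  -- decomposition of nonzero products
  have hproddec : ∀ a b : G, MatGrading k g 𝒟 a * MatGrading k g 𝒟 b ≠ ⊥ →
      ∃ i j l : Fin k, -(g i) + a + g j ∈ T ∧ -(g j) + b + g l ∈ T := by
    intro a b hab
    by_contra hc
    push_neg at hc
    apply hab
    rw [eq_bot_iff, Submodule.mul_le]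
    intro x hx y hy
    simp only [Submodule.mem_bot]
    ext i l
    rw [Matrix.mul_apply, Matrix.zero_apply]
    refine Finset.sum_eq_zero fun j _ => ?_
    by_contra hterm
    have hxij : x i j ≠ 0 := left_ne_zero_of_mul hterm
    have hyjl : y j l ≠ 0 := right_ne_zero_of_mul hterm
    exact hc i j l ((hT _).mpr ((Submodule.ne_bot_iff _).mpr ⟨_, hx i j, hxij⟩))
      ((hT _).mpr ((Submodule.ne_bot_iff _).mpr ⟨_, hy j l, hyjl⟩))
  -- decomposition of the support
  have hsuppdec : ∀ a : G, MatGrading k g 𝒟 a ≠ ⊥ →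
      ∃ i j : Fin k, -(g i) + a + g j ∈ T := by
    intro a ha
    obtain ⟨x, hx, hx0⟩ := (Submodule.ne_bot_iff _).mp ha
    have hex : ∃ i j, x i j ≠ 0 := by
      by_contra h
      push_neg at h
      exact hx0 (by ext i j; simpa using h i j)
    obtain ⟨i, j, hij⟩ := hex
    exact ⟨i, j, (hT _).mpr ((Submodule.ne_bot_iff _).mpr ⟨_, hx i j, hij⟩)⟩
  -- key uniqueness lemma
  have hkey : ∀ (a : G) (i j p q : Fin k), -(g i) + a + g j ∈ T →
      -(g p) + a + g q ∈ T →
      ε i - ε j = ε p - ε q ∧ -(g i) + a + g j = -(g p) + a + g q := by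
    intro a i j p q hij hpq
    have hsub : (g i - g j) - (g p - g q) ∈ T := by
      have h := T.sub_mem hpq hij
      have : (-(g p) + a + g q) - (-(g i) + a + g j) = (g i - g j) - (g p - g q) := by abel
      rwa [this] at h
    rcases eq_or_ne i j with rfl | hij'
    · rcases eq_or_ne p q with rfl | hpq'
      · constructor
        · simp
        · abel
      · exfalso
        have hmem : g p - g q ∈ T := by
          have := T.neg_mem hsub
          have heq : -((g i - g i) - (g p - g q)) = g p - g q := by abel
          rwa [heq] at this
        have := hfine p q i i hpq' (by
          intro h
          exact hpq' (by rw [Prod.mk.injEq] at h; rw [h.1, h.2]))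
        rw [show g p - g q - (g i - g i) = g p - g q by abel] at this
        exact (hT _).mp hmem this
    · rcases eq_or_ne p q with rfl | hpq'
      · exfalso
        have := hfine i j p p hij' (by
          intro h
          exact hij' (by rw [Prod.mk.injEq] at h; rw [h.1, h.2]))
        have hmem : g i - g j - (g p - g p) ∈ T := by
          rwa [show g i - g j - (g p - g p) = (g i - g j) - (g p - g p) by abel]
        exact (hT _).mp (by rwa [show (g i - g j) - (g p - g p) = g i - g j - (g p - g p) by rfl] at hmem) this
      · rcases eq_or_ne (i, j) (p, q) with heq | hne'
        · rw [Prod.mk.injEq] at heq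
          rw [heq.1, heq.2]
          exact ⟨rfl, rfl⟩
        · exact absurd (hfine i j p q hij' hne') (fun h => (hT _).mp hsub h)
  -- the degree map
  set δ : G → (Fin (k - 1) → ℤ) × T := fun a =>
    if h : ∃ p : Fin k × Fin k, -(g p.1) + a + g p.2 ∈ T then
      (ε h.choose.1 - ε h.choose.2, ⟨-(g h.choose.1) + a + g h.choose.2, h.choose_spec⟩)
    else 0 with hδdef
  have hδeq : ∀ (a : G) (i j : Fin k) (hij : -(g i) + a + g j ∈ T),
      δ a = (ε i - ε j, ⟨-(g i) + a + g j, hij⟩) := by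
    intro a i j hij
    have hex : ∃ p : Fin k × Fin k, -(g p.1) + a + g p.2 ∈ T := ⟨(i, j), hij⟩
    rw [hδdef]
    simp only [dif_pos hex]
    obtain ⟨h1, h2⟩ := hkey a hex.choose.1 hex.choose.2 i j hex.choose_spec hij
    exact Prod.ext h1 (Subtype.ext h2)
  refine ⟨δ, ?_, ?_⟩
  · -- additivity
    intro a b hab
    obtain ⟨i, j, l, ha, hb⟩ := hproddec a b hab
    have hab' : -(g i) + (a + b) + g l ∈ T := by
      have h := T.add_mem ha hb
      rwa [show (-(g i) + a + g j) + (-(g j) + b + g l) = -(g i) + (a + b) + g l by abel] at h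
    rw [hδeq _ _ _ ha, hδeq _ _ _ hb, hδeq _ _ _ hab']
    refine Prod.ext ?_ (Subtype.ext ?_)
    · show ε i - ε l = (ε i - ε j) + (ε j - ε l)
      abel
    · show -(g i) + (a + b) + g l = (-(g i) + a + g j) + (-(g j) + b + g l)
      abel
  · -- universal property
    intro H _ f hf
    -- basic additivity facts for f
    have hfT : ∀ s t : G, s ∈ T → t ∈ T → f (s + t) = f s + f t := by
      intro s t hs ht
      exact hf s t (hprodne i0 i0 i0 s t (by rwa [hcan]) (by rwa [hcan]))
    have hf0 : f 0 = 0 := by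
      have := hfT 0 0 hT0 hT0
      rw [add_zero] at this
      exact (left_eq_add.mp this)
    have hcoc : ∀ i j l : Fin k, f (g i - g l) = f (g i - g j) + f (g j - g l) := by
      intro i j l
      have h := hf (g i - g j) (g j - g l)
        (hprodne i j l _ _ (by rw [hcan0]; exact hT0) (by rw [hcan0]; exact hT0))
      rwa [show (g i - g j) + (g j - g l) = g i - g l by abel] at h
    set u : Fin k → H := fun i => f (g i - g i0) with hudef
    have hF : ∀ i j : Fin k, f (g i - g j) = u i - u j := by
      intro i j
      have h := hcoc i j i0
      show f (g i - g j) = f (g i - g i0) - f (g j - g i0)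
      rw [h]
      abel
    -- index shifts
    set i' : Fin (k - 1) → Fin k := fun m => ⟨m.1 + 1, by have := m.2; omega⟩ with hi'def
    set j' : Fin (k - 1) → Fin k := fun m => ⟨m.1, by have := m.2; omega⟩ with hj'def
    set c : Fin (k - 1) → H := fun m => f (g (i' m) - g (j' m)) with hcdef
    set s : Fin k → H := fun i => ∑ m, ε i m • c m with hsdef
    have hsu : ∀ i : Fin k, s i = u i := by
      intro i
      obtain ⟨n, hn⟩ := i
      induction n with
      | zero =>
        show (∑ m, ε ⟨0, hn⟩ m • c m) = f (g ⟨0, hn⟩ - g i0)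
        rw [show (⟨0, hn⟩ : Fin k) = i0 from rfl, sub_self, hf0]
        refine Finset.sum_eq_zero fun m _ => ?_
        show (if m.1 < 0 then (1:ℤ) else 0) • c m = 0
        simp
      | succ n ih =>
        have hn' : n < k := by omega
        have hm : n < k - 1 := by omega
        set m0 : Fin (k - 1) := ⟨n, hm⟩ with hm0def
        have hstep : s ⟨n + 1, hn⟩ = s ⟨n, hn'⟩ + c m0 := by
          show (∑ m, ε ⟨n + 1, hn⟩ m • c m) = (∑ m, ε ⟨n, hn'⟩ m • c m) + c m0
          have : ∀ m : Fin (k - 1), ε ⟨n + 1, hn⟩ m • c m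
              = ε ⟨n, hn'⟩ m • c m + (if m = m0 then c m else 0) := by
            intro m
            show (if m.1 < n + 1 then (1:ℤ) else 0) • c m
              = (if m.1 < n then (1:ℤ) else 0) • c m + (if m = m0 then c m else 0)
            rcases eq_or_ne m m0 with rfl | hne'
            · simp [hm0def]
            · have hval : m.1 ≠ n := fun h => hne' (Fin.ext h)
              rw [if_neg hne']
              rcases lt_or_ge m.1 n with hlt | hge
              · rw [if_pos (by omega), if_pos hlt, add_zero]
              · rw [if_neg (by omega), if_neg (by omega), add_zero]
          rw [Finset.sum_congr rfl (fun m _ => this m), Finset.sum_add_distrib,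
            Finset.sum_ite_eq' Finset.univ m0 (fun m => c m), if_pos (Finset.mem_univ m0)]
        have hustep : u ⟨n + 1, hn⟩ = u ⟨n, hn'⟩ + c m0 := by
          have hc0 : c m0 = f (g ⟨n + 1, hn⟩ - g ⟨n, hn'⟩) := rfl
          have h := hcoc ⟨n + 1, hn⟩ ⟨n, hn'⟩ i0
          show f (g ⟨n + 1, hn⟩ - g i0) = f (g ⟨n, hn'⟩ - g i0) + c m0
          rw [hc0, h]
          abel
        rw [hstep, hustep, ih hn']
    -- the value of f on the support
    have hfδ : ∀ a : G, MatGrading k g 𝒟 a ≠ ⊥ →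
        f a = (∑ m, (δ a).1 m • c m) + f ((δ a).2 : G) := by
      intro a ha
      obtain ⟨i, j, hij⟩ := hsuppdec a ha
      rw [hδeq a i j hij]
      have hsplit : f a = f (g i - g j) + f (-(g i) + a + g j) := by
        have h := hf (g i - g j) (-(g i) + a + g j)
          (hprodne i j j _ _ (by rw [hcan0]; exact hT0) (by rwa [hcan]))
        rwa [show (g i - g j) + (-(g i) + a + g j) = a by abel] at h
      rw [hsplit, hF i j]
      congr 1
      have : ∀ m : Fin (k - 1), (ε i - ε j) m • c m = ε i m • c m - ε j m • c m := by
        intro m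
        show (ε i m - ε j m) • c m = _
        rw [sub_smul]
      rw [Finset.sum_congr rfl (fun m _ => this m), Finset.sum_sub_distrib]
      exact (by rw [← hsu i, ← hsu j] : u i - u j = s i - s j)
    -- additivity of f on T, as needed for φ
    have hfTadd : ∀ s t : T, f ((s + t : T) : G) = f (s : G) + f (t : G) := by
      intro s t
      exact hfT s t s.2 t.2
    -- the universal homomorphism
    obtain ⟨φ, hφspec⟩ : ∃ φ : ((Fin (k - 1) → ℤ) × T) →+ H,
        ∀ p : (Fin (k - 1) → ℤ) × T, φ p = (∑ m, p.1 m • c m) + f ((p.2 : T) : G) := by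
      refine ⟨AddMonoidHom.mk' (fun p : (Fin (k - 1) → ℤ) × T =>
        (∑ m, p.1 m • c m) + f ((p.2 : T) : G)) ?_, fun p => rfl⟩
      intro p q
      show (∑ m, (p.1 m + q.1 m) • c m) + f (((p.2 + q.2 : T)) : G)
        = ((∑ m, p.1 m • c m) + f ((p.2 : T) : G)) + ((∑ m, q.1 m • c m) + f ((q.2 : T) : G))
      rw [hfTadd]
      rw [Finset.sum_congr rfl (fun m _ => add_smul (p.1 m) (q.1 m) (c m)),
        Finset.sum_add_distrib]
      abel
    -- any homomorphism satisfying the factorization has this explicit form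
    have hval : ∀ ψ : ((Fin (k - 1) → ℤ) × T) →+ H,
        (∀ a : G, MatGrading k g 𝒟 a ≠ ⊥ → f a = ψ (δ a)) →
        ∀ p : (Fin (k - 1) → ℤ) × T, ψ p = (∑ m, p.1 m • c m) + f ((p.2 : T) : G) := by
      intro ψ hψ p
      have hgen1 : ∀ t : T, ψ (0, t) = f (t : G) := by
        intro t
        have hmem : -(g i0) + (t : G) + g i0 ∈ T := by rw [hcan]; exact t.2
        have hδt : δ (t : G) = (0, t) := by
          rw [hδeq _ i0 i0 hmem]
          exact Prod.ext (by simp) (Subtype.ext (hcan i0 (t : G)))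
        have h := hψ (t : G) (hne i0 i0 _ hmem)
        rw [hδt] at h
        exact h.symm
      have hgen2 : ∀ m : Fin (k - 1), ψ (Pi.single m 1, 0) = c m := by
        intro m
        have hmem : -(g (i' m)) + (g (i' m) - g (j' m)) + g (j' m) ∈ T := by
          rw [hcan0]; exact hT0
        have hεeq : ε (i' m) - ε (j' m) = Pi.single m 1 := by
          funext n
          have h1 : (ε (i' m) - ε (j' m)) n
              = (if n.1 < m.1 + 1 then (1:ℤ) else 0) - (if n.1 < m.1 then (1:ℤ) else 0) := rfl
          rw [h1]
          rcases eq_or_ne n m with rfl | hne'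
          · rw [Pi.single_eq_same, if_pos (by omega), if_neg (by omega), sub_zero]
          · have hval : n.1 ≠ m.1 := fun h => hne' (Fin.ext h)
            rw [Pi.single_eq_of_ne hne']
            rcases lt_or_ge n.1 m.1 with hlt | hge
            · rw [if_pos (by omega), if_pos hlt, sub_self]
            · rw [if_neg (by omega), if_neg (by omega), sub_self]
        have hδa : δ (g (i' m) - g (j' m)) = (Pi.single m 1, 0) := by
          rw [hδeq _ (i' m) (j' m) hmem]
          exact Prod.ext hεeq (Subtype.ext (hcan0 (i' m) (j' m)))
        have h := hψ (g (i' m) - g (j' m)) (hne (i' m) (j' m) _ hmem)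
        rw [hδa] at h
        exact h.symm
      obtain ⟨v, t⟩ := p
      have hdecomp : (v, t) = ((v, (0 : T)) : (Fin (k - 1) → ℤ) × T) + (0, t) := by
        rw [Prod.mk_add_mk, add_zero, zero_add]
      have hvsum : ((v, (0 : T)) : (Fin (k - 1) → ℤ) × T)
          = ∑ m, v m • ((Pi.single m 1, 0) : (Fin (k - 1) → ℤ) × T) := by
        refine Prod.ext ?_ ?_
        · rw [Prod.fst_sum]
          simp only [Prod.smul_fst]
          funext n
          rw [Finset.sum_apply]
          simp [Pi.single_apply, mul_ite, Finset.sum_ite_eq]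
        · rw [Prod.snd_sum]
          simp [Prod.smul_snd]
      conv_lhs => rw [hdecomp]
      rw [map_add, hgen1 t]
      congr 1
      rw [hvsum, map_sum]
      refine Finset.sum_congr rfl fun m _ => ?_
      rw [map_zsmul, hgen2 m]
    refine ⟨φ, ?_, ?_⟩
    · intro a ha
      rw [hfδ a ha, hφspec]
    · intro φ' hφ'
      apply AddMonoidHom.ext
      intro p
      rw [hval φ' hφ' p, hφspec p]
end

section
/- Let G be an abelian group, R a G-graded associative algebra that is graded-simple and satisfies the DCC on graded left ideals, so R ≅ M_k(D) graded via degrees g_1,…,g_k and a graded-division algebra D with support T. The grading Γ on R is fine in the class of abelian group gradings if and only if (κ,γ) satisfy the fine condition and the division grading Γ_0 on D is fine in the class of abelian group gradings. -/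
/-- `ℬ'` is a grading of `R` by the abelian group `H`: components multiply into the
component of the sum of degrees, contain the unity in degree `0`, and decompose `R`
as a direct sum. -/
def IsGrading {H : Type*} [AddCommGroup H]
    {F : Type*} [Field F] {R : Type*} [Ring R] [Algebra F R]
    (ℬ' : H → Submodule F R) : Prop :=
  (∀ a b : H, ∀ x ∈ ℬ' a, ∀ y ∈ ℬ' b, x * y ∈ ℬ' (a + b)) ∧
    (1 : R) ∈ ℬ' 0 ∧ iSupIndep ℬ' ∧ (⨆ a, ℬ' a) = ⊤

/-- `ℬ'` refines `ℬ` if each nonzero component of `ℬ'` is contained in a component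
of `ℬ`. -/
def IsRefinement {H : Type*} {G : Type*}
    {F : Type*} [Field F] {R : Type*} [Ring R] [Algebra F R]
    (ℬ' : H → Submodule F R) (ℬ : G → Submodule F R) : Prop :=
  ∀ h : H, ℬ' h ≠ ⊥ → ∃ a : G, ℬ' h ≤ ℬ a

/-- A grading is fine in the class of abelian group gradings if every refinement of
it by an abelian group grading is not proper, i.e. has the same homogeneous
components. -/
def IsFineGrading {G : Type*} [AddCommGroup G]
    {F : Type*} [Field F] {R : Type*} [Ring R] [Algebra F R]
    (ℬ : G → Submodule F R) : Prop :=
  ∀ (H : Type) [inst : AddCommGroup H] (ℬ' : H → Submodule F R),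
    IsGrading ℬ' → IsRefinement ℬ' ℬ → IsRefinement ℬ ℬ'

section Helpers

variable {F : Type} [Field F] {R : Type} [Ring R] [Algebra F R]

lemma indep_sum_eq_zero {ι : Type*} [DecidableEq ι]
    {V : ι → Submodule F R} (hV : iSupIndep V) (s : Finset ι) (x : ι → R)
    (hx : ∀ i, x i ∈ V i) (hsum : ∑ i ∈ s, x i = 0) : ∀ i ∈ s, x i = 0 := by
  intro i hi
  have h2 : x i ∈ (⨆ (j) (_ : j ≠ i), V j) := by
    have he : x i = -∑ j ∈ s.erase i, x j := by
      have h := Finset.add_sum_erase s x hi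
      rw [hsum] at h
      exact eq_neg_of_add_eq_zero_left h
    rw [he]
    refine neg_mem (Submodule.sum_mem _ (fun j hj => ?_))
    exact le_iSup₂ (f := fun (j : ι) (_ : j ≠ i) => V j) j (Finset.ne_of_mem_erase hj) (hx j)
  have := (hV i).le_bot (Submodule.mem_inf.mpr ⟨hx i, h2⟩)
  simpa using this


lemma sum_mem_single {ι : Type*} [DecidableEq ι]
    {V : ι → Submodule F R} (hV : iSupIndep V) (s : Finset ι) (x : ι → R) (y : R) (c₀ : ι)
    (hx : ∀ i, x i ∈ V i) (hx0 : ∀ i ∉ s, x i = 0) (hy : y ∈ V c₀)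
    (hsum : ∑ i ∈ s, x i = y) : ∀ i, i ≠ c₀ → x i = 0 := by
  classical
  set x' : ι → R := fun c => x c - (if c = c₀ then y else 0) with hx'
  have hmem : ∀ c, x' c ∈ V c := by
    intro c
    by_cases h : c = c₀ <;> simp [hx', h, hx c, hy, Submodule.sub_mem, (V c).sub_mem (hx c)]
    · subst h; exact (V c).sub_mem (hx c) hy
  have hsum' : ∑ c ∈ insert c₀ s, x' c = 0 := by
    rw [Finset.sum_sub_distrib, Finset.sum_ite_eq' (insert c₀ s) c₀ (fun _ => y)]
    simp only [Finset.mem_insert_self, if_pos]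
    have : ∑ c ∈ insert c₀ s, x c = y := by
      by_cases h : c₀ ∈ s
      · rwa [Finset.insert_eq_self.mpr h]
      · rw [Finset.sum_insert h, hx0 c₀ h, zero_add]; exact hsum
    rw [this, sub_self]
  intro i hi
  by_cases his : i ∈ insert c₀ s
  · have := indep_sum_eq_zero hV _ x' hmem hsum' i his
    simpa [hx', hi] using this
  · exact hx0 i (fun h => his (Finset.mem_insert_of_mem h))

lemma unique_deg {ι : Type*} [DecidableEq ι]
    {V : ι → Submodule F R} (hV : iSupIndep V) {x : R} {a b : ι}
    (ha : x ∈ V a) (hb : x ∈ V b) (hx : x ≠ 0) : a = b := by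
  by_contra hab
  have h2 : x ∈ (⨆ (j) (_ : j ≠ a), V j) :=
    le_iSup₂ (f := fun (j : ι) (_ : j ≠ a) => V j) b (Ne.symm hab) hb
  have := (hV a).le_bot (Submodule.mem_inf.mpr ⟨ha, h2⟩)
  exact hx (by simpa using this)

lemma decomp_of_sup_top {ι : Type*}
    {V : ι → Submodule F R} (hV : (⨆ i, V i) = ⊤) (x : R) :
    ∃ f : ι →₀ R, (∀ i, f i ∈ V i) ∧ ∑ i ∈ f.support, f i = x := by
  have hx : x ∈ ⨆ i, V i := hV ▸ Submodule.mem_top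
  obtain ⟨f, hf, hfs⟩ := (Submodule.mem_iSup_iff_exists_finsupp V x).mp hx
  exact ⟨f, hf, hfs⟩

lemma inf_indep {G H : Type*}
    {A : G → Submodule F R} {B : H → Submodule F R}
    (hA : iSupIndep A) (hB : iSupIndep B) :
    iSupIndep (fun p : G × H => A p.1 ⊓ B p.2) := by
  classical
  intro p
  rw [disjoint_iff]
  rw [Submodule.eq_bot_iff]
  rintro x hx
  obtain ⟨hx1, hx2⟩ := Submodule.mem_inf.mp hx
  obtain ⟨hxA, hxB⟩ := Submodule.mem_inf.mp hx1
  -- x ∈ ⨆ q ≠ p, A q.1 ⊓ B q.2 ≤ S1 ⊔ S2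
  have hle : (⨆ (q : G × H) (_ : q ≠ p), A q.1 ⊓ B q.2) ≤
      (⨆ (a : G) (_ : a ≠ p.1), (A a ⊓ B p.2)) ⊔ (⨆ (b : H) (_ : b ≠ p.2), B b) := by
    refine iSup₂_le fun q hq => ?_
    by_cases h2 : q.2 = p.2
    · have h1 : q.1 ≠ p.1 := fun h1 => hq (Prod.ext h1 h2)
      refine le_sup_of_le_left ?_
      rw [h2]
      exact le_iSup₂ (f := fun (a : G) (_ : a ≠ p.1) => A a ⊓ B p.2) q.1 h1
    · exact le_sup_of_le_right (inf_le_right.trans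
        (le_iSup₂ (f := fun (b : H) (_ : b ≠ p.2) => B b) q.2 h2))
  obtain ⟨y, hy, z, hz, hyz⟩ := Submodule.mem_sup.mp (hle hx2)
  have hyB : y ∈ B p.2 := by
    have : (⨆ (a : G) (_ : a ≠ p.1), (A a ⊓ B p.2)) ≤ B p.2 :=
      iSup₂_le fun a _ => inf_le_right
    exact this hy
  have hzzero : z = 0 := by
    have hzB : z ∈ B p.2 := by
      have : z = x - y := by rw [← hyz]; abel
      rw [this]; exact (B p.2).sub_mem hxB hyB
    simpa using (hB p.2).le_bot (Submodule.mem_inf.mpr ⟨hzB, hz⟩)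
  have hyA : y ∈ (⨆ (a : G) (_ : a ≠ p.1), A a) := by
    have : (⨆ (a : G) (_ : a ≠ p.1), (A a ⊓ B p.2)) ≤ ⨆ (a : G) (_ : a ≠ p.1), A a :=
      iSup₂_le fun a ha => inf_le_left.trans
        (le_iSup₂ (f := fun (a : G) (_ : a ≠ p.1) => A a) a ha)
    exact this hy
  have hxy : x = y := by rw [← hyz, hzzero, add_zero]
  rw [hxy] at hxA
  simpa [← hxy] using (hA p.1).le_bot (Submodule.mem_inf.mpr ⟨hxA, hyA⟩)

lemma inf_grading {G H : Type*} [AddCommGroup G] [AddCommGroup H]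
    {A : G → Submodule F R} {B : H → Submodule F R}
    (hA : IsGrading A) (hB : IsGrading B)
    (hsup : (⨆ p : G × H, A p.1 ⊓ B p.2) = ⊤) :
    IsGrading (fun p : G × H => A p.1 ⊓ B p.2) := by
  obtain ⟨hAm, hA1, hAi, -⟩ := hA
  obtain ⟨hBm, hB1, hBi, -⟩ := hB
  refine ⟨?_, ?_, inf_indep hAi hBi, hsup⟩
  · rintro ⟨a1, a2⟩ ⟨b1, b2⟩ x hx y hy
    obtain ⟨hx1, hx2⟩ := Submodule.mem_inf.mp hx
    obtain ⟨hy1, hy2⟩ := Submodule.mem_inf.mp hy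
    exact Submodule.mem_inf.mpr ⟨hAm _ _ _ hx1 _ hy1, hBm _ _ _ hx2 _ hy2⟩
  · exact Submodule.mem_inf.mpr ⟨hA1, hB1⟩

end Helpers


section Div

variable {F : Type} [Field F] {G : Type} [AddCommGroup G]
  {D : Type} [Ring D] [Algebra F D]

lemma mul_eq_zero_of_unit {d a : D} (hu : IsUnit d) (h : a * d = 0) : a = 0 := by
  have : a * d * ↑hu.unit⁻¹ = 0 := by rw [h, zero_mul]
  rwa [mul_assoc, hu.mul_val_inv, mul_one] at this

lemma inv_mem_neg {𝒟 : G → Submodule F D} (hgrading : IsGrading 𝒟)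
    {t : G} {d : D} (hd : d ∈ 𝒟 t) (hu : IsUnit d) :
    (↑hu.unit⁻¹ : D) ∈ 𝒟 (-t) := by
  classical
  obtain ⟨hm, h1, hind, hsup⟩ := hgrading
  obtain ⟨f, hf, hfs⟩ := decomp_of_sup_top hsup (↑hu.unit⁻¹ : D)
  set X : G → D := fun c => f (c - t) * d with hX
  have hXmem : ∀ c, X c ∈ 𝒟 c := by
    intro c
    have := hm (c - t) t _ (hf (c - t)) d hd
    rwa [sub_add_cancel] at this
  have hXsum : ∑ c ∈ f.support.image (· + t), X c = 1 := by
    rw [Finset.sum_image (fun a _ b _ h => by simpa using h)]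
    have : ∀ s ∈ f.support, X (s + t) = f s * d := by
      intro s _; simp [hX, add_sub_cancel_right]
    rw [Finset.sum_congr rfl this, ← Finset.sum_mul, hfs, hu.val_inv_mul]
  have hX0 : ∀ c ∉ f.support.image (· + t), X c = 0 := by
    intro c hc
    have : f (c - t) = 0 := by
      by_contra hne
      exact hc (Finset.mem_image.mpr ⟨c - t, Finsupp.mem_support_iff.mpr hne, sub_add_cancel c t⟩)
    simp [hX, this]
  have key := sum_mem_single hind _ X 1 0 hXmem hX0 h1 hXsum
  have hfz : ∀ s, s ≠ -t → f s = 0 := by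
    intro s hs
    have : X (s + t) = 0 := key (s + t) (by
      intro h
      exact hs (by rw [← sub_eq_zero] at h ⊢; rw [← h]; abel))
    have : f s * d = 0 := by simpa [hX, add_sub_cancel_right] using this
    exact mul_eq_zero_of_unit hu this
  rw [← hfs]
  refine Submodule.sum_mem _ (fun s hs => ?_)
  rcases eq_or_ne s (-t) with rfl | hne
  · exact hf _
  · rw [hfz s hne]; exact (𝒟 _).zero_mem

lemma supp_sub {𝒟 : G → Submodule F D} (hgrading : IsGrading 𝒟)
    (hdiv : ∀ a : G, ∀ d ∈ 𝒟 a, d ≠ 0 → IsUnit d)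
    {s t : G} (hs : 𝒟 s ≠ ⊥) (ht : 𝒟 t ≠ ⊥) : 𝒟 (s - t) ≠ ⊥ := by
  obtain ⟨x, hx, hx0⟩ := Submodule.exists_mem_ne_zero_of_ne_bot hs
  obtain ⟨y, hy, hy0⟩ := Submodule.exists_mem_ne_zero_of_ne_bot ht
  have hu := hdiv t y hy hy0
  have hinv := inv_mem_neg hgrading hy hu
  have hmem : x * ↑hu.unit⁻¹ ∈ 𝒟 (s - t) := by
    have := hgrading.1 s (-t) x hx _ hinv
    rwa [← sub_eq_add_neg] at this
  intro hbot
  rw [hbot] at hmem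
  have : x * ↑hu.unit⁻¹ = 0 := by simpa using hmem
  have : x * ↑hu.unit⁻¹ * y = 0 := by rw [this, zero_mul]
  rw [mul_assoc, hu.val_inv_mul, mul_one] at this
  exact hx0 this

end Div

section Mat

open Matrix

variable {F : Type} [Field F] {G : Type} [AddCommGroup G]
  {D : Type} [Ring D] [Algebra F D] {k : ℕ}

/-- entry linear map -/
def entryLM (i j : Fin k) : Matrix (Fin k) (Fin k) D →ₗ[F] D where
  toFun M := M i j
  map_add' _ _ := rfl
  map_smul' _ _ := rfl

/-- std basis linear map -/
def stdLM (i j : Fin k) : D →ₗ[F] Matrix (Fin k) (Fin k) D where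
  toFun d := Matrix.single i j d
  map_add' a b := single_add i j a b
  map_smul' c a := (smul_single c i j a).symm

lemma stdLM_apply (i j : Fin k) (d : D) : stdLM (F := F) i j d = Matrix.single i j d := rfl

lemma mem_matGrading_iff (g : Fin k → G) (𝒟 : G → Submodule F D) (a : G)
    (M : Matrix (Fin k) (Fin k) D) :
    M ∈ MatGrading k g 𝒟 a ↔ ∀ i j : Fin k, M i j ∈ 𝒟 (-(g i) + a + g j) := Iff.rfl

lemma std_mem (g : Fin k → G) (𝒟 : G → Submodule F D) {a : G} {i j : Fin k} {d : D}
    (hd : d ∈ 𝒟 (-(g i) + a + g j)) : Matrix.single i j d ∈ MatGrading k g 𝒟 a := by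
  intro p q
  by_cases h : i = p ∧ j = q
  · obtain ⟨rfl, rfl⟩ := h
    simpa [Matrix.single] using hd
  · have : Matrix.single i j d p q = 0 := by
      simp only [Matrix.single, of_apply, if_neg h]
    rw [this]
    exact (𝒟 _).zero_mem

lemma std_mem' (g : Fin k → G) (𝒟 : G → Submodule F D) {c : G} {i j : Fin k} {d : D}
    (hd : d ∈ 𝒟 c) : Matrix.single i j d ∈ MatGrading k g 𝒟 (g i + c - g j) := by
  apply std_mem
  have : -(g i) + (g i + c - g j) + g j = c := by abel
  rwa [this]

lemma matGrading_isGrading (g : Fin k → G) {𝒟 : G → Submodule F D}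
    (hgrading : IsGrading 𝒟) : IsGrading (MatGrading k g 𝒟) := by
  obtain ⟨hm, h1, hind, hsup⟩ := hgrading
  refine ⟨?_, ?_, ?_, ?_⟩
  · intro a b x hx y hy i j
    rw [Matrix.mul_apply]
    refine Submodule.sum_mem _ (fun m _ => ?_)
    have := hm _ _ _ (hx i m) _ (hy m j)
    have e : (-(g i) + a + g m) + (-(g m) + b + g j) = -(g i) + (a + b) + g j := by abel
    rwa [e] at this
  · intro i j
    rw [Matrix.one_apply]
    by_cases h : i = j
    · subst h
      have e : -(g i) + (0 : G) + g i = 0 := by abel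
      rw [if_pos rfl, e]
      exact h1
    · rw [if_neg h]
      exact (𝒟 _).zero_mem
  · intro a
    rw [disjoint_iff, Submodule.eq_bot_iff]
    intro x hx
    obtain ⟨hx1, hx2⟩ := Submodule.mem_inf.mp hx
    ext i j
    have hmap : entryLM (F := F) i j x ∈ 𝒟 (-(g i) + a + g j) := hx1 i j
    have hmap2 : entryLM (F := F) i j x ∈
        (⨆ (c : G) (_ : c ≠ -(g i) + a + g j), 𝒟 c) := by
      have h1' : x ∈ (⨆ (b : G) (_ : b ≠ a), MatGrading k g 𝒟 b) := hx2
      have := Submodule.mem_map_of_mem (f := entryLM (F := F) i j) h1'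
      rw [Submodule.map_iSup] at this
      refine (iSup_le fun b => ?_ : _ ≤ (⨆ (c : G) (_ : c ≠ -(g i) + a + g j), 𝒟 c)) this
      rw [Submodule.map_iSup]
      refine iSup_le fun hb => ?_
      have hle : Submodule.map (entryLM (F := F) i j) (MatGrading k g 𝒟 b) ≤ 𝒟 (-(g i) + b + g j) := by
        rintro _ ⟨M, hM, rfl⟩
        exact hM i j
      refine hle.trans ?_
      have hne : -(g i) + b + g j ≠ -(g i) + a + g j := by
        intro h
        apply hb
        have h2 := add_right_cancel h
        exact add_left_cancel h2
      exact le_iSup₂ (f := fun (c : G) (_ : c ≠ -(g i) + a + g j) => 𝒟 c) _ hne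
    have hz := (hind _).le_bot (Submodule.mem_inf.mpr ⟨hmap, hmap2⟩)
    simpa using (show x i j ∈ (⊥ : Submodule F D) from hz)
  · rw [eq_top_iff]
    intro M _
    rw [matrix_eq_sum_single M]
    refine Submodule.sum_mem _ (fun i _ => Submodule.sum_mem _ (fun j _ => ?_))
    have hMij : M i j ∈ (⨆ c, 𝒟 c) := by rw [hsup]; trivial
    have := Submodule.mem_map_of_mem (f := stdLM (F := F) i j) hMij
    rw [Submodule.map_iSup] at this
    refine (iSup_le fun c => ?_ : _ ≤ ⨆ a, MatGrading k g 𝒟 a) this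
    refine le_trans ?_ (le_iSup _ (g i + c - g j))
    rintro _ ⟨d, hd, rfl⟩
    exact std_mem' g 𝒟 hd

end Mat


section MainFwd

open Matrix

variable {G : Type} [AddCommGroup G] {F : Type} [Field F]
  {D : Type} [Ring D] [Algebra F D] [Nontrivial D]



lemma trivGrading_isGrading {Z : Type} [AddCommGroup Z] [DecidableEq Z] :
    IsGrading (fun v : Z => if v = 0 then (⊤ : Submodule F D) else ⊥) := by
  refine ⟨?_, ?_, ?_, ?_⟩
  · intro a b x hx y hy
    by_cases ha : a = 0
    · by_cases hb : b = 0
      · simp [ha, hb]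
      · simp only [if_neg hb, Submodule.mem_bot] at hy
        simp [hy]
    · simp only [if_neg ha, Submodule.mem_bot] at hx
      simp [hx]
  · simp
  · intro v
    by_cases hv : v = 0
    · subst hv
      simp only [if_pos rfl]
      have : (⨆ (w : Z) (_ : w ≠ 0), if w = 0 then (⊤ : Submodule F D) else ⊥) = ⊥ := by
        rw [eq_bot_iff]
        exact iSup₂_le fun w hw => by rw [if_neg hw]
      rw [this]
      exact disjoint_bot_right
    · have hbv : (fun v : Z => if v = 0 then (⊤ : Submodule F D) else ⊥) v = ⊥ := if_neg hv
      rw [hbv]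
      exact disjoint_bot_left
  · rw [eq_top_iff]
    exact le_trans (by simp) (le_iSup _ (0 : Z))

lemma single_sub_eq {k : ℕ} {i j h l : Fin k} (hij : i ≠ j)
    (heq : (Pi.single i 1 : Fin k → ℤ) - Pi.single j 1 = Pi.single h 1 - Pi.single l 1) :
    (i, j) = (h, l) := by
  have key : ∀ x : Fin k, (if x = i then (1:ℤ) else 0) - (if x = j then 1 else 0)
      = (if x = h then 1 else 0) - (if x = l then 1 else 0) := by
    intro x
    have hx := congrFun heq x
    simpa only [Pi.sub_apply, Pi.single_apply] using hx
  have hi := key i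
  have hj := key j
  rw [if_pos rfl, if_neg (fun hh : i = j => hij hh)] at hi
  rw [if_pos rfl, if_neg (fun hh : j = i => hij hh.symm)] at hj
  split_ifs at hi hj <;> first | omega | (subst_vars; simp_all)

theorem main_forward (k : ℕ) (hk : 0 < k) (g : Fin k → G) (𝒟 : G → Submodule F D)
    (hgrading : IsGrading 𝒟)
    (hfine : IsFineGrading (MatGrading k g 𝒟)) :
    ((∀ i j h l : Fin k, i ≠ j → (i, j) ≠ (h, l) →
          𝒟 (g i - g j - (g h - g l)) = ⊥) ∧
        IsFineGrading 𝒟) := by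
  classical
  constructor
  · intro i j h l hij hne
    by_contra hbot
    -- the refinement by G × (Fin k → ℤ)
    set Z := Fin k → ℤ with hZ
    set B : Z → Submodule F D := fun v => if v = 0 then ⊤ else ⊥ with hB
    set 𝒟' : G × Z → Submodule F D := fun p => 𝒟 p.1 ⊓ B p.2 with h𝒟'
    have h𝒟'grading : IsGrading 𝒟' := by
      refine inf_grading hgrading trivGrading_isGrading ?_
      rw [eq_top_iff, ← hgrading.2.2.2]
      refine iSup_le fun a => ?_
      refine le_trans ?_ (le_iSup _ (a, (0:Z)))
      simp [h𝒟', hB]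
    set g' : Fin k → G × Z := fun i => (g i, Pi.single i 1) with hg'
    have hΓ'grading : IsGrading (MatGrading k g' 𝒟') := matGrading_isGrading g' h𝒟'grading
    have href : IsRefinement (MatGrading k g' 𝒟') (MatGrading k g 𝒟) := by
      intro p _
      exact ⟨p.1, fun M hM i' j' => (Submodule.mem_inf.mp (hM i' j')).1⟩
    have hΓref := hfine (G × Z) (MatGrading k g' 𝒟') hΓ'grading href
    obtain ⟨d, hd, hd0⟩ := Submodule.exists_mem_ne_zero_of_ne_bot hbot
    set a : G := g i - g j with ha
    set M : Matrix (Fin k) (Fin k) D := Matrix.single i j 1 + Matrix.single h l d with hM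
    have hpairne : ¬(i = h ∧ j = l) := fun ⟨h1, h2⟩ => hne (by rw [h1, h2])
    have hpairne' : ¬(h = i ∧ l = j) := fun ⟨h1, h2⟩ => hne (by rw [h1, h2])
    have hM1 : M i j = 1 := by
      simp only [hM, Matrix.add_apply, Matrix.single_apply_same,
        Matrix.single_apply_of_ne _ _ _ _ _ hpairne', add_zero]
    have hM2 : M h l = d := by
      simp only [hM, Matrix.add_apply, Matrix.single_apply_same,
        Matrix.single_apply_of_ne _ _ _ _ _ hpairne, zero_add]
    have hMa : M ∈ MatGrading k g 𝒟 a := by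
      refine Submodule.add_mem _ (std_mem g 𝒟 ?_) (std_mem g 𝒟 ?_)
      · have e : -(g i) + a + g j = 0 := by rw [ha]; abel
        rw [e]; exact hgrading.2.1
      · have e : -(g h) + a + g l = g i - g j - (g h - g l) := by rw [ha]; abel
        rw [e]; exact hd
    have hMne : M ≠ 0 := by
      intro h0
      have h1 : (1 : D) = 0 := by rw [← hM1, h0]; rfl
      exact one_ne_zero h1
    have hΓane : MatGrading k g 𝒟 a ≠ ⊥ := by
      intro hb
      rw [hb] at hMa
      exact hMne (by simpa using hMa)
    obtain ⟨⟨b, v⟩, hle⟩ := hΓref a hΓane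
    have hM' := hle hMa
    have hv1 : v = Pi.single i 1 - Pi.single j 1 := by
      have hmem := (Submodule.mem_inf.mp (hM' i j)).2
      rw [hM1] at hmem
      have hmem' : (1 : D) ∈ (if (-(Pi.single i (1:ℤ)) + v + Pi.single j (1:ℤ) : Z) = 0
          then (⊤ : Submodule F D) else ⊥) := hmem
      by_cases h0 : (-(Pi.single i (1:ℤ)) + v + Pi.single j (1:ℤ) : Z) = 0
      · rw [← sub_eq_zero, ← h0]; abel
      · rw [if_neg h0] at hmem'
        exact absurd (by simpa using hmem') (one_ne_zero (α := D))
    have hv2 : v = Pi.single h 1 - Pi.single l 1 := by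
      have hmem := (Submodule.mem_inf.mp (hM' h l)).2
      rw [hM2] at hmem
      have hmem' : d ∈ (if (-(Pi.single h (1:ℤ)) + v + Pi.single l (1:ℤ) : Z) = 0
          then (⊤ : Submodule F D) else ⊥) := hmem
      by_cases h0 : (-(Pi.single h (1:ℤ)) + v + Pi.single l (1:ℤ) : Z) = 0
      · rw [← sub_eq_zero, ← h0]; abel
      · rw [if_neg h0] at hmem'
        exact absurd (by simpa using hmem') hd0
    exact hne (single_sub_eq hij (by rw [← hv1, ← hv2]))
  · intro H _ ℬ'' hB''grading hB''ref b hbne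
    set 𝒟₂ : G × H → Submodule F D := fun p => 𝒟 p.1 ⊓ ℬ'' p.2 with h𝒟₂
    have h𝒟₂grading : IsGrading 𝒟₂ := by
      refine inf_grading hgrading hB''grading ?_
      rw [eq_top_iff, ← hB''grading.2.2.2]
      refine iSup_le fun h => ?_
      by_cases hb : ℬ'' h = ⊥
      · rw [hb]; exact bot_le
      · obtain ⟨a₀, ha₀⟩ := hB''ref h hb
        refine le_trans ?_ (le_iSup _ (a₀, h))
        exact le_inf ha₀ le_rfl
    set g'' : Fin k → G × H := fun i => (g i, 0) with hg''
    have hℳgrading : IsGrading (MatGrading k g'' 𝒟₂) := matGrading_isGrading g'' h𝒟₂grading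
    have href : IsRefinement (MatGrading k g'' 𝒟₂) (MatGrading k g 𝒟) := by
      intro p _
      exact ⟨p.1, fun M hM i' j' => (Submodule.mem_inf.mp (hM i' j')).1⟩
    have hΓref := hfine (G × H) (MatGrading k g'' 𝒟₂) hℳgrading href
    set i₀ : Fin k := ⟨0, hk⟩ with hi₀
    obtain ⟨d, hd, hd0⟩ := Submodule.exists_mem_ne_zero_of_ne_bot hbne
    have hstdmem : ∀ x ∈ 𝒟 b, Matrix.single i₀ i₀ x ∈ MatGrading k g 𝒟 b := by
      intro x hx
      apply std_mem
      have e : -(g i₀) + b + g i₀ = b := by abel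
      rwa [e]
    have hΓbne : MatGrading k g 𝒟 b ≠ ⊥ := by
      intro h0
      have := hstdmem d hd
      rw [h0] at this
      have hz : Matrix.single i₀ i₀ d = 0 := by simpa using this
      apply hd0
      have := congrFun (congrFun hz i₀) i₀
      simpa [Matrix.single] using this
    obtain ⟨⟨b', h⟩, hle⟩ := hΓref b hΓbne
    refine ⟨h, fun x hx => ?_⟩
    have := hle (hstdmem x hx)
    have hentry := (Submodule.mem_inf.mp (this i₀ i₀)).2
    have he : (-(g'' i₀) + ((b', h) : G × H) + g'' i₀).2 = h := by
      simp [hg'']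
    rw [he] at hentry
    have hxval : Matrix.single i₀ i₀ x i₀ i₀ = x := by simp [Matrix.single]
    rwa [hxval] at hentry

end MainFwd


section MatHelp

open Matrix

variable {F : Type} [Field F] {D : Type} [Ring D] [Algebra F D] {k : ℕ}

lemma exists_entry_ne_zero {M : Matrix (Fin k) (Fin k) D} (h : M ≠ 0) :
    ∃ p q, M p q ≠ 0 := by
  by_contra hc
  push_neg at hc
  exact h (by ext p q; simpa using hc p q)

lemma std_eq_zero_iff {i j : Fin k} {d : D} : Matrix.single i j d = 0 ↔ d = 0 := by
  constructor
  · intro h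
    have := congrFun (congrFun h i) j
    simpa using this
  · rintro rfl; simp

lemma diag_eq_sum_std {M : Matrix (Fin k) (Fin k) D}
    (hdiag : ∀ p q, p ≠ q → M p q = 0) :
    M = ∑ r : Fin k, Matrix.single r r (M r r) := by
  classical
  conv_lhs => rw [matrix_eq_sum_single M]
  refine Finset.sum_congr rfl (fun r _ => ?_)
  rw [Finset.sum_eq_single r]
  · intro q _ hq
    rw [hdiag r q (Ne.symm hq), single_zero]
  · intro hr; exact absurd (Finset.mem_univ r) hr

lemma sum_std_mul_std (e : Fin k → D) (p q : Fin k) (v : D) :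
    (∑ r : Fin k, Matrix.single r r (e r)) * Matrix.single p q v
      = Matrix.single p q (e p * v) := by
  classical
  rw [Finset.sum_mul, Finset.sum_eq_single p]
  · rw [single_mul_single_same]
  · intro r _ hr
    exact single_mul_single_of_ne (e r) r r _ hr v
  · intro hp; exact absurd (Finset.mem_univ p) hp

lemma diagM_mul_std {M : Matrix (Fin k) (Fin k) D}
    (hdiag : ∀ p' q', p' ≠ q' → M p' q' = 0) (p q : Fin k) (v : D) :
    M * Matrix.single p q v = Matrix.single p q (M p p * v) := by
  conv_lhs => rw [diag_eq_sum_std hdiag]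
  rw [sum_std_mul_std]

lemma corner_eq (M : Matrix (Fin k) (Fin k) D) (i : Fin k) :
    Matrix.single i i 1 * M * Matrix.single i i 1 = Matrix.single i i (M i i) := by
  ext a b
  by_cases hb : b = i
  · rw [hb, mul_single_apply_same]
    by_cases ha : a = i
    · rw [ha, single_mul_apply_same, single_apply_same, one_mul, mul_one]
    · rw [single_mul_apply_of_ne _ _ _ _ _ ha,
        single_apply_of_ne _ _ _ _ _ (fun hh => ha hh.1.symm), zero_mul]
  · rw [mul_single_apply_of_ne _ _ _ _ _ hb,
      single_apply_of_ne _ _ _ _ _ (fun hh => hb hh.2.symm)]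

end MatHelp


section MainBwd

open Matrix

variable {G : Type} [AddCommGroup G] {F : Type} [Field F]
  {D : Type} [Ring D] [Algebra F D] [Nontrivial D]
  {k : ℕ} {g : Fin k → G} {𝒟 : G → Submodule F D}

/-- S1: if some off-diagonal position supports `Γ a`, it is the only position. -/
lemma offdiag_unique (hgrading : IsGrading 𝒟)
    (hdiv : ∀ a : G, ∀ d ∈ 𝒟 a, d ≠ 0 → IsUnit d)
    (hfc : ∀ i j h l : Fin k, i ≠ j → (i, j) ≠ (h, l) →
          𝒟 (g i - g j - (g h - g l)) = ⊥)
    {a : G} {i j : Fin k} (hij : i ≠ j) (hne : 𝒟 (-(g i) + a + g j) ≠ ⊥) :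
    ∀ p q : Fin k, (p, q) ≠ (i, j) → 𝒟 (-(g p) + a + g q) = ⊥ := by
  intro p q hpq
  by_contra hne2
  rcases eq_or_ne p q with rfl | hpq'
  · have hsub := supp_sub hgrading hdiv hne2 hne
    have e : (-(g p) + a + g p) - (-(g i) + a + g j) = g i - g j - (g p - g p) := by abel
    rw [e, hfc i j p p hij (fun hh => hij (by
      have := hh
      rw [Prod.mk.injEq] at this
      rw [this.1, this.2])) ] at hsub
    exact hsub rfl
  · have hsub := supp_sub hgrading hdiv hne2 hne
    have e : (-(g p) + a + g q) - (-(g i) + a + g j) = g i - g j - (g p - g q) := by abel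
    rw [e, hfc i j p q hij (Ne.symm hpq)] at hsub
    exact hsub rfl

/-- S2: if `a` is in the support of `𝒟` then `Γ a` is diagonal. -/
lemma diag_type (hgrading : IsGrading 𝒟)
    (hdiv : ∀ a : G, ∀ d ∈ 𝒟 a, d ≠ 0 → IsUnit d)
    (hfc : ∀ i j h l : Fin k, i ≠ j → (i, j) ≠ (h, l) →
          𝒟 (g i - g j - (g h - g l)) = ⊥)
    {a : G} (ha : 𝒟 a ≠ ⊥) :
    ∀ p q : Fin k, p ≠ q → 𝒟 (-(g p) + a + g q) = ⊥ := by
  intro p q hpq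
  by_contra hne2
  have hsub := supp_sub hgrading hdiv hne2 ha
  have e : (-(g p) + a + g q) - a = g q - g p - (g p - g p) := by abel
  rw [e, hfc q p p p (Ne.symm hpq) (fun hh => hpq (by
      rw [Prod.mk.injEq] at hh
      rw [hh.1, hh.2]))] at hsub
  exact hsub rfl

/-- S3: decomposition of an element of a homogeneous component into refined
homogeneous pieces lying in the same component. -/
lemma refined_decomp {R : Type} [Ring R] [Algebra F R] {H : Type} [AddCommGroup H]
    {𝒜 : G → Submodule F R} {ℬ : H → Submodule F R}
    (h𝒜ind : iSupIndep 𝒜) (hBsup : (⨆ h, ℬ h) = ⊤)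
    (hBref : ∀ h : H, ℬ h ≠ ⊥ → ∃ a : G, ℬ h ≤ 𝒜 a)
    {b : G} {x : R} (hx : x ∈ 𝒜 b) :
    ∃ (xf : H → R) (S : Finset H), (∀ h, xf h ∈ ℬ h) ∧ (∀ h, xf h ∈ 𝒜 b) ∧
      (∀ h ∉ S, xf h = 0) ∧ ∑ h ∈ S, xf h = x := by
  classical
  obtain ⟨f, hf, hfs⟩ := decomp_of_sup_top hBsup x
  set xf : H → R := fun h => if f h ∈ 𝒜 b then f h else 0 with hxf
  refine ⟨xf, f.support, ?_, ?_, ?_, ?_⟩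
  · intro h
    by_cases hb : f h ∈ 𝒜 b
    · simpa [hxf, hb] using hf h
    · simp [hxf, hb]
  · intro h
    by_cases hb : f h ∈ 𝒜 b
    · simpa [hxf, hb] using hb
    · simp [hxf, hb]
  · intro h hh
    have : f h = 0 := Finsupp.notMem_support_iff.mp hh
    simp [hxf, this]
  · have hsplit : x - ∑ h ∈ f.support, xf h = ∑ h ∈ f.support, (f h - xf h) := by
      rw [Finset.sum_sub_distrib, hfs]
    have hdiff : x - ∑ h ∈ f.support, xf h ∈ 𝒜 b := by
      refine Submodule.sub_mem _ hx (Submodule.sum_mem _ (fun h _ => ?_))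
      by_cases hb : f h ∈ 𝒜 b
      · simpa [hxf, hb] using hb
      · simp [hxf, hb]
    have hdiff2 : x - ∑ h ∈ f.support, xf h ∈ (⨆ (b' : G) (_ : b' ≠ b), 𝒜 b') := by
      rw [hsplit]
      refine Submodule.sum_mem _ (fun h hh => ?_)
      by_cases hb : f h ∈ 𝒜 b
      · simp [hxf, hb]
      · have hfh0 : f h ≠ 0 := fun h0 => hb (h0 ▸ (𝒜 b).zero_mem)
        have hBne : ℬ h ≠ ⊥ := by
          intro h0
          have := hf h
          rw [h0] at this
          exact hfh0 (by simpa using this)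
        obtain ⟨b', hb'⟩ := hBref h hBne
        have hb'ne : b' ≠ b := fun h0 => hb (h0 ▸ hb' (hf h))
        have : f h - xf h = f h := by simp [hxf, hb]
        rw [this]
        exact le_iSup₂ (f := fun (b'' : G) (_ : b'' ≠ b) => 𝒜 b'') b' hb'ne (hb' (hf h))
    have := (h𝒜ind b).le_bot (Submodule.mem_inf.mpr ⟨hdiff, hdiff2⟩)
    have h0 : x - ∑ h ∈ f.support, xf h = 0 := by simpa using this
    exact (sub_eq_zero.mp h0).symm

variable {H : Type} [AddCommGroup H] {ℬ' : H → Submodule F (Matrix (Fin k) (Fin k) D)}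

lemma D0_ne_bot (hgrading : IsGrading 𝒟) : 𝒟 0 ≠ ⊥ := by
  intro h0
  have := hgrading.2.1
  rw [h0] at this
  exact one_ne_zero (α := D) (by simpa using this)

/-- a member of an off-diagonal-type component is a single std basis matrix -/
lemma mem_off_eq_std {a : G} {p q : Fin k}
    (hbot : ∀ p' q' : Fin k, (p', q') ≠ (p, q) → 𝒟 (-(g p') + a + g q') = ⊥)
    {M : Matrix (Fin k) (Fin k) D} (hM : M ∈ MatGrading k g 𝒟 a) :
    M = Matrix.single p q (M p q) := by
  ext p' q'
  by_cases hpq' : (p', q') = (p, q)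
  · obtain ⟨h1, h2⟩ := Prod.mk.injEq .. ▸ hpq'
    subst h1; subst h2
    rw [single_apply_same]
  · have := hM p' q'
    rw [hbot p' q' hpq'] at this
    rw [Submodule.mem_bot] at this
    rw [this, single_apply_of_ne]
    rintro ⟨rfl, rfl⟩
    exact hpq' rfl

/-- S4: the refined homogeneous components of the matrix unit `E_pq`. -/
lemma offdiag_comps (hgrading : IsGrading 𝒟)
    (hdiv : ∀ a : G, ∀ d ∈ 𝒟 a, d ≠ 0 → IsUnit d)
    (hfc : ∀ i j h l : Fin k, i ≠ j → (i, j) ≠ (h, l) →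
          𝒟 (g i - g j - (g h - g l)) = ⊥)
    (hBg : IsGrading ℬ') (hBref : ∀ h : H, ℬ' h ≠ ⊥ → ∃ a : G, ℬ' h ≤ MatGrading k g 𝒟 a)
    {p q : Fin k} (hpq : p ≠ q) :
    ∃ (S : Finset H) (w : H → D), (∀ c, w c ∈ 𝒟 0) ∧
      (∀ c, Matrix.single p q (w c) ∈ ℬ' c) ∧ (∀ c ∉ S, w c = 0) ∧ ∑ c ∈ S, w c = 1 := by
  classical
  have hΓg := matGrading_isGrading g hgrading
  have e : -(g p) + (g p - g q) + g q = 0 := by abel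
  have hmem : Matrix.single p q (1 : D) ∈ MatGrading k g 𝒟 (g p - g q) :=
    std_mem g 𝒟 (by rw [e]; exact hgrading.2.1)
  obtain ⟨xf, S, h1, h2, hS0, hsum⟩ :=
    refined_decomp hΓg.2.2.1 hBg.2.2.2 hBref hmem
  have hsupp : 𝒟 (-(g p) + (g p - g q) + g q) ≠ ⊥ := by
    rw [e]; exact D0_ne_bot hgrading
  have hbot := offdiag_unique hgrading hdiv hfc hpq hsupp
  have hstd : ∀ c, xf c = Matrix.single p q ((xf c) p q) :=
    fun c => mem_off_eq_std hbot (h2 c)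
  refine ⟨S, fun c => (xf c) p q, ?_, ?_, ?_, ?_⟩
  · intro c
    have := h2 c p q
    rwa [e] at this
  · intro c
    rw [← hstd c]
    exact h1 c
  · intro c hc
    show (xf c) p q = 0
    rw [hS0 c hc]
    rfl
  · have := congrFun (congrFun hsum p) q
    rw [Matrix.sum_apply, single_apply_same] at this
    exact this

/-- S5: the diagonal matrix units are homogeneous of degree `0` in any refinement. -/
lemma std_one_mem_zero (hk : 0 < k) (hgrading : IsGrading 𝒟)
    (hdiv : ∀ a : G, ∀ d ∈ 𝒟 a, d ≠ 0 → IsUnit d)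
    (hfc : ∀ i j h l : Fin k, i ≠ j → (i, j) ≠ (h, l) →
          𝒟 (g i - g j - (g h - g l)) = ⊥)
    (hBg : IsGrading ℬ') (hBref : ∀ h : H, ℬ' h ≠ ⊥ → ∃ a : G, ℬ' h ≤ MatGrading k g 𝒟 a)
    (i : Fin k) : Matrix.single i i (1 : D) ∈ ℬ' 0 := by
  classical
  have hΓg := matGrading_isGrading g hgrading
  by_cases hk1 : k = 1
  · have hone : Matrix.single i i (1 : D) = 1 := by
      subst hk1
      ext p' q'
      rw [Subsingleton.elim p' i, Subsingleton.elim q' i,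
        single_apply_same, Matrix.one_apply_eq]
    rw [hone]
    exact hBg.2.1
  · haveI : Nontrivial (Fin k) := by
      apply Fin.nontrivial_iff_two_le.mpr
      omega
    have e0 : -(g i) + (0 : G) + g i = 0 := by abel
    have hmem : Matrix.single i i (1 : D) ∈ MatGrading k g 𝒟 0 :=
      std_mem g 𝒟 (by rw [e0]; exact hgrading.2.1)
    obtain ⟨xf, S, h1, h2, hS0, hsum⟩ :=
      refined_decomp hΓg.2.2.1 hBg.2.2.2 hBref hmem
    have hdiagbot := diag_type hgrading hdiv hfc (D0_ne_bot hgrading)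
    have hdiag : ∀ c, ∀ p' q' : Fin k, p' ≠ q' → (xf c) p' q' = 0 := by
      intro c p' q' hne
      have := h2 c p' q'
      rw [hdiagbot p' q' hne] at this
      simpa using this
    -- every nonzero-degree component vanishes
    have hkey : ∀ h : H, h ≠ 0 → xf h = 0 := by
      intro h hne0
      ext r s
      rcases eq_or_ne r s with rfl | hrs
      · -- diagonal entry
        obtain ⟨q, hq⟩ := exists_ne r
        obtain ⟨Sw, w, hw0, hwB, hwS, hwsum⟩ :=
          offdiag_comps hgrading hdiv hfc hBg hBref (Ne.symm hq)
        have hprod : ∀ c : H, ∀ h' : H, xf h' * Matrix.single r q (w c)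
            = Matrix.single r q ((xf h') r r * w c) :=
          fun c h' => diagM_mul_std (hdiag h') r q (w c)
        have hyB : ∀ c : H, Matrix.single i i (1 : D) * Matrix.single r q (w c) ∈ ℬ' c := by
          intro c
          by_cases hri : i = r
          · rw [hri, single_mul_single_same, one_mul]
            exact hwB c
          · rw [single_mul_single_of_ne 1 i i _ hri (w c)]
            exact (ℬ' c).zero_mem
        have hzero : ∀ c : H, (xf h) r r * w c = 0 := by
          intro c
          set Y : H → Matrix (Fin k) (Fin k) D :=
            fun h' => xf (h' - c) * Matrix.single r q (w c) with hY
          have hYmem : ∀ h', Y h' ∈ ℬ' h' := by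
            intro h'
            have := hBg.1 (h' - c) c _ (h1 (h' - c)) _ (hwB c)
            rwa [sub_add_cancel] at this
          have hY0 : ∀ h' ∉ S.image (· + c), Y h' = 0 := by
            intro h' hh'
            have : h' - c ∉ S := by
              intro hmem'
              exact hh' (Finset.mem_image.mpr ⟨h' - c, hmem', sub_add_cancel h' c⟩)
            rw [hY]
            simp only []
            rw [hS0 _ this, zero_mul]
          have hYsum : ∑ h' ∈ S.image (· + c), Y h'
              = Matrix.single i i (1 : D) * Matrix.single r q (w c) := by
            rw [Finset.sum_image (fun a _ b _ hab => by simpa using hab)]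
            have : ∀ h' ∈ S, Y (h' + c) = xf h' * Matrix.single r q (w c) := by
              intro h' _
              rw [hY]
              simp only [add_sub_cancel_right]
            rw [Finset.sum_congr rfl this, ← Finset.sum_mul, hsum]
          have := sum_mem_single hBg.2.2.1 (S.image (· + c)) Y _ c hYmem hY0 (hyB c) hYsum
          have hYhc : Y (h + c) = 0 := this (h + c) (by
            intro hcc
            exact hne0 (by
              have := hcc
              rwa [add_eq_right] at this))
          have : Matrix.single r q ((xf h) r r * w c) = 0 := by
            rw [← hprod c h]
            have : h + c - c = h := by abel
            calc xf h * Matrix.single r q (w c)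
                = xf (h + c - c) * Matrix.single r q (w c) := by rw [this]
              _ = 0 := hYhc
          exact std_eq_zero_iff.mp this
        have : (xf h) r r * 1 = 0 := by
          rw [← hwsum, Finset.mul_sum]
          exact Finset.sum_eq_zero (fun c _ => hzero c)
        simpa using this
      · exact hdiag h r s hrs
    -- conclude
    have hsum2 : ∑ h ∈ S, xf h = if (0 : H) ∈ S then xf 0 else 0 := by
      rw [Finset.sum_congr rfl (fun h hh => show xf h = if h = 0 then xf 0 else 0 by
        by_cases h0 : h = 0
        · rw [if_pos h0, h0]
        · rw [if_neg h0, hkey h h0]), Finset.sum_ite_eq' S 0 (fun _ => xf 0)]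
    by_cases h0S : (0 : H) ∈ S
    · rw [hsum2, if_pos h0S] at hsum
      rw [← hsum]
      exact h1 0
    · rw [hsum2, if_neg h0S] at hsum
      exact absurd (std_eq_zero_iff.mp hsum.symm) (one_ne_zero (α := D))

/-- S6: from fineness of `𝒟`, each `𝒟 b` maps into a single component of `ℬ'`
in each diagonal corner. -/
lemma corner_fine (hk : 0 < k) (hgrading : IsGrading 𝒟)
    (hdiv : ∀ a : G, ∀ d ∈ 𝒟 a, d ≠ 0 → IsUnit d)
    (hfc : ∀ i j h l : Fin k, i ≠ j → (i, j) ≠ (h, l) →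
          𝒟 (g i - g j - (g h - g l)) = ⊥)
    (hDfine : IsFineGrading 𝒟)
    (hBg : IsGrading ℬ') (hBref : ∀ h : H, ℬ' h ≠ ⊥ → ∃ a : G, ℬ' h ≤ MatGrading k g 𝒟 a)
    (i : Fin k) (b : G) (hb : 𝒟 b ≠ ⊥) :
    ∃ h : H, ∀ d ∈ 𝒟 b, Matrix.single i i d ∈ ℬ' h := by
  classical
  have hΓg := matGrading_isGrading g hgrading
  have hE : Matrix.single i i (1 : D) ∈ ℬ' 0 :=
    std_one_mem_zero hk hgrading hdiv hfc hBg hBref i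
  set Bc : H → Submodule F D := fun h => Submodule.comap (stdLM (F := F) i i) (ℬ' h) with hBc
  set 𝒞 : G × H → Submodule F D := fun p => 𝒟 p.1 ⊓ Bc p.2 with h𝒞
  have hstdBc : ∀ (h : H) (d : D), d ∈ Bc h ↔ Matrix.single i i d ∈ ℬ' h := by
    intro h d
    rw [hBc]
    exact Submodule.mem_comap
  have hC_sup : (⨆ p : G × H, 𝒞 p) = ⊤ := by
    rw [eq_top_iff, ← hgrading.2.2.2]
    refine iSup_le fun b' => ?_
    intro d hd
    have eb : -(g i) + b' + g i = b' := by abel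
    have hmem : Matrix.single i i d ∈ MatGrading k g 𝒟 b' :=
      std_mem g 𝒟 (by rw [eb]; exact hd)
    obtain ⟨xf, S, h1, h2, hS0, hsum⟩ :=
      refined_decomp hΓg.2.2.1 hBg.2.2.2 hBref hmem
    have hdsum : d = ∑ h ∈ S, (xf h) i i := by
      have := congrFun (congrFun hsum i) i
      rw [Matrix.sum_apply, single_apply_same] at this
      exact this.symm
    rw [hdsum]
    refine Submodule.sum_mem _ (fun h hh => ?_)
    refine Submodule.mem_iSup_of_mem (b', h) (Submodule.mem_inf.mpr ⟨?_, ?_⟩)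
    · have := h2 h i i
      rwa [eb] at this
    · rw [hstdBc]
      have hcor : Matrix.single i i ((xf h) i i)
          = Matrix.single i i 1 * xf h * Matrix.single i i 1 := (corner_eq (xf h) i).symm
      rw [hcor]
      have hm := hBg.1 (0 + h) 0 _ (hBg.1 0 h _ hE _ (h1 h)) _ hE
      rwa [zero_add, add_zero] at hm
  have hBc_grading : IsGrading Bc := by
    refine ⟨?_, ?_, ?_, ?_⟩
    · intro h h' x hx y hy
      rw [hstdBc] at hx hy ⊢
      have := hBg.1 h h' _ hx _ hy
      rwa [single_mul_single_same] at this
    · rw [hstdBc]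
      exact hE
    · intro h
      rw [disjoint_iff, Submodule.eq_bot_iff]
      intro x hx
      obtain ⟨hx1, hx2⟩ := Submodule.mem_inf.mp hx
      have hm1 : Matrix.single i i x ∈ ℬ' h := (hstdBc h x).mp hx1
      have hm2 : Matrix.single i i x ∈ (⨆ (h' : H) (_ : h' ≠ h), ℬ' h') := by
        have := Submodule.mem_map_of_mem (f := stdLM (F := F) i i) hx2
        rw [Submodule.map_iSup] at this
        refine (iSup_le fun h' => ?_ :
          _ ≤ (⨆ (h' : H) (_ : h' ≠ h), ℬ' h')) this
        rw [Submodule.map_iSup]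
        refine iSup_le fun hne => ?_
        refine le_trans (Submodule.map_comap_le _ _) ?_
        exact le_iSup₂ (f := fun (h'' : H) (_ : h'' ≠ h) => ℬ' h'') h' hne
      have := (hBg.2.2.1 h).le_bot (Submodule.mem_inf.mpr ⟨hm1, hm2⟩)
      have h0 : Matrix.single i i x = 0 := by simpa using this
      exact std_eq_zero_iff.mp h0
    · rw [eq_top_iff, ← hC_sup]
      exact iSup_le fun p => le_trans inf_le_right (le_iSup Bc p.2)
  have hC_grading : IsGrading 𝒞 := inf_grading hgrading hBc_grading hC_sup
  have happ := hDfine (G × H) 𝒞 hC_grading (fun p _ => ⟨p.1, inf_le_left⟩)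
  obtain ⟨⟨b', h⟩, hle⟩ := happ b hb
  exact ⟨h, fun d hd => (hstdBc h d).mp (Submodule.mem_inf.mp (hle hd)).2⟩

lemma unit_mul_ne_zero {u x : D} (hu : IsUnit u) (hx : x ≠ 0) : u * x ≠ 0 := by
  intro h0
  apply hx
  have : ↑hu.unit⁻¹ * (u * x) = 0 := by rw [h0, mul_zero]
  rwa [← mul_assoc, hu.val_inv_mul, one_mul] at this

lemma mul_unit_ne_zero {u x : D} (hu : IsUnit u) (hx : x ≠ 0) : x * u ≠ 0 := by
  intro h0
  apply hx
  have : x * u * ↑hu.unit⁻¹ = 0 := by rw [h0, zero_mul]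
  rwa [mul_assoc, hu.mul_val_inv, mul_one] at this

/-- S8: the corner degree does not depend on the diagonal position. -/
lemma corner_deg_eq (hk : 0 < k) (hgrading : IsGrading 𝒟)
    (hdiv : ∀ a : G, ∀ d ∈ 𝒟 a, d ≠ 0 → IsUnit d)
    (hfc : ∀ i j h l : Fin k, i ≠ j → (i, j) ≠ (h, l) →
          𝒟 (g i - g j - (g h - g l)) = ⊥)
    (hBg : IsGrading ℬ') (hBref : ∀ h : H, ℬ' h ≠ ⊥ → ∃ a : G, ℬ' h ≤ MatGrading k g 𝒟 a)
    (hcorner : ∀ i : Fin k, ∀ b : G, 𝒟 b ≠ ⊥ →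
      ∃ h : H, ∀ d ∈ 𝒟 b, Matrix.single i i d ∈ ℬ' h)
    {i j : Fin k} {b : G} (hb : 𝒟 b ≠ ⊥) {h h' : H}
    (hi : ∀ d ∈ 𝒟 b, Matrix.single i i d ∈ ℬ' h)
    (hj : ∀ d ∈ 𝒟 b, Matrix.single j j d ∈ ℬ' h') : h = h' := by
  classical
  obtain ⟨d, hd, hd0⟩ := Submodule.exists_mem_ne_zero_of_ne_bot hb
  rcases eq_or_ne i j with rfl | hij
  · exact unique_deg hBg.2.2.1 (hi d hd) (hj d hd)
      (fun h0 => hd0 (std_eq_zero_iff.mp h0))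
  · obtain ⟨Sw, w, hw0, hwB, hwS, hwsum⟩ :=
      offdiag_comps hgrading hdiv hfc hBg hBref hij
    obtain ⟨Sw', w', hw0', hwB', hwS', hwsum'⟩ :=
      offdiag_comps hgrading hdiv hfc hBg hBref (Ne.symm hij)
    have hex : ∃ c ∈ Sw, w c ≠ 0 := by
      by_contra hc
      push_neg at hc
      rw [Finset.sum_eq_zero hc] at hwsum
      exact one_ne_zero (α := D) hwsum.symm
    have hex' : ∃ c ∈ Sw', w' c ≠ 0 := by
      by_contra hc
      push_neg at hc
      rw [Finset.sum_eq_zero hc] at hwsum'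
      exact one_ne_zero (α := D) hwsum'.symm
    obtain ⟨c₀, -, hv⟩ := hex
    obtain ⟨c₁, -, hv'⟩ := hex'
    have hvu : IsUnit (w c₀) := hdiv 0 (w c₀) (hw0 c₀) hv
    have hvu' : IsUnit (w' c₁) := hdiv 0 (w' c₁) (hw0' c₁) hv'
    -- the corner degree of 𝒟 0 at i is 0
    obtain ⟨h₀, hh₀⟩ := hcorner i 0 (D0_ne_bot hgrading)
    have hh₀0 : h₀ = 0 := unique_deg hBg.2.2.1 (hh₀ 1 hgrading.2.1)
      (std_one_mem_zero hk hgrading hdiv hfc hBg hBref i)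
      (fun h0 => one_ne_zero (α := D) (std_eq_zero_iff.mp h0))
    -- c₀ + c₁ = 0
    have hvv' : w c₀ * w' c₁ ∈ 𝒟 0 := by
      have := hgrading.1 0 0 _ (hw0 c₀) _ (hw0' c₁)
      rwa [add_zero] at this
    have hprod1 : Matrix.single i i (w c₀ * w' c₁) ∈ ℬ' (c₀ + c₁) := by
      have := hBg.1 c₀ c₁ _ (hwB c₀) _ (hwB' c₁)
      rwa [single_mul_single_same] at this
    have hprod2 : Matrix.single i i (w c₀ * w' c₁) ∈ ℬ' 0 := by
      rw [← hh₀0]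
      exact hh₀ _ hvv'
    have hcz : c₀ + c₁ = 0 := unique_deg hBg.2.2.1 hprod1 hprod2
      (fun h0 => (unit_mul_ne_zero hvu hvu'.ne_zero) (std_eq_zero_iff.mp h0))
    -- main computation
    have hvdv' : w c₀ * d * w' c₁ ∈ 𝒟 b := by
      have h1 := hgrading.1 0 b _ (hw0 c₀) _ hd
      have h2 := hgrading.1 (0 + b) 0 _ h1 _ (hw0' c₁)
      rwa [zero_add, add_zero] at h2
    have hx1 : Matrix.single i i (w c₀ * d * w' c₁) ∈ ℬ' (c₀ + h' + c₁) := by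
      have hm1 := hBg.1 c₀ h' _ (hwB c₀) _ (hj d hd)
      rw [single_mul_single_same] at hm1
      have hm2 := hBg.1 (c₀ + h') c₁ _ hm1 _ (hwB' c₁)
      rwa [single_mul_single_same] at hm2
    have hx2 : Matrix.single i i (w c₀ * d * w' c₁) ∈ ℬ' h := hi _ hvdv'
    have hne : Matrix.single i i (w c₀ * d * w' c₁) ≠ 0 := by
      intro h0
      have := std_eq_zero_iff.mp h0
      exact mul_unit_ne_zero hvu' (unit_mul_ne_zero hvu hd0) this
    have := unique_deg hBg.2.2.1 hx2 hx1 hne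
    rw [this, show c₀ + h' + c₁ = h' + (c₀ + c₁) by abel, hcz, add_zero]

theorem main_backward (hk : 0 < k) (hgrading : IsGrading 𝒟)
    (hdiv : ∀ a : G, ∀ d ∈ 𝒟 a, d ≠ 0 → IsUnit d)
    (hfc : ∀ i j h l : Fin k, i ≠ j → (i, j) ≠ (h, l) →
          𝒟 (g i - g j - (g h - g l)) = ⊥)
    (hDfine : IsFineGrading 𝒟) :
    IsFineGrading (MatGrading k g 𝒟) := by
  classical
  intro H _ ℬ' hBg hBref a hane
  have hΓg := matGrading_isGrading g hgrading
  have hcorner := corner_fine hk hgrading hdiv hfc hDfine hBg hBref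
  obtain ⟨M0, hM0, hM0ne⟩ := Submodule.exists_mem_ne_zero_of_ne_bot hane
  obtain ⟨p, q, hpq0⟩ := exists_entry_ne_zero hM0ne
  have hsupp : 𝒟 (-(g p) + a + g q) ≠ ⊥ := by
    intro h0
    have := hM0 p q
    rw [h0] at this
    exact hpq0 (by simpa using this)
  rcases eq_or_ne p q with rfl | hpq
  · -- diagonal type
    have ha' : 𝒟 a ≠ ⊥ := by
      have e : -(g p) + a + g p = a := by abel
      rwa [e] at hsupp
    obtain ⟨h0, hh0⟩ := hcorner p a ha'
    refine ⟨h0, fun M hM => ?_⟩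
    have hdiagbot := diag_type hgrading hdiv hfc ha'
    have hdiagM : ∀ p' q' : Fin k, p' ≠ q' → M p' q' = 0 := by
      intro p' q' hne
      have := hM p' q'
      rw [hdiagbot p' q' hne] at this
      simpa using this
    have hMdec : M = ∑ r : Fin k, Matrix.single r r (M r r) := diag_eq_sum_std hdiagM
    rw [hMdec]
    refine Submodule.sum_mem _ (fun r _ => ?_)
    obtain ⟨hr, hhr⟩ := hcorner r a ha'
    have heq : hr = h0 :=
      corner_deg_eq hk hgrading hdiv hfc hBg hBref hcorner ha' hhr hh0
    have hMrr : M r r ∈ 𝒟 a := by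
      have := hM r r
      have e : -(g r) + a + g r = a := by abel
      rwa [e] at this
    rw [← heq]
    exact hhr _ hMrr
  · -- off-diagonal type
    obtain ⟨Sw, w, hw0, hwB, hwS, hwsum⟩ :=
      offdiag_comps hgrading hdiv hfc hBg hBref hpq
    have hex : ∃ c ∈ Sw, w c ≠ 0 := by
      by_contra hc
      push_neg at hc
      rw [Finset.sum_eq_zero hc] at hwsum
      exact one_ne_zero (α := D) hwsum.symm
    obtain ⟨c₀, -, hv⟩ := hex
    have hvu : IsUnit (w c₀) := hdiv 0 (w c₀) (hw0 c₀) hv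
    obtain ⟨h1, hh1⟩ := hcorner p (-(g p) + a + g q) hsupp
    refine ⟨h1 + c₀, fun M hM => ?_⟩
    have hbotothers := offdiag_unique hgrading hdiv hfc hpq hsupp
    have hMstd : M = Matrix.single p q (M p q) := mem_off_eq_std hbotothers hM
    have hMpq : M p q ∈ 𝒟 (-(g p) + a + g q) := hM p q
    have hinv : (↑hvu.unit⁻¹ : D) ∈ 𝒟 0 := by
      have := inv_mem_neg hgrading (hw0 c₀) hvu
      rwa [neg_zero] at this
    have hdu : M p q * ↑hvu.unit⁻¹ ∈ 𝒟 (-(g p) + a + g q) := by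
      have := hgrading.1 _ 0 _ hMpq _ hinv
      rwa [add_zero] at this
    have hstd1 : Matrix.single p p (M p q * ↑hvu.unit⁻¹) ∈ ℬ' h1 := hh1 _ hdu
    have hfinal := hBg.1 h1 c₀ _ hstd1 _ (hwB c₀)
    rw [single_mul_single_same] at hfinal
    have hval : M p q * ↑hvu.unit⁻¹ * w c₀ = M p q := by
      rw [mul_assoc, hvu.val_inv_mul, mul_one]
    rw [hval] at hfinal
    rwa [hMstd]

end MainBwd

/-- Let `G` be an abelian group and `R = M_k(D)` a graded matrix algebra over a
`G`-graded-division algebra `D` (this is the general graded-simple algebra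
satisfying the DCC on graded left ideals).  The grading `Γ` on `R` is fine in the
class of abelian group gradings if and only if the degrees `g 1, …, g k` satisfy the
fine condition and the division grading `Γ₀` on `D` is fine in the class of abelian
group gradings. -/
theorem matrix_grading_fine_iff
    {G : Type} [AddCommGroup G] {F : Type} [Field F]
    {D : Type} [Ring D] [Algebra F D] [Nontrivial D]
    (k : ℕ) (hk : 0 < k) (g : Fin k → G) (𝒟 : G → Submodule F D)
    (hgrading : IsGrading 𝒟)
    (hdiv : ∀ a : G, ∀ d ∈ 𝒟 a, d ≠ 0 → IsUnit d) :
    IsFineGrading (MatGrading k g 𝒟) ↔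
      ((∀ i j h l : Fin k, i ≠ j → (i, j) ≠ (h, l) →
          𝒟 (g i - g j - (g h - g l)) = ⊥) ∧
        IsFineGrading 𝒟) := by
  constructor
  · intro hfine
    exact main_forward k hk g 𝒟 hgrading hfine
  · rintro ⟨hfc, hDfine⟩
    exact main_backward hk hgrading hdiv hfc hDfine
end

section
/- Let T be a finite abelian group, β : T × T → C^× a nondegenerate alternating bicharacter (rad β = {e}), and D a T-graded real algebra with one-dimensional complex components satisfying X_u X_v = β(u,v) X_v X_u for homogeneous X_u ∈ D_u, X_v ∈ D_v (a division grading of type (2-f) on M_n(C) viewed as a real algebra). If β ≠ β̄ (β is not real-valued), then every automorphism of D stabilizing the grading is inner, and the stabilizer of the grading is isomorphic to Hom(T, C^×) ≅ T. -/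
noncomputable def myInnerAut {R A : Type*} [CommSemiring R] [Ring A] [Algebra R A] (U : Aˣ) :
    A ≃ₐ[R] A where
  toFun x := U * x * ↑U⁻¹
  invFun x := ↑U⁻¹ * x * U
  left_inv x := by simp [mul_assoc]
  right_inv x := by simp [mul_assoc]
  map_mul' x y := by simp [mul_assoc]
  map_add' x y := by simp [mul_add, add_mul]
  commutes' r := by
    show (U : A) * algebraMap R A r * ↑U⁻¹ = algebraMap R A r
    rw [← Algebra.commutes r ((U : A)), mul_assoc, Units.mul_inv, mul_one]

noncomputable def dualEquiv (T : Type*) [AddCommGroup T] [Fintype T] :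
    (T →+ Additive ℂˣ) ≃+ T := by
  haveI : NeZero ((Monoid.exponent (Multiplicative T) : ℂ)) :=
    ⟨Nat.cast_ne_zero.mpr Monoid.exponent_ne_zero_of_finite⟩
  have m := (CommGroup.monoidHom_mulEquiv_of_hasEnoughRootsOfUnity (Multiplicative T) ℂ).some
  exact
  { toFun := fun χ => Multiplicative.toAdd (m (AddMonoidHom.toMultiplicativeLeft χ))
    invFun := fun t => AddMonoidHom.toMultiplicativeLeft.symm (m.symm (Multiplicative.ofAdd t))
    left_inv := fun χ => by simp
    right_inv := fun t => by simp
    map_add' := fun χ₁ χ₂ => by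
      have h : AddMonoidHom.toMultiplicativeLeft (χ₁ + χ₂) =
          AddMonoidHom.toMultiplicativeLeft χ₁ * AddMonoidHom.toMultiplicativeLeft χ₂ := by
        ext x; rfl
      show Multiplicative.toAdd (m (AddMonoidHom.toMultiplicativeLeft (χ₁ + χ₂))) = _
      rw [h, map_mul]; rfl }

set_option maxHeartbeats 1000000

/-- Let `T` be a finite abelian group, `β : T × T → ℂˣ` a nondegenerate alternating
bicharacter, and `𝒟` a division grading of type (2-f) on the real algebra `M_n(ℂ)`
with support `T`, two-dimensional components, identity component equal to the
center, and commutation relations `X_u X_v = β(u,v) X_v X_u`.  If `β ≠ β̄`, then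
every automorphism of the real algebra stabilizing the grading is inner, and the
stabilizer of the grading is isomorphic to `Hom(T, ℂˣ) ≅ T`. -/
theorem stabilizer_of_type2f_grading_beta_ne_conj
    {T : Type*} [AddCommGroup T] [Fintype T] (n : ℕ)
    (β : T → T → ℂˣ)
    (hβ₁ : ∀ u v w : T, β (u + v) w = β u w * β v w)
    (hβ₂ : ∀ u v w : T, β u (v + w) = β u v * β u w)
    (hβalt : ∀ u : T, β u u = 1)
    (hβnondeg : ∀ t : T, (∀ u : T, β u t = 1) → t = 0)
    (𝒟 : T → Submodule ℝ (Matrix (Fin n) (Fin n) ℂ))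
    (hmul : ∀ u v : T, ∀ x ∈ 𝒟 u, ∀ y ∈ 𝒟 v, x * y ∈ 𝒟 (u + v))
    (hone : (1 : Matrix (Fin n) (Fin n) ℂ) ∈ 𝒟 0)
    (hindep : iSupIndep 𝒟) (htop : (⨆ t, 𝒟 t) = ⊤)
    (hsupp : ∀ t : T, 𝒟 t ≠ ⊥)
    (hdim : ∀ t : T, Module.finrank ℝ (𝒟 t) = 2)
    (hcenter : (𝒟 0 : Set (Matrix (Fin n) (Fin n) ℂ)) =
      Set.center (Matrix (Fin n) (Fin n) ℂ))
    (hcomm : ∀ u v : T, ∀ X ∈ 𝒟 u, ∀ Y ∈ 𝒟 v,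
      X * Y = ((β u v : ℂ)) • (Y * X))
    (hne : ∃ u v : T, (β u v : ℂ) ≠ (starRingEnd ℂ) ((β u v : ℂ))) :
    (∀ ψ : Matrix (Fin n) (Fin n) ℂ ≃ₐ[ℝ] Matrix (Fin n) (Fin n) ℂ,
        (∀ t : T, ∀ x ∈ 𝒟 t, ψ x ∈ 𝒟 t) →
        ∃ U : (Matrix (Fin n) (Fin n) ℂ)ˣ, ∀ x, ψ x = (U : Matrix (Fin n) (Fin n) ℂ) * x * ((U⁻¹ : (Matrix (Fin n) (Fin n) ℂ)ˣ) : Matrix (Fin n) (Fin n) ℂ)) ∧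
    (∃ Φ : (T →+ Additive ℂˣ) →
        (Matrix (Fin n) (Fin n) ℂ ≃ₐ[ℝ] Matrix (Fin n) (Fin n) ℂ),
      (∀ χ₁ χ₂, Φ (χ₁ + χ₂) = Φ χ₁ * Φ χ₂) ∧
      Function.Injective Φ ∧
      (∀ χ, ∀ t : T, ∀ x ∈ 𝒟 t, (Φ χ) x ∈ 𝒟 t) ∧
      (∀ ψ : Matrix (Fin n) (Fin n) ℂ ≃ₐ[ℝ] Matrix (Fin n) (Fin n) ℂ,
        (∀ t : T, ∀ x ∈ 𝒟 t, ψ x ∈ 𝒟 t) → ∃ χ, Φ χ = ψ)) ∧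
    Nonempty ((T →+ Additive ℂˣ) ≃+ T) := by
  classical
  -- `n ≠ 0`
  haveI hne' : Nonempty (Fin n) := by
    rcases Nat.eq_zero_or_pos n with h | h
    · exact absurd (by subst h; exact Subsingleton.elim _ _) (hsupp 0)
    · exact ⟨⟨0, h⟩⟩
  -- basic bicharacter facts
  have hβ0 : ∀ t, β 0 t = 1 := by
    intro t
    have h := hβ₁ 0 0 t
    rw [add_zero] at h
    exact left_eq_mul.mp h
  have hβswap : ∀ u v, β u v * β v u = 1 := by
    intro u v
    have h := hβalt (u + v)
    rw [hβ₁ u v (u + v), hβ₂ u u v, hβ₂ v u v, hβalt u, hβalt v, one_mul, mul_one] at h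
    exact h
  have hβneg : ∀ u v, β (-u) v = (β u v)⁻¹ := by
    intro u v
    have h := hβ₁ u (-u) v
    rw [add_neg_cancel, hβ0] at h
    exact eq_inv_of_mul_eq_one_right h.symm
  have hndl : ∀ u : T, (∀ t : T, β u t = 1) → u = 0 := by
    intro u h
    refine hβnondeg u fun t => ?_
    have hs := hβswap u t
    rw [h t, one_mul] at hs
    exact hs
  -- scalar matrices lie in `𝒟 0`
  have hscal_mem : ∀ c : ℂ, c • (1 : Matrix (Fin n) (Fin n) ℂ) ∈ 𝒟 0 := by
    intro c
    have hc : c • (1 : Matrix (Fin n) (Fin n) ℂ) ∈ Set.center (Matrix (Fin n) (Fin n) ℂ) :=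
      Semigroup.mem_center_iff.mpr fun g => by
        rw [mul_smul_comm, smul_mul_assoc, mul_one, one_mul]
    show c • (1 : Matrix (Fin n) (Fin n) ℂ) ∈ (𝒟 0 : Set (Matrix (Fin n) (Fin n) ℂ))
    rw [hcenter]; exact hc
  have hCsmul : ∀ (t : T) (c : ℂ), ∀ x ∈ 𝒟 t, c • x ∈ 𝒟 t := by
    intro t c x hx
    have h := hmul 0 t _ (hscal_mem c) x hx
    rwa [zero_add, smul_mul_assoc, one_mul] at h
  -- `𝒟 0` consists of scalar matrices
  have h𝒟0 : ∀ x ∈ 𝒟 0, ∃ c : ℂ, x = c • (1 : Matrix (Fin n) (Fin n) ℂ) := by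
    intro x hx
    have hc : x ∈ Set.center (Matrix (Fin n) (Fin n) ℂ) := by
      rw [← hcenter]; exact hx
    have hcomm' : Pairwise fun i j => Commute (Matrix.single i j 1) x :=
      fun i j _ => Semigroup.mem_center_iff.mp hc _
    obtain ⟨c, hcx⟩ := Matrix.mem_range_scalar_of_commute_single hcomm'
    refine ⟨c, ?_⟩
    rw [← hcx]
    ext i j
    simp [Matrix.scalar_apply, Matrix.one_apply, Matrix.diagonal_apply]
  -- scalar cancellation
  have hcancel : ∀ (c d : ℂ) (x : Matrix (Fin n) (Fin n) ℂ), x ≠ 0 → c • x = d • x → c = d := by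
    intro c d x hx h
    by_contra hne''
    apply hx
    have h2 : (c - d) • x = 0 := by rw [sub_smul, h, sub_self]
    calc x = (c - d)⁻¹ • ((c - d) • x) := by
            rw [smul_smul, inv_mul_cancel₀ (sub_ne_zero.mpr hne''), one_smul]
      _ = 0 := by rw [h2, smul_zero]
  -- regularity of nonzero homogeneous elements
  have hreg : ∀ (v : T) (Y : Matrix (Fin n) (Fin n) ℂ), Y ∈ 𝒟 v → Y ≠ 0 →
      ∀ a : Matrix (Fin n) (Fin n) ℂ, a * Y = 0 → a = 0 := by
    intro v Y hY hY0 a ha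
    let I : TwoSidedIdeal (Matrix (Fin n) (Fin n) ℂ) :=
      TwoSidedIdeal.mk' {a | a * Y = 0}
        (by simp)
        (fun {x y} hx hy => by simp only [Set.mem_setOf_eq] at *; rw [add_mul, hx, hy, add_zero])
        (fun {x} hx => by simp only [Set.mem_setOf_eq] at *; rw [neg_mul, hx, neg_zero])
        (fun {x y} hy => by
          simp only [Set.mem_setOf_eq] at *; rw [mul_assoc, hy, mul_zero])
        (fun {x y} hx => by
          simp only [Set.mem_setOf_eq] at *
          have hy : y ∈ (⊤ : Submodule ℝ (Matrix (Fin n) (Fin n) ℂ)) := Submodule.mem_top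
          rw [← htop] at hy
          refine Submodule.iSup_induction (motive := fun y => x * y * Y = 0) 𝒟 hy ?_ ?_ ?_
          · intro t b hb
            rw [mul_assoc, hcomm t v b hb Y hY, mul_smul_comm, ← mul_assoc, hx,
              zero_mul, smul_zero]
          · show x * 0 * Y = 0
            rw [mul_zero, zero_mul]
          · intro y₁ y₂ h₁ h₂
            rw [mul_add, add_mul, h₁, h₂, add_zero])
    have haI : a ∈ I := by
      rw [TwoSidedIdeal.mem_mk']; exact ha
    have hIbot : I = ⊥ := by
      rcases eq_bot_or_eq_top I with h | h
      · exact h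
      · exfalso
        have h1 : (1 : Matrix (Fin n) (Fin n) ℂ) ∈ I := by rw [h]; trivial
        rw [TwoSidedIdeal.mem_mk'] at h1
        exact hY0 (by rw [← one_mul Y]; exact h1)
    rw [hIbot, TwoSidedIdeal.mem_bot] at haI
    exact haI
  -- nonzero homogeneous elements are invertible
  have hunit : ∀ (v : T) (Y : Matrix (Fin n) (Fin n) ℂ), Y ∈ 𝒟 v → Y ≠ 0 →
      ∃ U : (Matrix (Fin n) (Fin n) ℂ)ˣ, (U : Matrix (Fin n) (Fin n) ℂ) = Y := by
    intro v Y hY hY0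
    have hinj : Function.Injective (LinearMap.mulRight ℝ Y) := by
      intro a b h
      simp only [LinearMap.mulRight_apply] at h
      have : (a - b) * Y = 0 := by rw [sub_mul, h, sub_self]
      have := hreg v Y hY hY0 _ this
      exact sub_eq_zero.mp this
    have hsurj := LinearMap.injective_iff_surjective.mp hinj
    obtain ⟨Z, hZ⟩ := hsurj 1
    simp only [LinearMap.mulRight_apply] at hZ
    exact ⟨⟨Y, Z, mul_eq_one_comm.mp hZ, hZ⟩, rfl⟩
  -- choose nonzero homogeneous generators
  have hXex : ∀ t : T, ∃ x : Matrix (Fin n) (Fin n) ℂ, x ∈ 𝒟 t ∧ x ≠ 0 := fun t =>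
    Submodule.exists_mem_ne_zero_of_ne_bot (hsupp t)
  choose X hXmem hX0 using hXex
  choose Un hUn using fun u => hunit u (X u) (hXmem u) (hX0 u)
  -- every element of `𝒟 t` is a complex multiple of `X t`
  have hRC : ∀ (r : ℝ) (y : Matrix (Fin n) (Fin n) ℂ), ((r : ℂ)) • y = r • y := by
    intro r y
    ext i j
    simp [Matrix.smul_apply, Complex.real_smul]
  have hgen : ∀ t : T, ∀ y ∈ 𝒟 t, ∃ c : ℂ, y = c • X t := by
    intro t y hy
    let f : ℂ →ₗ[ℝ] (𝒟 t) :=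
      { toFun := fun c => ⟨c • X t, hCsmul t c _ (hXmem t)⟩
        map_add' := fun a b => by ext : 1; simp [add_smul]
        map_smul' := fun r c => by
          ext : 1
          show (r • c) • X t = r • (c • X t)
          rw [← hRC r (c • X t), smul_smul]
          norm_cast }
    have hinj : Function.Injective f := by
      intro a b h
      have h' : a • X t = b • X t := congrArg Subtype.val h
      exact hcancel a b (X t) (hX0 t) h'
    have hfin : Module.finrank ℝ ℂ = Module.finrank ℝ (𝒟 t) := by
      rw [Complex.finrank_real_complex, hdim t]
    have hsurj := (LinearMap.injective_iff_surjective_of_finrank_eq_finrank hfin).mp hinj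
    obtain ⟨c, hc⟩ := hsurj ⟨y, hy⟩
    exact ⟨c, (congrArg Subtype.val hc).symm⟩
  -- conjugation by `X u` acts on `𝒟 t` by `β u t`
  have hconj : ∀ (u t : T), ∀ x ∈ 𝒟 t,
      (Un u : Matrix (Fin n) (Fin n) ℂ) * x * ((Un u)⁻¹ : (Matrix (Fin n) (Fin n) ℂ)ˣ) =
        (β u t : ℂ) • x := by
    intro u t x hx
    have h := hcomm u t (X u) (hXmem u) x hx
    rw [← hUn u] at h
    calc (Un u : Matrix (Fin n) (Fin n) ℂ) * x * ((Un u)⁻¹ : (Matrix (Fin n) (Fin n) ℂ)ˣ)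
        = ((β u t : ℂ) • (x * (Un u : Matrix (Fin n) (Fin n) ℂ))) * ((Un u)⁻¹ : (Matrix (Fin n) (Fin n) ℂ)ˣ) := by rw [h]
      _ = (β u t : ℂ) • (x * ((Un u : Matrix (Fin n) (Fin n) ℂ) * ((Un u)⁻¹ : (Matrix (Fin n) (Fin n) ℂ)ˣ))) := by
          rw [smul_mul_assoc, mul_assoc]
      _ = (β u t : ℂ) • x := by rw [Units.mul_inv, mul_one]
  -- real/imaginary decomposition of a complex scalar action
  have hdecomp : ∀ (c : ℂ) (y : Matrix (Fin n) (Fin n) ℂ),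
      c • y = (c.re : ℝ) • y + c.im • (Complex.I • y) := by
    intro c y
    rw [← hRC c.re y, ← hRC c.im (Complex.I • y), smul_smul, ← add_smul, Complex.re_add_im]
  -- the duality equivalence
  let dE : (T →+ Additive ℂˣ) ≃+ T := dualEquiv T
  -- `eMap u` is the character `t ↦ β u t`
  let eMap : T →+ (T →+ Additive ℂˣ) :=
    AddMonoidHom.mk'
      (fun u => AddMonoidHom.mk' (fun t => Additive.ofMul (β u t))
        (fun t s => by show Additive.ofMul (β u (t + s)) = Additive.ofMul (β u t * β u s)
                       rw [hβ₂]))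
      (fun u v => by
        ext t : 1
        show Additive.ofMul (β (u + v) t) = Additive.ofMul (β u t * β v t)
        rw [hβ₁])
  have heinj : Function.Injective eMap := by
    intro u v huv
    have h : ∀ t, β u t = β v t := fun t =>
      congrArg (fun χ : T →+ Additive ℂˣ => Additive.toMul (χ t)) huv
    have h2 : ∀ t, β (u + -v) t = 1 := by
      intro t
      rw [hβ₁, hβneg, h t, mul_inv_cancel]
    have := hndl _ h2
    rw [← sub_eq_add_neg] at this
    exact sub_eq_zero.mp this
  haveI : Finite (T →+ Additive ℂˣ) := Finite.of_equiv T dE.symm.toEquiv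
  have hebij : Function.Bijective eMap :=
    (Nat.bijective_iff_injective_and_card eMap).mpr
      ⟨heinj, (Nat.card_congr dE.toEquiv).symm⟩
  let E : T ≃+ (T →+ Additive ℂˣ) := AddEquiv.ofBijective eMap hebij
  -- key step: every grading-stabilizing automorphism is conjugation by some `X u`
  have hkey : ∀ ψ : Matrix (Fin n) (Fin n) ℂ ≃ₐ[ℝ] Matrix (Fin n) (Fin n) ℂ,
      (∀ t : T, ∀ x ∈ 𝒟 t, ψ x ∈ 𝒟 t) →
      ∃ u : T, ∀ x, ψ x = (Un u : Matrix (Fin n) (Fin n) ℂ) * x *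
        ((Un u)⁻¹ : (Matrix (Fin n) (Fin n) ℂ)ˣ) := by
    intro ψ hstab
    obtain ⟨z, hz⟩ := h𝒟0 _ (hstab 0 _ (hscal_mem Complex.I))
    have hsq : (Complex.I • (1 : Matrix (Fin n) (Fin n) ℂ)) * (Complex.I • 1) = -1 := by
      rw [smul_mul_assoc, mul_smul_comm, one_mul, smul_smul, Complex.I_mul_I, neg_smul, one_smul]
    have hone_ne : (1 : Matrix (Fin n) (Fin n) ℂ) ≠ 0 := one_ne_zero
    have hz2 : z * z = -1 := by
      have h := map_mul ψ (Complex.I • (1 : Matrix (Fin n) (Fin n) ℂ)) (Complex.I • 1)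
      rw [hsq, hz, map_neg, map_one, smul_mul_assoc, mul_smul_comm, smul_smul, one_mul] at h
      have h' : (-1 : ℂ) • (1 : Matrix (Fin n) (Fin n) ℂ) = (z * z) • 1 := by
        rw [neg_smul, one_smul]; exact h
      exact (hcancel _ _ _ hone_ne h').symm
    have hz_or : z = Complex.I ∨ z = -Complex.I := by
      have hfac : (z - Complex.I) * (z + Complex.I) = 0 := by
        linear_combination hz2 - Complex.I_sq
      rcases mul_eq_zero.mp hfac with h | h
      · exact Or.inl (sub_eq_zero.mp h)
      · exact Or.inr (eq_neg_of_add_eq_zero_left h)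
    -- ψ of a complex scalar
    have hψscal : ψ (Complex.I • (1 : Matrix (Fin n) (Fin n) ℂ)) = z • 1 := hz
    have hψc : ∀ c : ℂ, ψ (c • (1 : Matrix (Fin n) (Fin n) ℂ)) =
        ((c.re : ℂ) + (c.im : ℂ) * z) • 1 := by
      intro c
      rw [hdecomp c 1, map_add, map_smul, map_smul, map_one, hψscal,
        ← hRC c.re, ← hRC c.im, smul_smul, ← add_smul]
    have hmul_scal : ∀ (c : ℂ) (x : Matrix (Fin n) (Fin n) ℂ),
        ψ (c • x) = ψ (c • (1 : Matrix (Fin n) (Fin n) ℂ)) * ψ x := by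
      intro c x
      rw [← map_mul, smul_mul_assoc, one_mul]
    rcases hz_or with hzI | hzneg
    · -- ℂ-linear case
      have hlin : ∀ (c : ℂ) (x : Matrix (Fin n) (Fin n) ℂ), ψ (c • x) = c • ψ x := by
        intro c x
        rw [hmul_scal, hψc, hzI, Complex.re_add_im, smul_mul_assoc, one_mul]
      -- scalar action of ψ on each component
      have hact : ∀ t : T, ∃ c : ℂˣ, ∀ x ∈ 𝒟 t, ψ x = (c : ℂ) • x := by
        intro t
        obtain ⟨c, hc⟩ := hgen t (ψ (X t)) (hstab t _ (hXmem t))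
        have hc0 : c ≠ 0 := by
          intro h0
          apply hX0 t
          apply ψ.injective
          rw [hc, h0, zero_smul, map_zero]
        refine ⟨Units.mk0 c hc0, ?_⟩
        intro x hx
        obtain ⟨d, hd⟩ := hgen t x hx
        rw [hd, hlin, hc, smul_smul, smul_smul, mul_comm]
        rfl
      choose cf hcf using hact
      have hmul_c : ∀ t s : T, cf (t + s) = cf t * cf s := by
        intro t s
        have h1 : ψ (X t * X s) = ((cf (t + s) : ℂ)) • (X t * X s) :=
          hcf (t + s) _ (hmul t s _ (hXmem t) _ (hXmem s))
        have h2 : ψ (X t * X s) = ((cf t : ℂ) * (cf s : ℂ)) • (X t * X s) := by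
          rw [map_mul, hcf t _ (hXmem t), hcf s _ (hXmem s), smul_mul_assoc,
            mul_smul_comm, smul_smul]
        have hts0 : X t * X s ≠ 0 := fun h =>
          hX0 t (hreg s _ (hXmem s) (hX0 s) _ h)
        have heq := hcancel _ _ _ hts0 (h1.symm.trans h2)
        exact Units.ext (by push_cast; exact heq)
      let χ : T →+ Additive ℂˣ := AddMonoidHom.mk' (fun t => Additive.ofMul (cf t))
        (fun t s => by
          show Additive.ofMul (cf (t + s)) = Additive.ofMul (cf t * cf s)
          rw [hmul_c])
      obtain ⟨u, hu⟩ := hebij.2 χ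
      refine ⟨u, ?_⟩
      have hbu : ∀ t, (β u t : ℂ) = (cf t : ℂ) := by
        intro t
        have h := congrArg (fun χ' : T →+ Additive ℂˣ => ((Additive.toMul (χ' t) : ℂˣ) : ℂ)) hu
        exact h
      intro x
      have hx : x ∈ (⨆ t, 𝒟 t) := htop.symm ▸ Submodule.mem_top
      refine Submodule.iSup_induction
        (motive := fun y => ψ y = (Un u : Matrix (Fin n) (Fin n) ℂ) * y *
          ((Un u)⁻¹ : (Matrix (Fin n) (Fin n) ℂ)ˣ)) 𝒟 hx ?_ ?_ ?_
      · intro t y hy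
        rw [hconj u t y hy, hcf t y hy, hbu t]
      · show ψ 0 = _ * (0 : Matrix (Fin n) (Fin n) ℂ) * _
        rw [map_zero, mul_zero, zero_mul]
      · intro a b ha hb
        show ψ (a + b) = _
        rw [map_add, ha, hb, mul_add, add_mul]
    · -- antilinear case: contradiction
      exfalso
      have hanti : ∀ (c : ℂ) (x : Matrix (Fin n) (Fin n) ℂ),
          ψ (c • x) = (starRingEnd ℂ c) • ψ x := by
        intro c x
        rw [hmul_scal, hψc, hzneg]
        have : (c.re : ℂ) + (c.im : ℂ) * -Complex.I = starRingEnd ℂ c := by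
          apply Complex.ext <;> simp
        rw [this, smul_mul_assoc, one_mul]
      obtain ⟨u, v, hb⟩ := hne
      have hXu := hstab u (X u) (hXmem u)
      have hXv := hstab v (X v) (hXmem v)
      have h1 : ψ (X u) * ψ (X v) = (β u v : ℂ) • (ψ (X v) * ψ (X u)) :=
        hcomm u v _ hXu _ hXv
      have h2 : ψ (X u) * ψ (X v) = (starRingEnd ℂ ((β u v : ℂ))) • (ψ (X v) * ψ (X u)) := by
        rw [← map_mul, hcomm u v (X u) (hXmem u) (X v) (hXmem v), hanti, map_mul]
      have hψXu0 : ψ (X u) ≠ 0 := fun h =>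
        hX0 u (ψ.injective (by rw [h, map_zero]))
      have hψXv0 : ψ (X v) ≠ 0 := fun h =>
        hX0 v (ψ.injective (by rw [h, map_zero]))
      have hw0 : ψ (X v) * ψ (X u) ≠ 0 := fun h0 =>
        hψXv0 (hreg u (ψ (X u)) hXu hψXu0 _ h0)
      exact hb (hcancel _ _ _ hw0 (h1.symm.trans h2))
  -- assemble the three parts
  refine ⟨?_, ?_, ⟨dE⟩⟩
  · intro ψ hstab
    obtain ⟨u, hu⟩ := hkey ψ hstab
    exact ⟨Un u, hu⟩
  · refine ⟨fun χ => myInnerAut (R := ℝ) (Un (E.symm χ)), ?_, ?_, ?_, ?_⟩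
    · -- multiplicativity
      intro χ₁ χ₂
      apply AlgEquiv.ext
      intro x
      have hx : x ∈ (⨆ t, 𝒟 t) := htop.symm ▸ Submodule.mem_top
      rw [AlgEquiv.mul_apply]
      refine Submodule.iSup_induction
        (motive := fun y => myInnerAut (R := ℝ) (Un (E.symm (χ₁ + χ₂))) y =
          myInnerAut (R := ℝ) (Un (E.symm χ₁)) (myInnerAut (R := ℝ) (Un (E.symm χ₂)) y)) 𝒟 hx ?_ ?_ ?_
      · intro t y hy
        show (Un (E.symm (χ₁ + χ₂)) : Matrix (Fin n) (Fin n) ℂ) * y * _ =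
          myInnerAut (R := ℝ) (Un (E.symm χ₁)) (myInnerAut (R := ℝ) (Un (E.symm χ₂)) y)
        have h2 : myInnerAut (R := ℝ) (Un (E.symm χ₂)) y = (β (E.symm χ₂) t : ℂ) • y :=
          hconj (E.symm χ₂) t y hy
        have hmem2 : (β (E.symm χ₂) t : ℂ) • y ∈ 𝒟 t := hCsmul t _ y hy
        have h1 : myInnerAut (R := ℝ) (Un (E.symm χ₁)) ((β (E.symm χ₂) t : ℂ) • y) =
            (β (E.symm χ₁) t : ℂ) • ((β (E.symm χ₂) t : ℂ) • y) :=
          hconj (E.symm χ₁) t _ hmem2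
        rw [h2, h1]
        have h0 : myInnerAut (R := ℝ) (Un (E.symm (χ₁ + χ₂))) y = (β (E.symm (χ₁ + χ₂)) t : ℂ) • y :=
          hconj (E.symm (χ₁ + χ₂)) t y hy
        have hsum : E.symm (χ₁ + χ₂) = E.symm χ₁ + E.symm χ₂ := map_add E.symm χ₁ χ₂
        rw [show (Un (E.symm (χ₁ + χ₂)) : Matrix (Fin n) (Fin n) ℂ) * y *
            ((Un (E.symm (χ₁ + χ₂)))⁻¹ : (Matrix (Fin n) (Fin n) ℂ)ˣ) =
            myInnerAut (R := ℝ) (Un (E.symm (χ₁ + χ₂))) y from rfl, h0, hsum, hβ₁,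
          smul_smul, Units.val_mul]
      · show myInnerAut (R := ℝ) (Un (E.symm (χ₁ + χ₂))) 0 =
          myInnerAut (R := ℝ) (Un (E.symm χ₁)) (myInnerAut (R := ℝ) (Un (E.symm χ₂)) 0)
        rw [map_zero, map_zero, map_zero]
      · intro a b ha hb
        show myInnerAut (R := ℝ) (Un (E.symm (χ₁ + χ₂))) (a + b) =
          myInnerAut (R := ℝ) (Un (E.symm χ₁)) (myInnerAut (R := ℝ) (Un (E.symm χ₂)) (a + b))
        rw [map_add, ha, hb, map_add, map_add]
    · -- injectivity
      intro χ₁ χ₂ h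
      have hbt : ∀ t, β (E.symm χ₁) t = β (E.symm χ₂) t := by
        intro t
        have h1 := congrArg (fun φ : Matrix (Fin n) (Fin n) ℂ ≃ₐ[ℝ] Matrix (Fin n) (Fin n) ℂ =>
          φ (X t)) h
        simp only at h1
        rw [show myInnerAut (R := ℝ) (Un (E.symm χ₁)) (X t) = _ from hconj (E.symm χ₁) t _ (hXmem t),
          show myInnerAut (R := ℝ) (Un (E.symm χ₂)) (X t) = _ from hconj (E.symm χ₂) t _ (hXmem t)] at h1
        exact Units.ext (hcancel _ _ _ (hX0 t) h1)
      have h2 : ∀ t, β (E.symm χ₁ + -(E.symm χ₂)) t = 1 := by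
        intro t
        rw [hβ₁, hβneg, hbt t, mul_inv_cancel]
      have h3 := hndl _ h2
      rw [← sub_eq_add_neg, sub_eq_zero] at h3
      exact E.symm.injective h3
    · -- stabilizes the grading
      intro χ t x hx
      show (Un (E.symm χ) : Matrix (Fin n) (Fin n) ℂ) * x * _ ∈ 𝒟 t
      rw [hconj (E.symm χ) t x hx]
      exact hCsmul t _ x hx
    · -- surjectivity onto the stabilizer
      intro ψ hstab
      obtain ⟨u, hu⟩ := hkey ψ hstab
      refine ⟨E u, ?_⟩
      apply AlgEquiv.ext
      intro x
      show (Un (E.symm (E u)) : Matrix (Fin n) (Fin n) ℂ) * x * _ = ψ x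
      rw [AddEquiv.symm_apply_apply]
      exact (hu x).symm
end

section
/- Let D be a finite-dimensional simple real associative algebra with a division G-grading Γ_0 of type (1-d), i.e. all homogeneous components are one-dimensional and the support T is not an elementary abelian 2-group. Then every automorphism of D stabilizing the grading is inner, and the stabilizer is isomorphic to Hom(T, {±1}) ≅ T / T^[2], where T^[2] = {t² : t ∈ T}. -/
open Module

/-- The doubling homomorphism `t ↦ t + t` of an abelian group; its range is
`T^[2] = {t² : t ∈ T}` (written additively). -/
def doublingHom (A : Type*) [AddCommGroup A] : A →+ A where
  toFun t := t + t
  map_zero' := by simp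
  map_add' a b := by abel_nf

/-- A real number whose `n`-th power is `1` (with `n > 0`) is `±1`. -/
lemma real_pm {c : ℝ} {n : ℕ} (hn : 0 < n) (h : c ^ n = 1) : c = 1 ∨ c = -1 := by
  have habs : |c| = 1 := by
    rcases lt_trichotomy |c| 1 with hl | he | hg
    · have := pow_lt_one₀ (abs_nonneg c) hl hn.ne'
      rw [← abs_pow, h] at this; simp at this
    · exact he
    · have := one_lt_pow₀ hg hn.ne'
      rw [← abs_pow, h] at this; simp at this
  rcases (abs_eq (by norm_num : (0:ℝ) ≤ 1)).mp habs with h1 | h1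
  · exact Or.inl h1
  · exact Or.inr h1

/-- The sign map `ℝ → ZMod 2` (1 for negative, 0 otherwise). -/
noncomputable def homNeg (c : ℝ) : ZMod 2 := if c < 0 then 1 else 0

lemma homNeg_mul {a b : ℝ} (ha : a ≠ 0) (hb : b ≠ 0) :
    homNeg (a * b) = homNeg a + homNeg b := by
  unfold homNeg
  rcases lt_or_gt_of_ne ha with h1 | h1 <;> rcases lt_or_gt_of_ne hb with h2 | h2
  · rw [if_neg (not_lt.mpr (mul_pos_of_neg_of_neg h1 h2).le), if_pos h1, if_pos h2]; decide
  · rw [if_pos (mul_neg_of_neg_of_pos h1 h2), if_pos h1, if_neg (not_lt.mpr h2.le)]; decide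
  · rw [if_pos (mul_neg_of_pos_of_neg h1 h2), if_neg (not_lt.mpr h1.le), if_pos h2]; decide
  · rw [if_neg (not_lt.mpr (mul_pos h1 h2).le), if_neg (not_lt.mpr h1.le),
      if_neg (not_lt.mpr h2.le), add_zero]

lemma homNeg_one : homNeg 1 = 0 := by norm_num [homNeg]

lemma homNeg_eq_iff {a b : ℝ} (ha : a = 1 ∨ a = -1) (hb : b = 1 ∨ b = -1)
    (h : homNeg a = homNeg b) : a = b := by
  unfold homNeg at h
  rcases ha with rfl | rfl <;> rcases hb with rfl | rfl <;> revert h <;> norm_num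

lemma homNeg_eq_zero_iff {a : ℝ} (ha : a = 1 ∨ a = -1) : homNeg a = 0 ↔ a = 1 := by
  constructor
  · intro h; exact homNeg_eq_iff ha (Or.inl rfl) (h.trans homNeg_one.symm)
  · rintro rfl; exact homNeg_one

/-- `ZMod 2 → ℝˣ`, sending `0 ↦ 1` and `1 ↦ -1`. -/
noncomputable def e2 (j : ZMod 2) : ℝˣ := if j = 0 then 1 else -1

lemma e2_add (i j : ZMod 2) : e2 (i + j) = e2 i * e2 j := by
  have h : ∀ k : ZMod 2, k = 0 ∨ k = 1 := by decide
  rcases h i with rfl | rfl <;> rcases h j with rfl | rfl <;>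
    simp [e2] <;> decide

lemma homNeg_e2 (j : ZMod 2) : homNeg ((e2 j : ℝˣ) : ℝ) = j := by
  have h : ∀ k : ZMod 2, k = 0 ∨ k = 1 := by decide
  rcases h j with rfl | rfl <;> norm_num [e2, homNeg]

set_option maxHeartbeats 2000000 in
/-- Let `D` be a finite-dimensional simple real associative algebra with a division
`G`-grading `Γ₀` of type (1-d): all homogeneous components are one-dimensional and
the support `T` is not an elementary abelian 2-group.  Then every automorphism of
`D` stabilizing the grading is inner, and the stabilizer is isomorphic to
`Hom(T, {±1}) ≅ T / T^[2]`. -/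
theorem stabilizer_of_type1d_grading
    {G : Type*} [AddCommGroup G]
    {D : Type*} [Ring D] [Algebra ℝ D] [FiniteDimensional ℝ D] [Nontrivial D]
    (hsimple : ∀ I : TwoSidedIdeal D, I = ⊥ ∨ I = ⊤)
    (𝒟 : G → Submodule ℝ D)
    (hmul : ∀ a b : G, ∀ x ∈ 𝒟 a, ∀ y ∈ 𝒟 b, x * y ∈ 𝒟 (a + b))
    (hone : (1 : D) ∈ 𝒟 0)
    (hindep : iSupIndep 𝒟) (htop : (⨆ a, 𝒟 a) = ⊤)
    (T : AddSubgroup G) (hT : ∀ a : G, 𝒟 a ≠ ⊥ ↔ a ∈ T)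
    (hdim : ∀ a ∈ T, Module.finrank ℝ (𝒟 a) = 1)
    (hdiv : ∀ a : G, ∀ d ∈ 𝒟 a, d ≠ 0 → IsUnit d)
    (hnot2 : ∃ t ∈ T, t + t ≠ 0) :
    (∀ ψ : D ≃ₐ[ℝ] D, (∀ a : G, ∀ x ∈ 𝒟 a, ψ x ∈ 𝒟 a) →
        ∃ U : Dˣ, ∀ x : D, ψ x = (U : D) * x * ((U⁻¹ : Dˣ) : D)) ∧
    (∃ Φ : (T →+ Additive ℝˣ) → (D ≃ₐ[ℝ] D),
      (∀ χ₁ χ₂, Φ (χ₁ + χ₂) = Φ χ₁ * Φ χ₂) ∧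
      Function.Injective Φ ∧
      (∀ χ, ∀ a : G, ∀ x ∈ 𝒟 a, (Φ χ) x ∈ 𝒟 a) ∧
      (∀ ψ : D ≃ₐ[ℝ] D, (∀ a : G, ∀ x ∈ 𝒟 a, ψ x ∈ 𝒟 a) → ∃ χ, Φ χ = ψ)) ∧
    Nonempty ((T →+ Additive ℝˣ) ≃+ (T ⧸ (doublingHom T).range)) := by
  classical
  -- cancellation of scalars on a nonzero vector
  have hsm : ∀ (c c' : ℝ) (w : D), w ≠ 0 → c • w = c' • w → c = c' := by
    intro c c' w hw h
    by_contra hne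
    have h0 : (c - c') • w = 0 := by rw [sub_smul, h, sub_self]
    rcases smul_eq_zero.mp h0 with h1 | h1
    · exact hne (sub_eq_zero.mp h1)
    · exact hw h1
  -- choose nonzero homogeneous elements
  have hne : ∀ t : T, ∃ x ∈ 𝒟 (t : G), x ≠ 0 := fun t =>
    Submodule.exists_mem_ne_zero_of_ne_bot ((hT t).mpr t.2)
  choose v hv hvne using hne
  have hvu : ∀ t : T, IsUnit (v t) := fun t => hdiv t (v t) (hv t) (hvne t)
  have hspan : ∀ t : T, 𝒟 (t : G) = ℝ ∙ (v t) := by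
    intro t
    refine (Submodule.eq_of_le_of_finrank_le ?_ ?_).symm
    · rw [Submodule.span_singleton_le_iff_mem]; exact hv t
    · rw [hdim t t.2, finrank_span_singleton (hvne t)]
  have hmem : ∀ (t : T) (x : D), x ∈ 𝒟 (t : G) → ∃ c : ℝ, x = c • v t := by
    intro t x hx
    rw [hspan t] at hx
    obtain ⟨c, hc⟩ := Submodule.mem_span_singleton.mp hx
    exact ⟨c, hc.symm⟩
  have hempty : ∀ a : G, a ∉ T → 𝒟 a = ⊥ := by
    intro a ha; by_contra h; exact ha ((hT a).mp h)
  -- T is finite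
  have hTind : iSupIndep (fun t : T => 𝒟 (t : G)) := hindep.comp Subtype.val_injective
  have hli : LinearIndependent ℝ v :=
    iSupIndep.linearIndependent (fun t : T => 𝒟 (t : G)) hTind hv hvne
  haveI : Finite T := hli.finite
  -- the identity component
  have hD0 : 𝒟 (0 : G) = ℝ ∙ (1 : D) := by
    refine (Submodule.eq_of_le_of_finrank_le ?_ ?_).symm
    · rw [Submodule.span_singleton_le_iff_mem]; exact hone
    · rw [hdim 0 T.zero_mem, finrank_span_singleton (one_ne_zero : (1:D) ≠ 0)]
  -- structure constants
  have hprod : ∀ s t : T, ∃ c : ℝ, v s * v t = c • v (s + t) := by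
    intro s t
    have h0 : v s * v t ∈ 𝒟 ((s : G) + t) := hmul _ _ _ (hv s) _ (hv t)
    exact hmem (s + t) _ h0
  choose σ hσ using hprod
  have hprodne : ∀ s t : T, v s * v t ≠ 0 := fun s t => ((hvu s).mul (hvu t)).ne_zero
  have hσne : ∀ s t : T, σ s t ≠ 0 := by
    intro s t h
    exact hprodne s t (by rw [hσ s t, h, zero_smul])
  -- the commutation factor β
  set β : T → T → ℝ := fun s t => σ s t / σ t s with hβdef
  have hβ : ∀ s t : T, v s * v t = β s t • (v t * v s) := by
    intro s t
    rw [hσ s t, hσ t s, add_comm t s, smul_smul, hβdef]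
    rw [div_mul_cancel₀ _ (hσne t s)]
  have hβne : ∀ s t : T, β s t ≠ 0 := fun s t => div_ne_zero (hσne s t) (hσne t s)
  have hβuniq : ∀ (s t : T) (c : ℝ), v s * v t = c • (v t * v s) → c = β s t := by
    intro s t c hc
    exact hsm _ _ _ (hprodne t s) (hc.symm.trans (hβ s t))
  have hβsymm : ∀ s t : T, β s t * β t s = 1 := by
    intro s t
    rw [hβdef]
    rw [div_mul_div_comm, mul_comm (σ s t)]
    exact div_self (mul_ne_zero (hσne t s) (hσne s t))
  -- β is multiplicative in the first argument
  have hβadd1 : ∀ s s' t : T, β (s + s') t = β s t * β s' t := by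
    intro s s' t
    have h0 : v (s + s') = (σ s s')⁻¹ • (v s * v s') := by
      rw [hσ s s', smul_smul, inv_mul_cancel₀ (hσne s s'), one_smul]
    have e1 : (v s * v s') * v t = (β s' t * β s t) • (v t * (v s * v s')) := by
      rw [mul_assoc, hβ s' t, mul_smul_comm, ← mul_assoc, hβ s t, smul_mul_assoc,
        smul_smul, mul_assoc]
    have e2 : v (s + s') * v t = (β s' t * β s t) • (v t * v (s + s')) := by
      rw [h0, smul_mul_assoc, e1, mul_smul_comm, smul_comm]
    rw [← hβuniq _ _ _ e2, mul_comm]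
  have hβ0 : ∀ t : T, β 0 t = 1 := by
    intro t
    obtain ⟨c, hc⟩ : ∃ c : ℝ, v 0 = c • (1 : D) := by
      have h0 : v 0 ∈ ℝ ∙ (1 : D) := by rw [← hD0]; exact hv 0
      obtain ⟨c, hc⟩ := Submodule.mem_span_singleton.mp h0
      exact ⟨c, hc.symm⟩
    refine (hβuniq 0 t 1 ?_).symm
    rw [one_smul, hc, smul_mul_assoc, mul_smul_comm, one_mul, mul_one]
  have hβpow : ∀ (n : ℕ) (s t : T), β (n • s) t = β s t ^ n := by
    intro n s t
    induction n with
    | zero => rw [zero_smul, hβ0, pow_zero]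
    | succ n ih => rw [succ_nsmul, hβadd1, ih, pow_succ]
  have hβpm : ∀ s t : T, β s t = 1 ∨ β s t = -1 := by
    intro s t
    have hn : 0 < addOrderOf s := addOrderOf_pos s
    have h0 : β s t ^ addOrderOf s = 1 := by
      rw [← hβpow, addOrderOf_nsmul_eq_zero, hβ0]
    exact real_pm hn h0
  have hβdouble1 : ∀ s t : T, β (s + s) t = 1 := by
    intro s t
    rw [hβadd1]
    rcases hβpm s t with h | h <;> rw [h] <;> norm_num
  have hβadd2 : ∀ s t t' : T, β s (t + t') = β s t * β s t' := by
    intro s t t'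
    have h1 : β s (t + t') * (β t s * β t' s) = 1 := by
      rw [← hβadd1 t t' s]; exact hβsymm s (t + t')
    have h2 : (β s t * β s t') * (β t s * β t' s) = 1 := by
      rw [mul_mul_mul_comm, hβsymm s t, hβsymm s t', one_mul]
    have h3 : β t s * β t' s ≠ 0 := mul_ne_zero (hβne t s) (hβne t' s)
    exact mul_right_cancel₀ h3 (h1.trans h2.symm)
  have hβdouble2 : ∀ s t : T, β s (t + t) = 1 := by
    intro s t
    rw [hβadd2]
    rcases hβpm s t with h | h <;> rw [h] <;> norm_num
  -- centrality of radical elements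
  have hcentral : ∀ s : T, (∀ t : T, β s t = 1) → ∀ y : D, y * v s = v s * y := by
    intro s hs y
    have hhom : ∀ a : G, ∀ x ∈ 𝒟 a, x * v s = v s * x := by
      intro a x hx
      by_cases haT : a ∈ T
      · obtain ⟨c, rfl⟩ := hmem ⟨a, haT⟩ x hx
        have h0 : v s * v ⟨a, haT⟩ = v ⟨a, haT⟩ * v s := by
          rw [hβ s ⟨a, haT⟩, hs ⟨a, haT⟩, one_smul]
        rw [smul_mul_assoc, mul_smul_comm, h0]
      · rw [hempty a haT] at hx
        rw [Submodule.mem_bot] at hx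
        subst hx
        rw [zero_mul, mul_zero]
    have hle : (⊤ : Submodule ℝ D) ≤
        LinearMap.eqLocus (LinearMap.mulRight ℝ (v s)) (LinearMap.mulLeft ℝ (v s)) := by
      rw [← htop]
      exact iSup_le fun a x hx => hhom a x hx
    exact hle Submodule.mem_top
  -- extension of equalities of linear maps from homogeneous elements
  have hext : ∀ f g : D →ₗ[ℝ] D, (∀ a : G, ∀ x ∈ 𝒟 a, f x = g x) → ∀ x, f x = g x := by
    intro f g h x
    have hle : (⊤ : Submodule ℝ D) ≤ LinearMap.eqLocus f g := by
      rw [← htop]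
      exact iSup_le fun a y hy => h a y hy
    exact hle Submodule.mem_top
  -- the center has dimension at most 2
  haveI : IsSimpleRing D := ⟨⟨fun I => hsimple I⟩⟩
  have hfin2 : finrank ℝ (Subalgebra.center ℝ D) ≤ 2 := by
    set Z := Subalgebra.center ℝ D
    have hZfield : IsField Z := by
      obtain ⟨h1, h2, h3⟩ := IsSimpleRing.isField_center D
      refine ⟨h1, mul_comm, ?_⟩
      rintro ⟨a, ha⟩ hne
      have ha' : a ∈ Subring.center D := by
        rw [Subring.mem_center_iff]
        exact fun g => Subalgebra.mem_center_iff.mp ha g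
      obtain ⟨⟨b, hb⟩, hab⟩ := h3 (a := ⟨a, ha'⟩)
        (by simpa using fun h => hne (Subtype.ext (by simpa using h)))
      refine ⟨⟨b, Subalgebra.mem_center_iff.mpr fun g => Subring.mem_center_iff.mp hb g⟩, ?_⟩
      exact Subtype.ext (congrArg Subtype.val hab)
    letI : Field Z := hZfield.toField
    haveI : Algebra.IsAlgebraic ℝ Z := Algebra.IsAlgebraic.of_finite ℝ Z
    let f : Z →ₐ[ℝ] ℂ := IsAlgClosed.lift
    have hinj : Function.Injective f := by
      rw [injective_iff_map_eq_zero]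
      intro a ha
      by_contra hne
      obtain ⟨b, hb⟩ := hZfield.mul_inv_cancel hne
      have := congrArg f hb
      rw [map_mul, ha, zero_mul, map_one] at this
      exact zero_ne_one this
    calc finrank ℝ Z ≤ finrank ℝ ℂ :=
          LinearMap.finrank_le_finrank_of_injective (f := f.toLinearMap) hinj
      _ = 2 := Complex.finrank_real_complex
  -- the radical of β is contained in the squares
  obtain ⟨t₀g, ht₀T, ht₀⟩ := hnot2
  have hrad : ∀ s : T, (∀ t : T, β s t = 1) → ∃ w : T, s = w + w := by
    intro s hs
    by_contra hno
    push_neg at hno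
    set t₀ : T := ⟨t₀g, ht₀T⟩
    set u : T := t₀ + t₀ with hu
    have hs0 : s ≠ 0 := fun h => hno 0 (by rw [h, add_zero])
    have hsu : s ≠ u := fun h => hno t₀ h
    have hu0 : u ≠ 0 := by
      intro h
      apply ht₀
      rw [hu] at h
      have h2 := congrArg (Subtype.val : T → G) h
      simp only [AddSubgroup.coe_add, ZeroMemClass.coe_zero] at h2
      exact h2
    let f : Fin 3 → T := ![0, u, s]
    have hfinj : Function.Injective f := by
      intro i j hij
      fin_cases i <;> fin_cases j <;>
        simp only [f, Matrix.cons_val_zero, Matrix.cons_val_one, Matrix.head_cons,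
          Matrix.cons_val_two, Matrix.tail_cons, Fin.mk_zero, Fin.mk_one] at hij ⊢ <;>
        first
          | rfl
          | exact absurd hij.symm hu0
          | exact absurd hij.symm hs0
          | exact absurd hij hu0
          | exact absurd hij hs0
          | exact absurd hij.symm hsu
          | exact absurd hij hsu
    have hind3 : LinearIndependent ℝ (fun i => v (f i)) :=
      iSupIndep.linearIndependent (fun i : Fin 3 => 𝒟 ((f i : G)))
        (hTind.comp hfinj) (fun i => hv _) (fun i => hvne _)
    have hc : ∀ i, v (f i) ∈ Subalgebra.center ℝ D := by
      intro i
      rw [Subalgebra.mem_center_iff]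
      fin_cases i
      · exact fun y => hcentral 0 hβ0 y
      · exact fun y => hcentral u (fun t => hβdouble1 t₀ t) y
      · exact fun y => hcentral s hs y
    let g : Fin 3 → Subalgebra.center ℝ D := fun i => ⟨v (f i), hc i⟩
    have hliZ : LinearIndependent ℝ g := by
      apply LinearIndependent.of_comp (Subalgebra.center ℝ D).val.toLinearMap
      exact hind3
    have h3 : 3 ≤ finrank ℝ (Subalgebra.center ℝ D) := by
      simpa using hliZ.fintype_card_le_finrank
    omega
  -- characters take values ±1
  have hχpm : ∀ (χ : T →+ Additive ℝˣ) (t : T),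
      (((χ t).toMul : ℝˣ) : ℝ) = 1 ∨ (((χ t).toMul : ℝˣ) : ℝ) = -1 := by
    intro χ t
    have hn : 0 < addOrderOf t := addOrderOf_pos t
    have h0 : ((χ t).toMul : ℝˣ) ^ addOrderOf t = 1 := by
      have h1 : χ (addOrderOf t • t) = 0 := by rw [addOrderOf_nsmul_eq_zero, map_zero]
      have h2 : addOrderOf t • χ t = 0 := by rw [← map_nsmul, h1]
      calc ((χ t).toMul : ℝˣ) ^ addOrderOf t = (addOrderOf t • χ t).toMul := by
            rw [toMul_nsmul]
        _ = 1 := by rw [h2]; rfl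
    have h3 : (((χ t).toMul : ℝˣ) : ℝ) ^ addOrderOf t = 1 := by
      rw [← Units.val_pow_eq_pow_val, h0, Units.val_one]
    exact real_pm hn h3
  -- the quotient by the squares as a `ZMod 2` vector space
  set R2 := (doublingHom T).range with hR2
  set V := T ⧸ R2 with hV
  have hmemR2 : ∀ w : T, w + w ∈ R2 := fun w => ⟨w, rfl⟩
  letI : Module (ZMod 2) V := QuotientAddGroup.zmodModule (n := 2) (by
    intro x
    have h0 : x + x ∈ R2 := hmemR2 x
    simpa [two_nsmul] using h0)
  haveI : Finite V := Quotient.finite _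
  haveI : Module.Finite (ZMod 2) V := Module.Finite.of_finite (R := ZMod 2)
  -- the sign functional attached to a character
  have hΨexists : ∀ χ : T →+ Additive ℝˣ, ∃ ℓ : Module.Dual (ZMod 2) V,
      ∀ t : T, ℓ (QuotientAddGroup.mk t) = homNeg (((χ t).toMul : ℝˣ) : ℝ) := by
    intro χ
    have hadd : ∀ a b : T, homNeg (((χ (a + b)).toMul : ℝˣ) : ℝ) =
        homNeg (((χ a).toMul : ℝˣ) : ℝ) + homNeg (((χ b).toMul : ℝˣ) : ℝ) := by
      intro a b
      rw [map_add, toMul_add, Units.val_mul,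
        homNeg_mul (Units.ne_zero _) (Units.ne_zero _)]
    let q1 : T →+ ZMod 2 :=
      AddMonoidHom.mk' (fun t => homNeg (((χ t).toMul : ℝˣ) : ℝ)) hadd
    have hker : R2 ≤ q1.ker := by
      rintro _ ⟨w, rfl⟩
      show homNeg (((χ (w + w)).toMul : ℝˣ) : ℝ) = 0
      have h1 : (((χ (w + w)).toMul : ℝˣ) : ℝ) = 1 := by
        rw [map_add, toMul_add, Units.val_mul]
        rcases hχpm χ w with h | h <;> rw [h] <;> norm_num
      rw [h1, homNeg_one]
    refine ⟨((QuotientAddGroup.lift R2 q1 hker).toZModLinearMap 2), fun t => rfl⟩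
  -- the pairing induced by β on the quotient
  have hBexists : ∃ B : V →ₗ[ZMod 2] Module.Dual (ZMod 2) V,
      ∀ s t : T, B (QuotientAddGroup.mk s) (QuotientAddGroup.mk t) = homNeg (β s t) := by
    have hrow : ∀ s : T, ∃ r : V →+ ZMod 2,
        ∀ t : T, r (QuotientAddGroup.mk t) = homNeg (β s t) := by
      intro s
      let q1 : T →+ ZMod 2 := AddMonoidHom.mk' (fun t => homNeg (β s t)) (by
        intro a b; rw [hβadd2, homNeg_mul (hβne s a) (hβne s b)])
      have hker : R2 ≤ q1.ker := by
        rintro _ ⟨w, rfl⟩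
        show homNeg (β s (w + w)) = 0
        rw [hβdouble2, homNeg_one]
      exact ⟨QuotientAddGroup.lift R2 q1 hker, fun t => rfl⟩
    choose row hrowspec using hrow
    have hrowadd : ∀ s s' : T, row (s + s') = row s + row s' := by
      intro s s'
      ext t
      show row (s + s') (QuotientAddGroup.mk t) = (row s + row s') (QuotientAddGroup.mk t)
      rw [hrowspec, AddMonoidHom.add_apply, hrowspec, hrowspec, hβadd1,
        homNeg_mul (hβne s t) (hβne s' t)]
    let B0 : T →+ (V →+ ZMod 2) := AddMonoidHom.mk' row hrowadd
    have hker0 : R2 ≤ B0.ker := by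
      rintro _ ⟨w, rfl⟩
      show row (w + w) = 0
      ext t
      show row (w + w) (QuotientAddGroup.mk t) = 0
      rw [hrowspec, hβdouble1, homNeg_one]
    let Bq : V →+ (V →+ ZMod 2) := QuotientAddGroup.lift R2 B0 hker0
    let conv : (V →+ ZMod 2) →+ Module.Dual (ZMod 2) V :=
      AddMonoidHom.mk' (fun r => r.toZModLinearMap 2) (by intro f g; ext x; rfl)
    refine ⟨(conv.comp Bq).toZModLinearMap 2, fun s t => ?_⟩
    show row s (QuotientAddGroup.mk t) = homNeg (β s t)
    exact hrowspec s t
  obtain ⟨B, hB⟩ := hBexists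
  have hBinj : Function.Injective B := by
    have hker : ∀ s : T, B (QuotientAddGroup.mk s) = 0 → (QuotientAddGroup.mk s : V) = 0 := by
      intro s hz
      have hall : ∀ t : T, β s t = 1 := by
        intro t
        have h0 : homNeg (β s t) = 0 := by
          rw [← hB s t, hz]; rfl
        exact (homNeg_eq_zero_iff (hβpm s t)).mp h0
      obtain ⟨w, hw⟩ := hrad s hall
      rw [QuotientAddGroup.eq_zero_iff]
      exact ⟨w, hw.symm⟩
    intro z z' h
    rw [← sub_eq_zero]
    have h0 : B (z - z') = 0 := by rw [map_sub, h, sub_self]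
    revert h0
    exact QuotientAddGroup.induction_on (z - z') fun s => hker s
  have hBsurj : Function.Surjective B := by
    have hfr : finrank (ZMod 2) (Module.Dual (ZMod 2) V) = finrank (ZMod 2) V :=
      Subspace.dual_finrank_eq
    exact (LinearMap.injective_iff_surjective_of_finrank_eq_finrank hfr.symm).mp hBinj
  -- every stabilizing automorphism comes from a character
  have hstab : ∀ ψ : D ≃ₐ[ℝ] D, (∀ a : G, ∀ x ∈ 𝒟 a, ψ x ∈ 𝒟 a) →
      ∃ χ : T →+ Additive ℝˣ, ∀ t : T, ψ (v t) = (((χ t).toMul : ℝˣ) : ℝ) • v t := by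
    intro ψ hψ
    have h0 : ∀ t : T, ∃ c : ℝ, ψ (v t) = c • v t := fun t => hmem t _ (hψ t (v t) (hv t))
    choose c hc using h0
    have hcne : ∀ t, c t ≠ 0 := by
      intro t h
      have h1 : ψ (v t) = ψ 0 := by rw [hc, h, zero_smul, map_zero]
      exact hvne t (ψ.injective h1)
    have hcadd : ∀ s t : T, c (s + t) = c s * c t := by
      intro s t
      have h1 : ψ (v s * v t) = ((c s * c t) * σ s t) • v (s + t) := by
        rw [map_mul, hc, hc, smul_mul_assoc, mul_smul_comm, smul_smul, hσ, smul_smul, mul_assoc]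
      have h2 : ψ (v s * v t) = (c (s + t) * σ s t) • v (s + t) := by
        rw [hσ, map_smul, hc, smul_smul, mul_comm]
      have h4 := hsm _ _ _ (hvne (s + t)) (h2.symm.trans h1)
      exact mul_right_cancel₀ (hσne s t) h4
    refine ⟨AddMonoidHom.mk' (fun t => Additive.ofMul (Units.mk0 (c t) (hcne t))) ?_, fun t => ?_⟩
    · intro a b
      have h5 : Units.mk0 (c (a + b)) (hcne _) =
          Units.mk0 (c a) (hcne _) * Units.mk0 (c b) (hcne _) := by
        ext
        rw [Units.val_mul]
        exact hcadd a b
      rw [h5, ofMul_mul]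
    · rw [hc t]
      rfl
  -- Part 1 : inner automorphism
  have part1 : ∀ ψ : D ≃ₐ[ℝ] D, (∀ a : G, ∀ x ∈ 𝒟 a, ψ x ∈ 𝒟 a) →
      ∃ U : Dˣ, ∀ x : D, ψ x = (U : D) * x * ((U⁻¹ : Dˣ) : D) := by
    intro ψ hψ
    obtain ⟨χ, hχ⟩ := hstab ψ hψ
    obtain ⟨ℓ, hℓ⟩ := hΨexists χ
    obtain ⟨z, hz⟩ := hBsurj ℓ
    obtain ⟨s, rfl⟩ := QuotientAddGroup.mk_surjective z
    have hβχ : ∀ t : T, β s t = (((χ t).toMul : ℝˣ) : ℝ) := by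
      intro t
      refine homNeg_eq_iff (hβpm s t) (hχpm χ t) ?_
      rw [← hB s t, hz, hℓ]
    set U : Dˣ := (hvu s).unit with hUdef
    have hUv : (U : D) = v s := (hvu s).unit_spec
    refine ⟨U, ?_⟩
    have hhom : ∀ a : G, ∀ x ∈ 𝒟 a, ψ.toLinearMap x =
        ((LinearMap.mulRight ℝ ((U⁻¹ : Dˣ) : D)).comp (LinearMap.mulLeft ℝ (U : D))) x := by
      intro a x hx
      by_cases haT : a ∈ T
      · obtain ⟨r, rfl⟩ := hmem ⟨a, haT⟩ x hx
        set t : T := ⟨a, haT⟩ with ht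
        have hmain : (U : D) * v t * ((U⁻¹ : Dˣ) : D) = β s t • v t := by
          calc (U : D) * v t * ((U⁻¹ : Dˣ) : D) = (v s * v t) * ((U⁻¹ : Dˣ) : D) := by
                rw [hUv]
            _ = (β s t • (v t * v s)) * ((U⁻¹ : Dˣ) : D) := by rw [hβ s t]
            _ = β s t • (v t * (v s * ((U⁻¹ : Dˣ) : D))) := by
                rw [smul_mul_assoc, mul_assoc]
            _ = β s t • v t := by rw [← hUv, U.mul_inv, mul_one]
        simp only [LinearMap.comp_apply, LinearMap.mulLeft_apply, LinearMap.mulRight_apply,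
          AlgEquiv.toLinearMap_apply]
        rw [map_smul, hχ t, mul_smul_comm, smul_mul_assoc, hmain, hβχ t]
      · rw [hempty a haT] at hx
        rw [Submodule.mem_bot] at hx
        subst hx
        simp
    intro x
    have h6 := hext ψ.toLinearMap _ hhom x
    simpa using h6
  -- Part 3 : the character group is the quotient by squares
  have part3 : Nonempty ((T →+ Additive ℝˣ) ≃+ V) := by
    choose Ψ hΨ using hΨexists
    have hΨadd : ∀ χ₁ χ₂, Ψ (χ₁ + χ₂) = Ψ χ₁ + Ψ χ₂ := by
      intro χ₁ χ₂
      ext z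
      refine QuotientAddGroup.induction_on z fun t => ?_
      rw [hΨ, LinearMap.add_apply, hΨ, hΨ]
      have h1 : ((χ₁ + χ₂) t).toMul = (χ₁ t).toMul * (χ₂ t).toMul := rfl
      rw [h1, Units.val_mul, homNeg_mul (Units.ne_zero _) (Units.ne_zero _)]
    have hΨinj : Function.Injective Ψ := by
      intro χ₁ χ₂ h
      ext t
      have h0 : homNeg (((χ₁ t).toMul : ℝˣ) : ℝ) = homNeg (((χ₂ t).toMul : ℝˣ) : ℝ) := by
        rw [← hΨ χ₁ t, h, hΨ χ₂ t]
      have h1 := homNeg_eq_iff (hχpm χ₁ t) (hχpm χ₂ t) h0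
      exact h1
    have hΨsurj : Function.Surjective Ψ := by
      intro ℓ
      have hadd2 : ∀ a b : T, Additive.ofMul (e2 (ℓ (QuotientAddGroup.mk (a + b)))) =
          Additive.ofMul (e2 (ℓ (QuotientAddGroup.mk a))) +
            Additive.ofMul (e2 (ℓ (QuotientAddGroup.mk b))) := by
        intro a b
        have h1 : ℓ (QuotientAddGroup.mk (a + b)) =
            ℓ (QuotientAddGroup.mk a) + ℓ (QuotientAddGroup.mk b) := by
          rw [show (QuotientAddGroup.mk (a + b) : V) =
            QuotientAddGroup.mk a + QuotientAddGroup.mk b from rfl, map_add]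
        rw [h1, e2_add, ofMul_mul]
      refine ⟨AddMonoidHom.mk' (fun t => Additive.ofMul (e2 (ℓ (QuotientAddGroup.mk t)))) hadd2, ?_⟩
      ext z
      refine QuotientAddGroup.induction_on z fun t => ?_
      rw [hΨ]
      exact homNeg_e2 _
    exact ⟨(AddEquiv.ofBijective (AddMonoidHom.mk' Ψ hΨadd) ⟨hΨinj, hΨsurj⟩).trans
      (Module.finBasis (ZMod 2) V).toDualEquiv.symm.toAddEquiv⟩
  -- Part 2 : construction of Φ
  set E : (T →+ Additive ℝˣ) → G → ℝ := fun χ a =>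
    if h : a ∈ T then (((χ ⟨a, h⟩).toMul : ℝˣ) : ℝ) else 1 with hE
  have hEt : ∀ χ (t : T), E χ (t : G) = (((χ t).toMul : ℝˣ) : ℝ) := by
    intro χ t
    rw [hE]
    dsimp only
    rw [dif_pos t.2]
  have hEadd : ∀ χ, ∀ a ∈ T, ∀ b ∈ T, E χ (a + b) = E χ a * E χ b := by
    intro χ a ha b hb
    rw [hE]
    dsimp only
    rw [dif_pos (T.add_mem ha hb), dif_pos ha, dif_pos hb]
    have h1 : (⟨a + b, T.add_mem ha hb⟩ : T) = ⟨a, ha⟩ + ⟨b, hb⟩ := rfl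
    rw [h1, map_add, toMul_add, Units.val_mul]
  have hEmul : ∀ χ₁ χ₂ a, E (χ₁ + χ₂) a = E χ₁ a * E χ₂ a := by
    intro χ₁ χ₂ a
    rw [hE]
    dsimp only
    split
    · rw [AddMonoidHom.add_apply, toMul_add, Units.val_mul]
    · rw [one_mul]
  have hEzero : ∀ χ, E χ 0 = 1 := by
    intro χ
    have h1 : ((0 : T) : G) = 0 := rfl
    rw [← h1, hEt, map_zero]
    rfl
  have hE0 : ∀ a, E 0 a = 1 := by
    intro a
    rw [hE]
    dsimp only
    split
    · rfl
    · rfl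
  -- the basis of homogeneous elements
  have hspanall : ⊤ ≤ Submodule.span ℝ (Set.range v) := by
    rw [← htop]
    refine iSup_le fun a => ?_
    by_cases haT : a ∈ T
    · rw [show a = ((⟨a, haT⟩ : T) : G) from rfl, hspan ⟨a, haT⟩]
      exact Submodule.span_mono (Set.singleton_subset_iff.mpr ⟨⟨a, haT⟩, rfl⟩)
    · rw [hempty a haT]
      exact bot_le
  let bV : Basis T ℝ D := Basis.mk hli hspanall
  have hbV : ∀ t, bV t = v t := fun t => Basis.mk_apply hli hspanall t
  have hLex : ∀ χ : T →+ Additive ℝˣ, ∃ L : D →ₗ[ℝ] D,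
      ∀ a : G, ∀ x ∈ 𝒟 a, L x = E χ a • x := by
    intro χ
    refine ⟨bV.constr ℕ (fun t => E χ (t : G) • v t), ?_⟩
    intro a x hx
    by_cases haT : a ∈ T
    · obtain ⟨r, rfl⟩ := hmem ⟨a, haT⟩ x hx
      rw [map_smul, ← hbV, Basis.constr_basis, hbV, smul_smul, smul_smul, mul_comm]
    · rw [hempty a haT] at hx
      rw [Submodule.mem_bot] at hx
      subst hx
      simp
  choose L hL using hLex
  have hLcomp : ∀ χ₁ χ₂ (x : D), L χ₁ (L χ₂ x) = L (χ₁ + χ₂) x := by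
    intro χ₁ χ₂ x
    refine (hext ((L χ₁).comp (L χ₂)) (L (χ₁ + χ₂)) ?_ x)
    intro a y hy
    simp only [LinearMap.comp_apply]
    rw [hL χ₂ a y hy, map_smul, hL χ₁ a y hy, hL (χ₁ + χ₂) a y hy, hEmul, smul_smul, mul_comm]
  have hLid : ∀ x, L 0 x = x := by
    intro x
    refine (hext (L 0) LinearMap.id ?_ x)
    intro a y hy
    rw [hL 0 a y hy, hE0, one_smul]
    rfl
  have hLone : ∀ χ, L χ 1 = 1 := by
    intro χ
    rw [hL χ 0 1 hone, hEzero, one_smul]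
  have hLmul : ∀ χ (x y : D), L χ (x * y) = L χ x * L χ y := by
    intro χ
    have step1 : ∀ (bg : G) (y : D), y ∈ 𝒟 bg → ∀ x, L χ (x * y) = L χ x * L χ y := by
      intro bg y hy x
      refine (hext ((L χ).comp (LinearMap.mulRight ℝ y))
        ((LinearMap.mulRight ℝ (L χ y)).comp (L χ)) ?_ x)
      intro a w hw
      simp only [LinearMap.comp_apply, LinearMap.mulRight_apply]
      rw [hL χ (a + bg) _ (hmul a bg w hw y hy), hL χ a w hw, hL χ bg y hy,
        smul_mul_smul_comm]
      by_cases haT : a ∈ T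
      · by_cases hbT : bg ∈ T
        · rw [hEadd χ a haT bg hbT]
        · rw [hempty bg hbT] at hy
          rw [Submodule.mem_bot] at hy
          subst hy
          simp
      · rw [hempty a haT] at hw
        rw [Submodule.mem_bot] at hw
        subst hw
        simp
    intro x y
    have h2 := hext ((L χ).comp (LinearMap.mulLeft ℝ x))
      ((LinearMap.mulLeft ℝ (L χ x)).comp (L χ)) (by
        intro bg w hw
        simp only [LinearMap.comp_apply, LinearMap.mulLeft_apply]
        exact step1 bg w hw x) y
    simpa using h2
  have hLbij : ∀ χ, Function.Bijective (L χ) := by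
    intro χ
    constructor
    · intro x y h
      calc x = L 0 x := (hLid x).symm
        _ = L (-χ + χ) x := by rw [show -χ + χ = 0 from neg_add_cancel χ]
        _ = L (-χ) (L χ x) := (hLcomp _ _ _).symm
        _ = L (-χ) (L χ y) := by rw [h]
        _ = L (-χ + χ) y := hLcomp _ _ _
        _ = L 0 y := by rw [show -χ + χ = 0 from neg_add_cancel χ]
        _ = y := hLid y
    · intro y
      refine ⟨L (-χ) y, ?_⟩
      calc L χ (L (-χ) y) = L (χ + -χ) y := hLcomp _ _ _
        _ = L 0 y := by rw [show χ + -χ = 0 from add_neg_cancel χ]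
        _ = y := hLid y
  let Φ : (T →+ Additive ℝˣ) → (D ≃ₐ[ℝ] D) := fun χ =>
    AlgEquiv.ofLinearEquiv (LinearEquiv.ofBijective (L χ) (hLbij χ)) (hLone χ) (hLmul χ)
  have hΦapp : ∀ χ x, Φ χ x = L χ x := fun χ x => rfl
  refine ⟨part1, ⟨Φ, ?_, ?_, ?_, ?_⟩, part3⟩
  · intro χ₁ χ₂
    apply AlgEquiv.ext
    intro x
    show Φ (χ₁ + χ₂) x = Φ χ₁ (Φ χ₂ x)
    rw [hΦapp, hΦapp, hΦapp, hLcomp]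
  · intro χ₁ χ₂ h
    ext t
    have h0 : L χ₁ (v t) = L χ₂ (v t) := by
      rw [← hΦapp, ← hΦapp, h]
    rw [hL χ₁ t _ (hv t), hL χ₂ t _ (hv t)] at h0
    have h1 := hsm _ _ _ (hvne t) h0
    rw [hEt, hEt] at h1
    exact h1
  · intro χ a x hx
    rw [hΦapp, hL χ a x hx]
    exact Submodule.smul_mem _ _ hx
  · intro ψ hψ
    obtain ⟨χ, hχ⟩ := hstab ψ hψ
    refine ⟨χ, ?_⟩
    apply AlgEquiv.ext
    intro x
    rw [hΦapp]
    refine (hext (L χ) ψ.toLinearMap ?_ x)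
    intro a y hy
    by_cases haT : a ∈ T
    · obtain ⟨r, rfl⟩ := hmem ⟨a, haT⟩ y hy
      rw [hL χ a _ hy, AlgEquiv.toLinearMap_apply, map_smul, hχ ⟨a, haT⟩,
        smul_smul, smul_smul, mul_comm]
      exact congrArg (fun z => (r * z) • v ⟨a, haT⟩) (hEt χ ⟨a, haT⟩)
    · rw [hempty a haT] at hy
      rw [Submodule.mem_bot] at hy
      subst hy
      simp
end
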